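/- arXiv:1810.02414 — 7 statements merged into one kernel-verified Lean document; each statement's English description precedes it below -/
import Mathlib

section
/- For all η, ξ ∈ 𝔤 one has (d/ds)|_{s=0} e^{η+sξ} = e^{η} ∫₀¹ e^{−tη} ξ e^{tη} dt = (∫₀¹ e^{tη} ξ e^{−tη} dt) e^{η}. Consequently, if C: (a,b) → 𝔤 is differentiable, then (d/dt) e^{C(t)} = (∫₀¹ e^{sC(t)} Ċ(t) e^{−sC(t)} ds) e^{C(t)} = e^{C(t)} (∫₀¹ e^{−sC(t)} Ċ(t) e^{sC(t)} ds). -/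
/-- The truncated exponential `e^ξ := Σ_{k=0}^{κ} ξ^k/k!`. -/
noncomputable def expTrunc {A : Type*} [Ring A] [Algebra ℝ A] (κ : ℕ) (ξ : A) : A :=
  ∑ k ∈ Finset.range (κ + 1), ((k.factorial : ℝ))⁻¹ • ξ ^ k

namespace Stmt2Aux

open Finset intervalIntegral

variable {A : Type*} [NormedRing A] [NormedAlgebra ℝ A] {κ : ℕ} {𝔤 : Submodule ℝ A}

/-- Derivative of a power of a function (noncommutative Leibniz). -/
lemma hasDerivAt_pow_comp {f : ℝ → A} {f' : A} {t : ℝ} (hf : HasDerivAt f f' t) :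
    ∀ k : ℕ, HasDerivAt (fun s => (f s) ^ k)
      (∑ j ∈ Finset.range k, f t ^ j * f' * f t ^ (k - 1 - j)) t := by
  intro k
  induction k with
  | zero => simpa using hasDerivAt_const t (1 : A)
  | succ k ih =>
    have h := ih.mul hf
    have hval : (∑ j ∈ range k, f t ^ j * f' * f t ^ (k - 1 - j)) * f t + f t ^ k * f'
        = ∑ j ∈ range (k + 1), f t ^ j * f' * f t ^ (k + 1 - 1 - j) := by
      rw [Finset.sum_range_succ, Finset.sum_mul]
      congr 1
      · refine Finset.sum_congr rfl fun j hj => ?_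
        rw [mul_assoc, ← pow_succ]
        have : k - 1 - j + 1 = k + 1 - 1 - j := by
          have := Finset.mem_range.mp hj; omega
        rw [this]
      · simp
    have hfun : (fun s => (f s) ^ (k + 1)) = fun s => (f s) ^ k * f s := by
      funext s; rw [pow_succ]
    rw [hfun, ← hval]
    exact h

lemma hasDerivAt_expTrunc_comp (κ : ℕ) {f : ℝ → A} {f' : A} {t : ℝ} (hf : HasDerivAt f f' t) :
    HasDerivAt (fun s => expTrunc κ (f s))
      (∑ k ∈ range (κ + 1), ((k.factorial : ℝ))⁻¹ •
        ∑ j ∈ range k, f t ^ j * f' * f t ^ (k - 1 - j)) t := by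
  unfold expTrunc
  exact HasDerivAt.fun_sum fun k _ => ((hasDerivAt_pow_comp hf k).const_smul ((k.factorial : ℝ))⁻¹)

lemma prod_eq_zero_of_len (hnil : ∀ f : Fin (κ + 1) → A, (∀ i, f i ∈ 𝔤) → (List.ofFn f).prod = 0)
    (l : List A) (hl : ∀ x ∈ l, x ∈ 𝔤) (hlen : κ + 1 ≤ l.length) : l.prod = 0 := by
  set l' := l.take (κ + 1) with hl'def
  have h1 : l'.length = κ + 1 := by simp [hl'def, hlen]
  have h2 : ∀ x ∈ l', x ∈ 𝔤 := fun x hx => hl x (List.mem_of_mem_take hx)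
  have hf : List.ofFn (fun i : Fin (κ + 1) => l'.get (Fin.cast h1.symm i)) = l' := by
    apply List.ext_get
    · simp [h1]
    · intro n hn1 hn2
      simp only [List.get_ofFn]
      rfl
  have hz : l'.prod = 0 := by
    rw [← hf]
    exact hnil _ fun i => h2 _ (l'.get_mem _)
  calc l.prod = (l' ++ l.drop (κ + 1)).prod := by rw [hl'def, List.take_append_drop]
    _ = l'.prod * (l.drop (κ + 1)).prod := List.prod_append
    _ = 0 := by rw [hz, zero_mul]

lemma W_zero (hnil : ∀ f : Fin (κ + 1) → A, (∀ i, f i ∈ 𝔤) → (List.ofFn f).prod = 0)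
    {η ξ : A} (hη : η ∈ 𝔤) (hξ : ξ ∈ 𝔤) {a b : ℕ} (h : κ ≤ a + b) :
    η ^ a * ξ * η ^ b = 0 := by
  have hz := prod_eq_zero_of_len hnil (List.replicate a η ++ ξ :: List.replicate b η) ?_ ?_
  · simpa [List.prod_append, List.prod_cons, List.prod_replicate, ← mul_assoc] using hz
  · intro x hx
    simp only [List.mem_append, List.mem_cons, List.mem_replicate] at hx
    rcases hx with ⟨-, rfl⟩ | rfl | ⟨-, rfl⟩ <;> assumption
  · simp only [List.length_append, List.length_cons, List.length_replicate]
    omega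

lemma pow_zero_mem (hnil : ∀ f : Fin (κ + 1) → A, (∀ i, f i ∈ 𝔤) → (List.ofFn f).prod = 0)
    {x : A} (hx : x ∈ 𝔤) : x ^ (κ + 1) = 0 := by
  have hz := prod_eq_zero_of_len hnil (List.replicate (κ + 1) x) ?_ ?_
  · simpa [List.prod_replicate] using hz
  · intro y hy; rw [List.eq_of_mem_replicate hy]; exact hx
  · simp

lemma expTrunc_eq_exp [CompleteSpace A] {x : A} (hx : x ^ (κ + 1) = 0) :
    expTrunc κ x = NormedSpace.exp x := by
  rw [NormedSpace.exp_eq_tsum ℝ]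
  refine (tsum_eq_sum ?_).symm
  intro k hk
  have hk' : κ + 1 ≤ k := by simpa using Finset.mem_range.not.mp hk
  have hzero : x ^ k = 0 := by
    calc x ^ k = x ^ (κ + 1) * x ^ (k - (κ + 1)) := by rw [← pow_add]; congr 1; omega
      _ = 0 := by rw [hx, zero_mul]
  simp [hzero]

lemma expTrunc_smul_mul [CompleteSpace A] {x : A} (hx : x ^ (κ + 1) = 0) (c d : ℝ) :
    expTrunc κ (c • x) * expTrunc κ (d • x) = expTrunc κ ((c + d) • x) := by
  have hpow : ∀ e : ℝ, (e • x) ^ (κ + 1) = 0 := fun e => by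
    rw [smul_pow, hx, smul_zero]
  rw [expTrunc_eq_exp (hpow c), expTrunc_eq_exp (hpow d), expTrunc_eq_exp (hpow (c + d)),
    add_smul]
  exact (NormedSpace.exp_add_of_commute_of_mem_ball (𝕂 := ℝ) (((Commute.refl x).smul_left c).smul_right d)
    ((NormedSpace.expSeries_radius_eq_top ℝ A).symm ▸ edist_lt_top _ _)
    ((NormedSpace.expSeries_radius_eq_top ℝ A).symm ▸ edist_lt_top _ _)).symm

lemma key {η ξ : A} (hW : ∀ a b : ℕ, κ ≤ a + b → η ^ a * ξ * η ^ b = 0) :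
    ∑ k ∈ range (κ + 1), ((k.factorial : ℝ))⁻¹ • ∑ j ∈ range k, η ^ j * ξ * η ^ (k - 1 - j)
      = ∑ m ∈ range (κ + 1), ∑ n ∈ range (κ + 1),
          (((m + n + 1).factorial : ℝ))⁻¹ • (η ^ m * ξ * η ^ n) := by
  have lhs_eq : ∑ k ∈ range (κ + 1), ((k.factorial : ℝ))⁻¹ •
        ∑ j ∈ range k, η ^ j * ξ * η ^ (k - 1 - j)
      = ∑ p ∈ (range (κ + 1)).sigma (fun k => range k),
          (((p.2 + (p.1 - 1 - p.2) + 1).factorial : ℝ))⁻¹ • (η ^ p.2 * ξ * η ^ (p.1 - 1 - p.2)) := by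
    rw [Finset.sum_sigma]
    refine Finset.sum_congr rfl fun k hk => ?_
    rw [Finset.smul_sum]
    refine Finset.sum_congr rfl fun j hj => ?_
    have : j + (k - 1 - j) + 1 = k := by
      have := Finset.mem_range.mp hj; omega
    rw [this]
  rw [lhs_eq]
  have rhs_eq : ∑ m ∈ range (κ + 1), ∑ n ∈ range (κ + 1),
        (((m + n + 1).factorial : ℝ))⁻¹ • (η ^ m * ξ * η ^ n)
      = ∑ p ∈ (range (κ + 1) ×ˢ range (κ + 1)).filter (fun p => p.1 + p.2 < κ),
          (((p.1 + p.2 + 1).factorial : ℝ))⁻¹ • (η ^ p.1 * ξ * η ^ p.2) := by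
    rw [← Finset.sum_product']
    rw [← Finset.sum_filter_add_sum_filter_not (range (κ + 1) ×ˢ range (κ + 1))
      (fun p => p.1 + p.2 < κ)]
    have : ∑ p ∈ (range (κ + 1) ×ˢ range (κ + 1)).filter (fun p => ¬ p.1 + p.2 < κ),
        (((p.1 + p.2 + 1).factorial : ℝ))⁻¹ • (η ^ p.1 * ξ * η ^ p.2) = 0 := by
      refine Finset.sum_eq_zero fun p hp => ?_
      rw [Finset.mem_filter] at hp
      rw [hW p.1 p.2 (by omega), smul_zero]
    rw [this, add_zero]
  rw [rhs_eq]
  refine Finset.sum_bij' (fun p _ => (p.2, p.1 - 1 - p.2)) (fun p _ => ⟨p.1 + p.2 + 1, p.1⟩)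
    ?_ ?_ ?_ ?_ ?_
  · rintro ⟨k, j⟩ h
    simp only [Finset.mem_sigma, Finset.mem_range] at h
    simp only [Finset.mem_filter, Finset.mem_product, Finset.mem_range]
    omega
  · rintro ⟨m, n⟩ h
    simp only [Finset.mem_filter, Finset.mem_product, Finset.mem_range] at h
    simp only [Finset.mem_sigma, Finset.mem_range]
    omega
  · rintro ⟨k, j⟩ h
    simp only [Finset.mem_sigma, Finset.mem_range] at h
    have h1 : j + (k - 1 - j) + 1 = k := by omega
    simp only
    rw [h1]
  · rintro ⟨m, n⟩ h
    simp only [Finset.mem_filter, Finset.mem_product, Finset.mem_range] at h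
    simp only
    have : m + n + 1 - 1 - m = n := by omega
    rw [this]
  · rintro ⟨k, j⟩ h
    rfl

lemma beta_nat : ∀ (m n : ℕ), ∫ t in (0:ℝ)..1, (1 - t) ^ m * t ^ n
    = (m.factorial : ℝ) * n.factorial / (m + n + 1).factorial := by
  intro m
  induction m with
  | zero =>
    intro n
    simp only [pow_zero, one_mul, integral_pow]
    rw [Nat.factorial_succ]
    have : ((n:ℝ) + 1) ≠ 0 := by positivity
    rw [Nat.zero_add]
    push_cast
    field_simp
    simp
  | succ m ih =>
    intro n
    have hu : ∀ x ∈ Set.uIcc (0:ℝ) 1, HasDerivAt (fun x : ℝ => (1 - x) ^ (m + 1))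
        (-((m + 1 : ℝ) * (1 - x) ^ m)) x := by
      intro x _
      have h := ((hasDerivAt_id' x).const_sub (1:ℝ)).fun_pow (m + 1)
      simpa using h
    have hv : ∀ x ∈ Set.uIcc (0:ℝ) 1, HasDerivAt (fun x : ℝ => x ^ (n + 1) / (n + 1 : ℝ))
        (x ^ n) x := by
      intro x _
      have h := (hasDerivAt_pow (n + 1) x).div_const ((n : ℝ) + 1)
      have hne : ((n : ℝ) + 1) ≠ 0 := by positivity
      simpa [mul_div_assoc, mul_div_cancel_left₀ _ hne, Nat.cast_add] using h
    have hIu : IntervalIntegrable (fun x : ℝ => -((m + 1 : ℝ) * (1 - x) ^ m))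
        MeasureTheory.volume 0 1 :=
      (Continuous.intervalIntegrable (by fun_prop) _ _)
    have hIv : IntervalIntegrable (fun x : ℝ => x ^ n) MeasureTheory.volume 0 1 :=
      (Continuous.intervalIntegrable (by fun_prop) _ _)
    have ibp := intervalIntegral.integral_mul_deriv_eq_deriv_mul hu hv hIu hIv
    rw [ibp]
    have : (∫ x in (0:ℝ)..1, -((m + 1 : ℝ) * (1 - x) ^ m) * (x ^ (n + 1) / (n + 1 : ℝ)))
        = (-((m + 1 : ℝ) / (n + 1 : ℝ))) * ∫ x in (0:ℝ)..1, (1 - x) ^ m * x ^ (n + 1) := by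
      rw [← intervalIntegral.integral_const_mul]
      refine intervalIntegral.integral_congr fun x _ => ?_
      ring
    rw [this, ih (n + 1)]
    have hfacts : ∀ k : ℕ, (k.factorial : ℝ) ≠ 0 := fun k =>
      Nat.cast_ne_zero.mpr k.factorial_ne_zero
    have e1 : ((m + 1) + n + 1) = (m + (n + 1) + 1) := by omega
    rw [e1]
    simp only [Nat.factorial_succ]
    push_cast
    have h2 : ((m + (n + 1) + 1).factorial : ℝ) ≠ 0 := hfacts _
    field_simp
    ring

lemma beta_nat' (m n : ℕ) : ∫ t in (0:ℝ)..1, t ^ m * (1 - t) ^ n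
    = (m.factorial : ℝ) * n.factorial / (m + n + 1).factorial := by
  have h := intervalIntegral.integral_comp_sub_left (a := (0:ℝ)) (b := (1:ℝ))
    (fun t : ℝ => (1 - t) ^ m * t ^ n) 1
  simp only [sub_sub_cancel] at h
  norm_num at h
  rw [h, beta_nat]

lemma expTrunc_smul_expand (κ : ℕ) (c : ℝ) (η : A) :
    expTrunc κ (c • η) = ∑ m ∈ range (κ + 1), (((m.factorial : ℝ))⁻¹ * c ^ m) • η ^ m := by
  unfold expTrunc
  exact Finset.sum_congr rfl fun m _ => by rw [smul_pow, smul_smul]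

lemma continuous_expTrunc_smul (κ : ℕ) (η : A) (u : ℝ → ℝ) (hu : Continuous u) :
    Continuous (fun t => expTrunc κ (u t • η)) := by
  simp only [expTrunc_smul_expand]
  fun_prop

lemma triple_expand (a b : ℕ → ℝ) (η ξ : A) :
    (∑ m ∈ range (κ + 1), a m • η ^ m) * ξ * (∑ n ∈ range (κ + 1), b n • η ^ n)
    = ∑ m ∈ range (κ + 1), ∑ n ∈ range (κ + 1), (a m * b n) • (η ^ m * ξ * η ^ n) := by
  rw [Finset.sum_mul, Finset.sum_mul]
  refine Finset.sum_congr rfl fun m _ => ?_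
  rw [Finset.mul_sum]
  refine Finset.sum_congr rfl fun n _ => ?_
  rw [smul_mul_assoc, smul_mul_assoc, mul_smul_comm, smul_smul]

lemma integral_expand [CompleteSpace A] (κ : ℕ) (η ξ : A) (u v : ℝ → ℝ)
    (hu : Continuous u) (hv : Continuous v) :
    (∫ t in (0:ℝ)..1, expTrunc κ (u t • η) * ξ * expTrunc κ (v t • η))
    = ∑ m ∈ range (κ + 1), ∑ n ∈ range (κ + 1),
        ((∫ t in (0:ℝ)..1, u t ^ m * v t ^ n) *
          (((m.factorial : ℝ))⁻¹ * ((n.factorial : ℝ))⁻¹)) • (η ^ m * ξ * η ^ n) := by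
  have h1 : ∀ t : ℝ, expTrunc κ (u t • η) * ξ * expTrunc κ (v t • η)
      = ∑ m ∈ range (κ + 1), ∑ n ∈ range (κ + 1),
          ((u t ^ m * v t ^ n) * (((m.factorial : ℝ))⁻¹ * ((n.factorial : ℝ))⁻¹))
            • (η ^ m * ξ * η ^ n) := by
    intro t
    rw [expTrunc_smul_expand κ (u t) η, expTrunc_smul_expand κ (v t) η, triple_expand]
    refine Finset.sum_congr rfl fun m _ => Finset.sum_congr rfl fun n _ => ?_
    congr 1
    ring
  simp only [h1]
  rw [intervalIntegral.integral_finset_sum]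
  · refine Finset.sum_congr rfl fun m _ => ?_
    rw [intervalIntegral.integral_finset_sum]
    · refine Finset.sum_congr rfl fun n _ => ?_
      rw [intervalIntegral.integral_smul_const, intervalIntegral.integral_mul_const]
    · intro n _
      exact Continuous.intervalIntegrable (by fun_prop) _ _
  · intro m _
    refine Continuous.intervalIntegrable ?_ _ _
    exact continuous_finset_sum _ fun n _ => by fun_prop

lemma coeff_eq (m n : ℕ) :
    ((m.factorial : ℝ) * n.factorial / (m + n + 1).factorial) *
      (((m.factorial : ℝ))⁻¹ * ((n.factorial : ℝ))⁻¹) = (((m + n + 1).factorial : ℝ))⁻¹ := by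
  have h1 : (m.factorial : ℝ) ≠ 0 := Nat.cast_ne_zero.mpr m.factorial_ne_zero
  have h2 : (n.factorial : ℝ) ≠ 0 := Nat.cast_ne_zero.mpr n.factorial_ne_zero
  have h3 : ((m + n + 1).factorial : ℝ) ≠ 0 := Nat.cast_ne_zero.mpr (m + n + 1).factorial_ne_zero
  field_simp

lemma I1 [CompleteSpace A] (κ : ℕ) (η ξ : A) :
    (∫ t in (0:ℝ)..1, expTrunc κ ((1 - t) • η) * ξ * expTrunc κ (t • η))
    = ∑ m ∈ range (κ + 1), ∑ n ∈ range (κ + 1),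
        (((m + n + 1).factorial : ℝ))⁻¹ • (η ^ m * ξ * η ^ n) := by
  have h := integral_expand κ η ξ (fun t => 1 - t) (fun t => t) (by fun_prop) (by fun_prop)
  rw [h]
  refine Finset.sum_congr rfl fun m _ => Finset.sum_congr rfl fun n _ => ?_
  rw [beta_nat m n, coeff_eq]

lemma I2 [CompleteSpace A] (κ : ℕ) (η ξ : A) :
    (∫ t in (0:ℝ)..1, expTrunc κ (t • η) * ξ * expTrunc κ ((1 - t) • η))
    = ∑ m ∈ range (κ + 1), ∑ n ∈ range (κ + 1),
        (((m + n + 1).factorial : ℝ))⁻¹ • (η ^ m * ξ * η ^ n) := by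
  have h := integral_expand κ η ξ (fun t => t) (fun t => 1 - t) (by fun_prop) (by fun_prop)
  rw [h]
  refine Finset.sum_congr rfl fun m _ => Finset.sum_congr rfl fun n _ => ?_
  rw [beta_nat' m n, coeff_eq]

lemma E1 [CompleteSpace A] {η : A} (hη : η ^ (κ + 1) = 0) (ξ : A) :
    expTrunc κ η * (∫ t in (0:ℝ)..1, expTrunc κ (-(t • η)) * ξ * expTrunc κ (t • η))
    = ∑ m ∈ range (κ + 1), ∑ n ∈ range (κ + 1),
        (((m + n + 1).factorial : ℝ))⁻¹ • (η ^ m * ξ * η ^ n) := by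
  have hcont : Continuous (fun t : ℝ => expTrunc κ (-(t • η)) * ξ * expTrunc κ (t • η)) := by
    have h1 := continuous_expTrunc_smul κ η (fun t : ℝ => -t) (by fun_prop)
    have h2 := continuous_expTrunc_smul κ η (fun t : ℝ => t) (by fun_prop)
    simp only [neg_smul] at h1
    exact (h1.mul continuous_const).mul h2
  have hInt : IntervalIntegrable _ MeasureTheory.volume (0:ℝ) 1 :=
    hcont.intervalIntegrable (0:ℝ) 1
  have hpull := (ContinuousLinearMap.mul ℝ A (expTrunc κ η)).intervalIntegral_comp_comm hInt
  simp only [ContinuousLinearMap.mul_apply'] at hpull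
  rw [← hpull]
  have hpt : Set.EqOn
      (fun t : ℝ => expTrunc κ η * (expTrunc κ (-(t • η)) * ξ * expTrunc κ (t • η)))
      (fun t : ℝ => expTrunc κ ((1 - t) • η) * ξ * expTrunc κ (t • η))
      (Set.uIcc (0:ℝ) 1) := by
    intro t _
    have h := expTrunc_smul_mul hη 1 (-t)
    rw [one_smul, neg_smul] at h
    simp only
    rw [← mul_assoc, ← mul_assoc, h, ← sub_eq_add_neg]
  rw [intervalIntegral.integral_congr hpt]
  exact I1 κ η ξ

lemma E2 [CompleteSpace A] {η : A} (hη : η ^ (κ + 1) = 0) (ξ : A) :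
    (∫ t in (0:ℝ)..1, expTrunc κ (t • η) * ξ * expTrunc κ (-(t • η))) * expTrunc κ η
    = ∑ m ∈ range (κ + 1), ∑ n ∈ range (κ + 1),
        (((m + n + 1).factorial : ℝ))⁻¹ • (η ^ m * ξ * η ^ n) := by
  have hcont : Continuous (fun t : ℝ => expTrunc κ (t • η) * ξ * expTrunc κ (-(t • η))) := by
    have h1 := continuous_expTrunc_smul κ η (fun t : ℝ => -t) (by fun_prop)
    have h2 := continuous_expTrunc_smul κ η (fun t : ℝ => t) (by fun_prop)
    simp only [neg_smul] at h1
    exact (h2.mul continuous_const).mul h1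
  have hInt : IntervalIntegrable _ MeasureTheory.volume (0:ℝ) 1 :=
    hcont.intervalIntegrable (0:ℝ) 1
  have hpull := ((ContinuousLinearMap.mul ℝ A).flip (expTrunc κ η)).intervalIntegral_comp_comm hInt
  simp only [ContinuousLinearMap.flip_apply, ContinuousLinearMap.mul_apply'] at hpull
  rw [← hpull]
  have hpt : Set.EqOn
      (fun t : ℝ => expTrunc κ (t • η) * ξ * expTrunc κ (-(t • η)) * expTrunc κ η)
      (fun t : ℝ => expTrunc κ (t • η) * ξ * expTrunc κ ((1 - t) • η))
      (Set.uIcc (0:ℝ) 1) := by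
    intro t _
    have h := expTrunc_smul_mul hη (-t) 1
    rw [one_smul, neg_smul] at h
    simp only
    rw [mul_assoc, h]
    have : -t + 1 = 1 - t := by ring
    rw [this]
  rw [intervalIntegral.integral_congr hpt]
  exact I2 κ η ξ

lemma deriv_mem [FiniteDimensional ℝ A] {C : ℝ → A} {c' : A} {a b t : ℝ}
    (hC : ∀ u ∈ Set.Ioo a b, C u ∈ 𝔤) (ht : t ∈ Set.Ioo a b) (h : HasDerivAt C c' t) :
    c' ∈ 𝔤 := by
  have hs := hasDerivAt_iff_tendsto_slope.mp h
  have hev : ∀ᶠ x in nhdsWithin t {t}ᶜ, slope C t x ∈ 𝔤 := by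
    filter_upwards [mem_nhdsWithin_of_mem_nhds (isOpen_Ioo.mem_nhds ht)] with x hx
    rw [slope_def_module]
    exact 𝔤.smul_mem _ (𝔤.sub_mem (hC x hx) (hC t ht))
  exact 𝔤.closed_of_finiteDimensional.mem_of_tendsto hs hev

end Stmt2Aux

/-- for `η, ξ ∈ 𝔤`,
`(d/ds)|₀ e^{η+sξ} = e^η ∫₀¹ e^{−tη} ξ e^{tη} dt = (∫₀¹ e^{tη} ξ e^{−tη} dt) e^η`,
and consequently, if `C : (a,b) → 𝔤` is differentiable then
`(d/dt) e^{C(t)} = (∫₀¹ e^{sC(t)} Ċ(t) e^{−sC(t)} ds) e^{C(t)}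
                = e^{C(t)} (∫₀¹ e^{−sC(t)} Ċ(t) e^{sC(t)} ds)`. -/
theorem stmt2 {A : Type*} [NormedRing A] [NormedAlgebra ℝ A] [FiniteDimensional ℝ A]
    (κ : ℕ) (𝔤 : Submodule ℝ A)
    (hmul : ∀ x ∈ 𝔤, ∀ y ∈ 𝔤, x * y ∈ 𝔤)
    (hcompl : IsCompl (Submodule.span ℝ ({1} : Set A)) 𝔤)
    (hnil : ∀ f : Fin (κ + 1) → A, (∀ i, f i ∈ 𝔤) → (List.ofFn f).prod = 0) :
    (∀ η ∈ 𝔤, ∀ ξ ∈ 𝔤,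
      HasDerivAt (fun s : ℝ => expTrunc κ (η + s • ξ))
        (expTrunc κ η * ∫ t in (0:ℝ)..1,
          expTrunc κ (-(t • η)) * ξ * expTrunc κ (t • η)) 0 ∧
      HasDerivAt (fun s : ℝ => expTrunc κ (η + s • ξ))
        ((∫ t in (0:ℝ)..1, expTrunc κ (t • η) * ξ * expTrunc κ (-(t • η)))
          * expTrunc κ η) 0) ∧
    (∀ (a b : ℝ) (C C' : ℝ → A), (∀ t ∈ Set.Ioo a b, C t ∈ 𝔤) →
      ∀ t ∈ Set.Ioo a b, HasDerivAt C (C' t) t →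
        HasDerivAt (fun u => expTrunc κ (C u))
          ((∫ s in (0:ℝ)..1, expTrunc κ (s • C t) * C' t * expTrunc κ (-(s • C t)))
            * expTrunc κ (C t)) t ∧
        HasDerivAt (fun u => expTrunc κ (C u))
          (expTrunc κ (C t) *
            ∫ s in (0:ℝ)..1, expTrunc κ (-(s • C t)) * C' t * expTrunc κ (s • C t)) t) := by
  haveI : CompleteSpace A := FiniteDimensional.complete ℝ A
  have main : ∀ η ∈ 𝔤, ∀ ξ ∈ 𝔤,
      (expTrunc κ η * ∫ t in (0:ℝ)..1, expTrunc κ (-(t • η)) * ξ * expTrunc κ (t • η))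
        = (∑ k ∈ Finset.range (κ + 1), ((k.factorial : ℝ))⁻¹ •
            ∑ j ∈ Finset.range k, η ^ j * ξ * η ^ (k - 1 - j)) ∧
      ((∫ t in (0:ℝ)..1, expTrunc κ (t • η) * ξ * expTrunc κ (-(t • η))) * expTrunc κ η)
        = (∑ k ∈ Finset.range (κ + 1), ((k.factorial : ℝ))⁻¹ •
            ∑ j ∈ Finset.range k, η ^ j * ξ * η ^ (k - 1 - j)) := by
    intro η hη ξ hξ
    have hη1 := Stmt2Aux.pow_zero_mem hnil hη
    have hW : ∀ a b : ℕ, κ ≤ a + b → η ^ a * ξ * η ^ b = 0 :=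
      fun a b h => Stmt2Aux.W_zero hnil hη hξ h
    constructor
    · rw [Stmt2Aux.E1 hη1 ξ, ← Stmt2Aux.key hW]
    · rw [Stmt2Aux.E2 hη1 ξ, ← Stmt2Aux.key hW]
  constructor
  · intro η hη ξ hξ
    have hf : HasDerivAt (fun s : ℝ => η + s • ξ) ξ 0 := by
      simpa using ((hasDerivAt_id (0:ℝ)).smul_const ξ).const_add η
    have hD := Stmt2Aux.hasDerivAt_expTrunc_comp κ hf
    simp only [zero_smul, add_zero] at hD
    obtain ⟨h1, h2⟩ := main η hη ξ hξ
    exact ⟨by rw [h1]; exact hD, by rw [h2]; exact hD⟩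
  · intro a b C C' hC t ht hCt
    have hC't : C' t ∈ 𝔤 := Stmt2Aux.deriv_mem hC ht hCt
    have hD := Stmt2Aux.hasDerivAt_expTrunc_comp κ hCt
    obtain ⟨h1, h2⟩ := main (C t) (hC t ht) (C' t) hC't
    exact ⟨by rw [h2]; exact hD, by rw [h1]; exact hD⟩
end

section
/- Let g: (a,b) → G be continuously differentiable, set ξ̇(t) := g(t)⁻¹ ġ(t) (which lies in 𝔤) and C(t) := log(g(t)) ∈ 𝔤. Then C is continuously differentiable and for every t ∈ (a,b): Σ_{n=0}^{κ−1} ((−1)^n/(n+1)!) ad_{C(t)}^n Ċ(t) = ξ̇(t); equivalently ∫₀¹ e^{−sC(t)} Ċ(t) e^{sC(t)} ds = ξ̇(t). -/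
/-- The truncated logarithm `log(1+ξ) := Σ_{k=1}^{κ} ((−1)^{k+1}/k) ξ^k`. -/
noncomputable def logTrunc {A : Type*} [Ring A] [Algebra ℝ A] (κ : ℕ) (ξ : A) : A :=
  ∑ k ∈ Finset.Icc 1 κ, (((-1 : ℝ) ^ (k + 1)) / k) • ξ ^ k


open Finset


/-- triangle transpose -/
lemma myTri {M : Type*} [AddCommMonoid M] (N : ℕ) (h : ℕ → ℕ → M) :
    ∑ n ∈ range N, ∑ i ∈ range (n+1), h i (n-i)
      = ∑ p ∈ range N, ∑ q ∈ range (N-p), h p q := by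
  induction N with
  | zero => simp
  | succ N ih =>
    rw [Finset.sum_range_succ, ih]
    have h2 : ∑ p ∈ range (N+1), ∑ q ∈ range (N+1-p), h p q
        = ∑ p ∈ range N, ((∑ q ∈ range (N-p), h p q) + h p (N-p)) + ∑ q ∈ range (N+1-N), h N q := by
      rw [Finset.sum_range_succ]
      congr 1
      refine Finset.sum_congr rfl fun p hp => ?_
      have hp' : p < N := Finset.mem_range.mp hp
      have : N + 1 - p = (N - p) + 1 := by omega
      rw [this, Finset.sum_range_succ]
    rw [h2, Finset.sum_add_distrib]
    have : N + 1 - N = 1 := by omega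
    rw [this]
    have : ∑ q ∈ range 1, h N q = h N 0 := by simp
    rw [this]
    have : ∑ i ∈ range (N+1), h i (N-i) = ∑ p ∈ range N, h p (N-p) + h N (N-N) := by
      rw [Finset.sum_range_succ]
    rw [this]
    simp [add_assoc]

/-- collection lemma -/
lemma myCollect {M : Type*} [AddCommMonoid M] (Aa Bb N : ℕ) (hA : N ≤ Aa) (hB : N ≤ Bb)
    (h : ℕ → ℕ → M) (hvan : ∀ l i, N ≤ l + i → h l i = 0) :
    ∑ l ∈ range Aa, ∑ i ∈ range Bb, h l i
      = ∑ p ∈ range N, ∑ l ∈ range (p+1), h l (p - l) := by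
  have step1 : ∑ p ∈ range N, ∑ l ∈ range (p+1), h l (p-l)
      = ∑ l ∈ range N, ∑ i ∈ range (N-l), h l i := myTri N h
  rw [step1]
  have step2 : ∀ l ∈ range N, ∑ i ∈ range (N-l), h l i = ∑ i ∈ range Bb, h l i := by
    intro l hl
    apply Finset.sum_subset
    · intro i hi; rw [Finset.mem_range] at *; omega
    · intro i _ hi; rw [Finset.mem_range] at hi
      exact hvan l i (by omega)
  rw [Finset.sum_congr rfl step2]
  symm
  apply Finset.sum_subset
  · intro l hl; rw [Finset.mem_range] at *; omega
  · intro l _ hl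
    rw [Finset.mem_range] at hl
    exact Finset.sum_eq_zero fun i _ => hvan l i (by omega)

/-- alternating partial sum of binomials -/
lemma myAlt (n p : ℕ) (hp : p ≤ n) :
    ∑ l ∈ range (p+1), ((-1:ℝ)^l * ((n+1).choose l : ℝ)) = (-1)^p * (n.choose p : ℝ) := by
  induction p with
  | zero => simp
  | succ p ih =>
    rw [Finset.sum_range_succ, ih (by omega)]
    have : (n+1).choose (p+1) = n.choose p + n.choose (p+1) := Nat.choose_succ_succ n p
    rw [this]
    push_cast
    ring

/-- coefficient identity for the dexp formula -/
lemma myCID (p q : ℕ) :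
    ∑ l ∈ range (p+1), ((-1:ℝ)^l * ((l.factorial : ℝ))⁻¹ * (((p-l+q+1).factorial : ℝ))⁻¹)
      = (-1)^p * ((p+q).choose q : ℝ) / (((p+q+1).factorial : ℝ)) := by
  have key : ∀ l ∈ range (p+1),
      ((-1:ℝ)^l * ((l.factorial : ℝ))⁻¹ * (((p-l+q+1).factorial : ℝ))⁻¹)
        = ((-1:ℝ)^l * (((p+q+1).choose l : ℝ))) / ((p+q+1).factorial : ℝ) := by
    intro l hl
    rw [Finset.mem_range] at hl
    have hl' : l ≤ p + q + 1 := by omega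
    have h1 : p - l + q + 1 = (p+q+1) - l := by omega
    have h2 : (p+q+1).choose l * l.factorial * ((p+q+1)-l).factorial = (p+q+1).factorial :=
      Nat.choose_mul_factorial_mul_factorial hl'
    rw [h1]
    have hlf : (l.factorial : ℝ) ≠ 0 := Nat.cast_ne_zero.mpr (Nat.factorial_ne_zero l)
    have hmf : (((p+q+1) - l).factorial : ℝ) ≠ 0 := Nat.cast_ne_zero.mpr (Nat.factorial_ne_zero _)
    have hto : ((p+q+1).factorial : ℝ) ≠ 0 := Nat.cast_ne_zero.mpr (Nat.factorial_ne_zero _)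
    have h2' : ((p+q+1).choose l : ℝ) * l.factorial * ((p+q+1)-l).factorial = (p+q+1).factorial := by
      exact_mod_cast congrArg (Nat.cast : ℕ → ℝ) h2
    field_simp
    linear_combination (-1:ℝ) * h2'
  rw [Finset.sum_congr rfl key]
  rw [← Finset.sum_div]
  have : ∑ l ∈ range (p+1), ((-1:ℝ)^l * (((p+q+1).choose l : ℝ)))
      = (-1)^p * ((p+q).choose p : ℝ) := by
    have := myAlt (p+q) p (by omega)
    convert this using 3
  rw [this, Nat.choose_symm_add]


section Alg
variable {A : Type*} [Ring A] [Algebra ℝ A] {κ : ℕ} {𝔤 : Submodule ℝ A}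

lemma myListProd (hnil : ∀ f : Fin (κ + 1) → A, (∀ i, f i ∈ 𝔤) → (List.ofFn f).prod = 0)
    (l : List A) (hlen : κ + 1 ≤ l.length) (hm : ∀ x ∈ l, x ∈ 𝔤) : l.prod = 0 := by
  have hsplit := l.take_append_drop (κ+1)
  rw [← hsplit, List.prod_append]
  have hlen' : (l.take (κ+1)).length = κ + 1 := by
    rw [List.length_take]; omega
  have hofn : List.ofFn (fun i : Fin (κ+1) => (l.take (κ+1)).get (Fin.cast hlen'.symm i))
      = l.take (κ+1) := by
    apply List.ext_get
    · simp [hlen']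
    · intro n h1 h2
      rw [List.get_ofFn]
      rfl
  have h0 : (l.take (κ+1)).prod = 0 := by
    rw [← hofn]
    apply hnil
    intro i
    refine hm _ (List.take_subset (κ+1) l ?_)
    exact List.get_mem (l.take (κ+1)) (Fin.cast hlen'.symm i)
  rw [h0, zero_mul]

lemma mySandZero (hnil : ∀ f : Fin (κ + 1) → A, (∀ i, f i ∈ 𝔤) → (List.ofFn f).prod = 0)
    {x w : A} (hx : x ∈ 𝔤) (hw : w ∈ 𝔤) {p q : ℕ} (hpq : κ ≤ p + q) :
    x ^ p * w * x ^ q = 0 := by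
  have := myListProd hnil (List.replicate p x ++ w :: List.replicate q x)
    (by simp; omega)
    (by intro y hy
        simp only [List.mem_append, List.mem_cons, List.mem_replicate] at hy
        rcases hy with ⟨_, rfl⟩ | rfl | ⟨_, rfl⟩ <;> assumption)
  rw [List.prod_append, List.prod_cons, List.prod_replicate, List.prod_replicate] at this
  rw [mul_assoc]
  exact this

lemma myPowZero (hnil : ∀ f : Fin (κ + 1) → A, (∀ i, f i ∈ 𝔤) → (List.ofFn f).prod = 0)
    {x : A} (hx : x ∈ 𝔤) {m : ℕ} (hm : κ + 1 ≤ m) : x ^ m = 0 := by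
  have := myListProd hnil (List.replicate m x) (by simp; omega)
    (by intro y hy; rw [List.mem_replicate] at hy; rw [hy.2]; exact hx)
  rwa [List.prod_replicate] at this

lemma myPowMem {x : A} (hx : x ∈ 𝔤) {k : ℕ} (hk : 1 ≤ k)
    (hmul : ∀ x ∈ 𝔤, ∀ y ∈ 𝔤, x * y ∈ 𝔤) : x ^ k ∈ 𝔤 := by
  induction k with
  | zero => omega
  | succ k ih =>
    rcases Nat.eq_or_lt_of_le hk with h | h
    · simpa [← h] using hx
    · rw [pow_succ]
      exact hmul _ (ih (by omega)) _ hx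

lemma mySandMem {x w : A} (hx : x ∈ 𝔤) (hw : w ∈ 𝔤)
    (hmul : ∀ x ∈ 𝔤, ∀ y ∈ 𝔤, x * y ∈ 𝔤) (p q : ℕ) : x ^ p * w * x ^ q ∈ 𝔤 := by
  have h1 : w * x ^ q ∈ 𝔤 := by
    induction q with
    | zero => simpa using hw
    | succ q ih => rw [pow_succ, ← mul_assoc]; exact hmul _ ih _ hx
  induction p with
  | zero => simpa [mul_assoc] using h1
  | succ p ih =>
    rw [pow_succ', mul_assoc, mul_assoc]
    rw [mul_assoc] at ih
    exact hmul _ hx _ ih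

lemma myLogMem {ξ : A} (hξ : ξ ∈ 𝔤)
    (hmul : ∀ x ∈ 𝔤, ∀ y ∈ 𝔤, x * y ∈ 𝔤) : logTrunc κ ξ ∈ 𝔤 := by
  apply Submodule.sum_mem
  intro k hk
  rw [Finset.mem_Icc] at hk
  exact Submodule.smul_mem _ _ (myPowMem hξ hk.1 hmul)

lemma myExpExpand (x : A) :
    expTrunc κ (-x) = ∑ l ∈ range (κ+1), (((-1:ℝ)^l) * ((l.factorial : ℝ))⁻¹) • x ^ l := by
  unfold expTrunc
  refine Finset.sum_congr rfl fun l _ => ?_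
  have hneg : -x = (-1:ℝ) • x := by simp
  rw [hneg, smul_pow, smul_smul, mul_comm]

lemma myExpSmulExpand (s : ℝ) (x : A) :
    expTrunc κ (s • x) = ∑ l ∈ range (κ+1), (((l.factorial : ℝ))⁻¹ * s^l) • x ^ l := by
  unfold expTrunc
  refine Finset.sum_congr rfl fun l _ => ?_
  rw [smul_pow, smul_smul]

lemma myAdIter (x w : A) (n : ℕ) :
    (fun y => x * y - y * x)^[n] w
      = ∑ j ∈ range (n+1), (((-1:ℝ)^j * ((n.choose j : ℕ) : ℝ))) • (x ^ (n-j) * w * x ^ j) := by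
  induction n with
  | zero => simp
  | succ n ih =>
    rw [Function.iterate_succ_apply', ih]
    set c : ℕ → ℝ := fun j => ((-1:ℝ)^j * ((n.choose j : ℕ) : ℝ)) with hc
    set F : ℕ → A := fun j => x ^ (n+1-j) * w * x ^ j with hF
    have hxS : x * (∑ j ∈ range (n+1), c j • (x ^ (n-j) * w * x ^ j))
        = ∑ j ∈ range (n+1), c j • F j := by
      rw [Finset.mul_sum]
      refine Finset.sum_congr rfl fun j hj => ?_
      rw [Finset.mem_range] at hj
      rw [mul_smul_comm]
      congr 1
      have h1 : n + 1 - j = (n - j) + 1 := by omega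
      show x * (x ^ (n - j) * w * x ^ j) = x ^ (n + 1 - j) * w * x ^ j
      simp only [h1, pow_succ', mul_assoc]
    have hSx : (∑ j ∈ range (n+1), c j • (x ^ (n-j) * w * x ^ j)) * x
        = ∑ j ∈ range (n+1), c j • F (j+1) := by
      rw [Finset.sum_mul]
      refine Finset.sum_congr rfl fun j hj => ?_
      rw [Finset.mem_range] at hj
      rw [smul_mul_assoc]
      congr 1
      have h1 : n + 1 - (j+1) = n - j := by omega
      show (x ^ (n - j) * w * x ^ j) * x = x ^ (n + 1 - (j+1)) * w * x ^ (j+1)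
      simp only [h1, pow_succ, mul_assoc]
    rw [hxS, hSx]
    -- RHS split
    have hsplit : ∑ j ∈ range (n+2), (((-1:ℝ)^j * (((n+1).choose j : ℕ) : ℝ))) • F j
        = ∑ j ∈ range (n+1), c j • F j - ∑ j ∈ range (n+1), c j • F (j+1) := by
      rw [Finset.sum_range_succ' (fun j => (((-1:ℝ)^j * (((n+1).choose j : ℕ) : ℝ))) • F j) (n+1)]
      have hc0 : ∑ j ∈ range (n+1), c j • F j
          = ∑ j ∈ range n, c (j+1) • F (j+1) + c 0 • F 0 := Finset.sum_range_succ' _ n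
      have hext : ∑ j ∈ range n, c (j+1) • F (j+1) = ∑ j ∈ range (n+1), c (j+1) • F (j+1) := by
        rw [Finset.sum_range_succ]
        have : c (n+1) = 0 := by simp [hc, Nat.choose_succ_self]
        rw [this, zero_smul, add_zero]
      have hterm : ∀ j ∈ range (n+1),
          (((-1:ℝ)^(j+1) * (((n+1).choose (j+1) : ℕ) : ℝ))) • F (j+1)
            = c (j+1) • F (j+1) - c j • F (j+1) := by
        intro j hj
        rw [← sub_smul]
        congr 1
        rw [hc]
        simp only [Nat.choose_succ_succ n j]
        push_cast
        ring
      rw [Finset.sum_congr rfl hterm, Finset.sum_sub_distrib, hc0, hext]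
      have hcF0 : (((-1:ℝ)^0 * (((n+1).choose 0 : ℕ) : ℝ))) • F 0 = c 0 • F 0 := by
        simp [hc]
      rw [hcF0]
      abel
    rw [hsplit]

lemma myRID0 (m : ℕ) (hm : 1 ≤ m) :
    ∑ i ∈ range (m+1), (((i.factorial:ℝ))⁻¹ * (((-1:ℝ)^(m-i)) * (((m-i).factorial:ℝ))⁻¹)) = 0 := by
  have key : ∀ i ∈ range (m+1), ((i.factorial:ℝ))⁻¹ * (((-1:ℝ)^(m-i)) * (((m-i).factorial:ℝ))⁻¹)
      = ((-1:ℝ)^(m-i) * ((m.choose i : ℕ) : ℝ)) / (m.factorial : ℝ) := by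
    intro i hi; rw [Finset.mem_range] at hi
    have hi' : i ≤ m := by omega
    have h2 : ((m.choose i : ℕ) : ℝ) * i.factorial * ((m-i).factorial) = m.factorial := by
      exact_mod_cast congrArg (Nat.cast : ℕ → ℝ) (Nat.choose_mul_factorial_mul_factorial hi')
    have h1 : (i.factorial : ℝ) ≠ 0 := Nat.cast_ne_zero.mpr (Nat.factorial_ne_zero i)
    have h3 : (((m-i).factorial : ℝ)) ≠ 0 := Nat.cast_ne_zero.mpr (Nat.factorial_ne_zero _)
    have h4 : ((m.factorial : ℕ) : ℝ) ≠ 0 := Nat.cast_ne_zero.mpr (Nat.factorial_ne_zero _)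
    field_simp
    linear_combination (-1:ℝ) * h2
  rw [Finset.sum_congr rfl key, ← Finset.sum_div]
  have hz : ∑ i ∈ range (m+1), ((-1:ℝ)^(m-i) * ((m.choose i : ℕ) : ℝ)) = 0 := by
    have hrefl := Finset.sum_range_reflect (fun i => ((-1:ℝ)^(m-i) * ((m.choose i : ℕ) : ℝ))) (m+1)
    rw [← hrefl]
    have key2 : ∀ j ∈ range (m+1), ((-1:ℝ)^(m-(m+1-1-j)) * ((m.choose (m+1-1-j) : ℕ) : ℝ))
        = ((-1:ℝ)^j * ((m.choose j : ℕ) : ℝ)) := by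
      intro j hj; rw [Finset.mem_range] at hj
      have e1 : m - (m+1-1-j) = j := by omega
      have e2 : m + 1 - 1 - j = m - j := by omega
      rw [e1, e2, Nat.choose_symm (by omega)]
    rw [Finset.sum_congr rfl key2]
    have := Int.alternating_sum_range_choose (n := m)
    rw [if_neg (by omega)] at this
    exact_mod_cast this
  rw [hz, zero_div]

lemma myEEN (hnil : ∀ f : Fin (κ + 1) → A, (∀ i, f i ∈ 𝔤) → (List.ofFn f).prod = 0)
    {x : A} (hx : x ∈ 𝔤) : expTrunc κ x * expTrunc κ (-x) = 1 := by
  rw [myExpExpand]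
  show (∑ i ∈ range (κ+1), ((i.factorial : ℝ))⁻¹ • x ^ i) * _ = 1
  rw [Finset.sum_mul_sum]
  have step1 : ∀ i ∈ range (κ+1), ∀ j ∈ range (κ+1),
      (((i.factorial : ℝ))⁻¹ • x ^ i) * ((((-1:ℝ)^j) * ((j.factorial : ℝ))⁻¹) • x ^ j)
        = (((i.factorial : ℝ))⁻¹ * (((-1:ℝ)^j) * ((j.factorial : ℝ))⁻¹)) • x ^ (i+j) := by
    intro i _ j _
    rw [smul_mul_assoc, mul_smul_comm, smul_smul, ← pow_add]
  rw [Finset.sum_congr rfl (fun i hi => Finset.sum_congr rfl (step1 i hi))]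
  rw [myCollect (κ+1) (κ+1) (κ+1) le_rfl le_rfl _
    (fun l i h => by rw [myPowZero hnil hx h, smul_zero])]
  have step2 : ∀ p ∈ range (κ+1), ∑ l ∈ range (p+1),
      (((l.factorial : ℝ))⁻¹ * (((-1:ℝ)^(p-l)) * (((p-l).factorial : ℝ))⁻¹)) • x ^ (l+(p-l))
        = (∑ l ∈ range (p+1), ((l.factorial : ℝ))⁻¹ * (((-1:ℝ)^(p-l)) * (((p-l).factorial : ℝ))⁻¹)) • x ^ p := by
    intro p _
    rw [Finset.sum_smul]
    refine Finset.sum_congr rfl fun l hl => ?_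
    rw [Finset.mem_range] at hl
    congr 2
    omega
  rw [Finset.sum_congr rfl step2]
  rw [Finset.sum_eq_single 0]
  · simp
  · intro p _ hp
    rw [myRID0 p (by omega), zero_smul]
  · intro h; exact absurd (Finset.mem_range.mpr (by omega)) h

lemma myPWcoef (s : ℝ) (n l : ℕ) (hl : l ≤ n) :
    ((-1:ℝ)^n * s^n * ((n.factorial:ℝ))⁻¹) * ((-1:ℝ)^(n-l) * ((n.choose (n-l) : ℕ):ℝ))
      = (((l.factorial:ℝ))⁻¹ * (-s)^l) * ((((n-l).factorial:ℝ))⁻¹ * s^(n-l)) := by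
  have hc : n.choose (n-l) = n.choose l := Nat.choose_symm hl
  have h2 : ((n.choose l : ℕ):ℝ) * l.factorial * (n-l).factorial = n.factorial := by
    exact_mod_cast congrArg (Nat.cast : ℕ → ℝ) (Nat.choose_mul_factorial_mul_factorial hl)
  have hsgn : ((-1:ℝ))^n * (-1:ℝ)^(n-l) = (-1:ℝ)^l := by
    rw [← pow_add]
    have : n + (n - l) = l + 2*(n-l) := by omega
    rw [this, pow_add, pow_mul, neg_one_sq, one_pow, mul_one]
  have hsp : (-s)^l = (-1:ℝ)^l * s^l := by rw [neg_pow]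
  have hss : s^l * s^(n-l) = s^n := by rw [← pow_add]; congr 1; omega
  have h1 : (l.factorial : ℝ) ≠ 0 := Nat.cast_ne_zero.mpr (Nat.factorial_ne_zero l)
  have h3 : (((n-l).factorial : ℝ)) ≠ 0 := Nat.cast_ne_zero.mpr (Nat.factorial_ne_zero _)
  have h4 : ((n.factorial : ℕ) : ℝ) ≠ 0 := Nat.cast_ne_zero.mpr (Nat.factorial_ne_zero _)
  rw [hc, hsp]
  field_simp
  linear_combination (s^n * ((n.choose l : ℕ):ℝ) * (l.factorial:ℝ) * (((n-l).factorial:ℝ))) * hsgn + ((-1:ℝ)^l * s^n) * h2 - ((-1:ℝ)^l * ((n.factorial:ℕ):ℝ)) * hss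

lemma myPW (hnil : ∀ f : Fin (κ + 1) → A, (∀ i, f i ∈ 𝔤) → (List.ofFn f).prod = 0)
    {x w : A} (hx : x ∈ 𝔤) (hw : w ∈ 𝔤) (s : ℝ) :
    expTrunc κ (-(s • x)) * w * expTrunc κ (s • x)
      = ∑ n ∈ range κ, (((-1:ℝ)^n * s^n * ((n.factorial : ℝ))⁻¹)) •
          ((fun y => x * y - y * x)^[n] w) := by
  have hL : expTrunc κ (-(s•x)) = ∑ i ∈ range (κ+1), (((i.factorial:ℝ))⁻¹ * (-s)^i) • x^i := by
    rw [show -(s • x) = (-s) • x from by rw [neg_smul], myExpSmulExpand]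
  rw [hL, myExpSmulExpand, Finset.sum_mul, Finset.sum_mul_sum]
  have step1 : ∀ i ∈ range (κ+1), ∀ j ∈ range (κ+1),
      (((((i.factorial:ℝ))⁻¹ * (-s)^i) • x^i) * w) * ((((j.factorial:ℝ))⁻¹ * s^j) • x^j)
        = ((((i.factorial:ℝ))⁻¹ * (-s)^i) * (((j.factorial:ℝ))⁻¹ * s^j)) • (x^i * w * x^j) := by
    intro i _ j _
    rw [smul_mul_assoc, smul_mul_assoc, mul_smul_comm, smul_smul]
  rw [Finset.sum_congr rfl (fun i hi => Finset.sum_congr rfl (step1 i hi))]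
  rw [myCollect (κ+1) (κ+1) κ (by omega) (by omega) _
    (fun l i h => by rw [mySandZero hnil hx hw h, smul_zero])]
  refine Finset.sum_congr rfl fun n hn => ?_
  rw [Finset.mem_range] at hn
  rw [myAdIter, Finset.smul_sum, ← Finset.sum_range_reflect]
  refine Finset.sum_congr rfl fun l hl => ?_
  rw [Finset.mem_range] at hl
  have e1 : n + 1 - 1 - l = n - l := by omega
  have e2 : n - (n - l) = l := by omega
  rw [e1, smul_smul]
  have hco := myPWcoef s n (n-l) (by omega)
  rw [e2] at hco
  rw [e2, ← hco]

lemma myL4coef (p q : ℕ) :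
    ∑ l ∈ range (p+1), (((-1:ℝ)^l * ((l.factorial:ℝ))⁻¹) * (((p-l+q+1).factorial:ℝ))⁻¹)
      = ((-1:ℝ)^(p+q) / (((p+q+1).factorial:ℝ))) * ((-1:ℝ)^q * (((p+q).choose q : ℕ):ℝ)) := by
  have h0 : ∀ l ∈ range (p+1), (((-1:ℝ)^l * ((l.factorial:ℝ))⁻¹) * (((p-l+q+1).factorial:ℝ))⁻¹)
      = ((-1:ℝ)^l * ((l.factorial:ℝ))⁻¹ * (((p-l+q+1).factorial:ℝ))⁻¹) := fun l _ => by ring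
  rw [Finset.sum_congr rfl h0, myCID p q]
  have hsgn : ((-1:ℝ))^(p+q) * (-1:ℝ)^q = (-1:ℝ)^p := by
    rw [← pow_add]
    have : p + q + q = p + 2*q := by omega
    rw [this, pow_add, pow_mul, neg_one_sq, one_pow, mul_one]
  rw [← hsgn]
  ring

lemma myL4 (hnil : ∀ f : Fin (κ + 1) → A, (∀ i, f i ∈ 𝔤) → (List.ofFn f).prod = 0)
    {x w : A} (hx : x ∈ 𝔤) (hw : w ∈ 𝔤) :
    expTrunc κ (-x) * (∑ k ∈ range (κ+1), ((k.factorial:ℝ))⁻¹ •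
        (∑ i ∈ range k, x^i * w * x^(k-1-i)))
      = ∑ n ∈ range κ, ((-1:ℝ)^n / (((n+1).factorial : ℝ))) •
          ((fun y => x * y - y * x)^[n] w) := by
  have hFzero : ∀ p q : ℕ, κ ≤ p + q → x^p * w * x^q = 0 :=
    fun p q h => mySandZero hnil hx hw h
  -- LHS transformation
  have hV : (∑ k ∈ range (κ+1), ((k.factorial:ℝ))⁻¹ • (∑ i ∈ range k, x^i * w * x^(k-1-i)))
      = ∑ n ∈ range κ, ∑ i ∈ range (n+1), (((n+1).factorial:ℝ))⁻¹ • (x^i * w * x^(n-i)) := by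
    rw [Finset.sum_range_succ' (fun k => ((k.factorial:ℝ))⁻¹ •
      (∑ i ∈ range k, x^i * w * x^(k-1-i))) κ]
    simp only [Finset.sum_range_zero, smul_zero, add_zero]
    refine Finset.sum_congr rfl fun n _ => ?_
    rw [Finset.smul_sum]
    refine Finset.sum_congr rfl fun i _ => ?_
    have e : n + 1 - 1 - i = n - i := by omega
    rw [e]
  have hLHS : expTrunc κ (-x) * (∑ k ∈ range (κ+1), ((k.factorial:ℝ))⁻¹ •
        (∑ i ∈ range k, x^i * w * x^(k-1-i)))
      = ∑ q ∈ range κ, ∑ p ∈ range κ,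
          (∑ l ∈ range (p+1), (((-1:ℝ)^l * ((l.factorial:ℝ))⁻¹) *
            (((p-l+q+1).factorial:ℝ))⁻¹)) • (x^p * w * x^q) := by
    rw [hV, myExpExpand, Finset.sum_mul_sum]
    have step1 : ∀ l ∈ range (κ+1), ∀ n ∈ range κ,
        ((((-1:ℝ)^l) * ((l.factorial:ℝ))⁻¹) • x^l) *
          (∑ i ∈ range (n+1), (((n+1).factorial:ℝ))⁻¹ • (x^i * w * x^(n-i)))
          = ∑ i ∈ range (n+1),
              (fun i q => ((((-1:ℝ)^l) * ((l.factorial:ℝ))⁻¹) * (((i+q+1).factorial:ℝ))⁻¹) •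
                (x^(l+i) * w * x^q)) i (n-i) := by
      intro l _ n hn
      rw [Finset.mul_sum]
      refine Finset.sum_congr rfl fun i hi => ?_
      rw [Finset.mem_range] at hi
      have e : i + (n - i) + 1 = n + 1 := by omega
      simp only [e]
      rw [smul_mul_assoc, mul_smul_comm, smul_smul]
      congr 1
      simp only [pow_add, mul_assoc]
    rw [Finset.sum_congr rfl (fun l hl => Finset.sum_congr rfl (step1 l hl))]
    have step2 : ∀ l ∈ range (κ+1),
        (∑ n ∈ range κ, ∑ i ∈ range (n+1),
          (fun i q => ((((-1:ℝ)^l) * ((l.factorial:ℝ))⁻¹) * (((i+q+1).factorial:ℝ))⁻¹) •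
            (x^(l+i) * w * x^q)) i (n-i))
        = ∑ p ∈ range κ, ∑ q ∈ range κ,
            ((((-1:ℝ)^l) * ((l.factorial:ℝ))⁻¹) * (((p+q+1).factorial:ℝ))⁻¹) •
              (x^(l+p) * w * x^q) := by
      intro l _
      rw [myTri κ (fun i q =>
        ((((-1:ℝ)^l) * ((l.factorial:ℝ))⁻¹) * (((i+q+1).factorial:ℝ))⁻¹) •
          (x^(l+i) * w * x^q))]
      refine Finset.sum_congr rfl fun p hp => ?_
      apply Finset.sum_subset
      · intro q hq; rw [Finset.mem_range] at *; omega
      · intro q _ hq2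
        rw [Finset.mem_range] at hq2
        rw [hFzero (l+p) q (by omega), smul_zero]
    rw [Finset.sum_congr rfl step2]
    -- swap sums: l,p,q -> q,p,l and collect
    rw [Finset.sum_congr rfl (fun l (_ : l ∈ range (κ+1)) => Finset.sum_comm)]
    rw [Finset.sum_comm]
    refine Finset.sum_congr rfl fun q hq => ?_
    rw [Finset.mem_range] at hq
    rw [myCollect (κ+1) κ (κ-q) (by omega) (by omega)
      (fun l p => ((((-1:ℝ)^l) * ((l.factorial:ℝ))⁻¹) * (((p+q+1).factorial:ℝ))⁻¹) •
        (x^(l+p) * w * x^q))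
      (fun l p h => by rw [hFzero (l+p) q (by omega), smul_zero])]
    have step3 : ∀ r ∈ range (κ-q),
        (∑ l ∈ range (r+1),
          ((((-1:ℝ)^l) * ((l.factorial:ℝ))⁻¹) * ((((r-l)+q+1).factorial:ℝ))⁻¹) •
            (x^(l+(r-l)) * w * x^q))
        = (∑ l ∈ range (r+1), (((-1:ℝ)^l * ((l.factorial:ℝ))⁻¹) *
            (((r-l+q+1).factorial:ℝ))⁻¹)) • (x^r * w * x^q) := by
      intro r _
      rw [Finset.sum_smul]
      refine Finset.sum_congr rfl fun l hl => ?_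
      rw [Finset.mem_range] at hl
      have e : l + (r - l) = r := by omega
      rw [e]
    rw [Finset.sum_congr rfl step3]
    apply Finset.sum_subset
    · intro p hp; rw [Finset.mem_range] at *; omega
    · intro p _ hp2
      rw [Finset.mem_range] at hp2
      rw [hFzero p q (by omega), smul_zero]
  rw [hLHS]
  -- RHS transformation
  have hRHS : ∀ n ∈ range κ, ((-1:ℝ)^n / (((n+1).factorial : ℝ))) •
        ((fun y => x * y - y * x)^[n] w)
      = ∑ j ∈ range (n+1),
          (fun j q => (((-1:ℝ)^(j+q) / ((((j+q)+1).factorial : ℝ))) *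
            ((-1:ℝ)^q * ((((j+q)).choose q : ℕ):ℝ))) • (x^j * w * x^q)) j (n-j) := by
    intro n hn
    rw [myAdIter, Finset.smul_sum, ← Finset.sum_range_reflect]
    refine Finset.sum_congr rfl fun j hj => ?_
    rw [Finset.mem_range] at hj
    have e1 : n + 1 - 1 - j = n - j := by omega
    have e2 : n - (n - j) = j := by omega
    have e3 : j + (n - j) = n := by omega
    simp only [e1, e2, e3]
    rw [smul_smul]
  rw [Finset.sum_congr rfl hRHS, myTri κ (fun j q =>
    (((-1:ℝ)^(j+q) / ((((j+q)+1).factorial : ℝ))) *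
      ((-1:ℝ)^q * ((((j+q)).choose q : ℕ):ℝ))) • (x^j * w * x^q))]
  have ext : ∀ p ∈ range κ,
      (∑ q ∈ range (κ-p),
        (((-1:ℝ)^(p+q) / ((((p+q)+1).factorial : ℝ))) *
          ((-1:ℝ)^q * ((((p+q)).choose q : ℕ):ℝ))) • (x^p * w * x^q))
      = ∑ q ∈ range κ,
        (((-1:ℝ)^(p+q) / ((((p+q)+1).factorial : ℝ))) *
          ((-1:ℝ)^q * ((((p+q)).choose q : ℕ):ℝ))) • (x^p * w * x^q) := by
    intro p _
    apply Finset.sum_subset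
    · intro q hq; rw [Finset.mem_range] at *; omega
    · intro q _ hq2
      rw [Finset.mem_range] at hq2
      rw [hFzero p q (by omega), smul_zero]
  rw [Finset.sum_congr rfl ext, Finset.sum_comm]
  refine Finset.sum_congr rfl fun q hq => Finset.sum_congr rfl fun p hp => ?_
  rw [myL4coef q p]

end Alg

section PolyPart
open Polynomial
lemma myHomExp {A B : Type*} [Ring A] [Algebra ℝ A] [Ring B] [Algebra ℝ B]
    (φ : A →ₐ[ℝ] B) (κ : ℕ) (p : A) : φ (expTrunc κ p) = expTrunc κ (φ p) := by
  unfold expTrunc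
  rw [map_sum]
  exact Finset.sum_congr rfl fun k _ => by rw [map_smul, map_pow]

lemma myHomLog {A B : Type*} [Ring A] [Algebra ℝ A] [Ring B] [Algebra ℝ B]
    (φ : A →ₐ[ℝ] B) (κ : ℕ) (p : A) : φ (logTrunc κ p) = logTrunc κ (φ p) := by
  unfold logTrunc
  rw [map_sum]
  exact Finset.sum_congr rfl fun k _ => by rw [map_smul, map_pow]

section Poly
variable (κ : ℕ)

/-- coefficient facts about F := expTrunc κ (logTrunc κ X) -/
lemma myXdvdL : (X : ℝ[X]) ∣ logTrunc κ X := by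
  unfold logTrunc
  apply Finset.dvd_sum
  intro k hk
  rw [Finset.mem_Icc] at hk
  rw [Polynomial.smul_eq_C_mul]
  exact Dvd.dvd.mul_left (dvd_pow_self X (by omega)) _

lemma myDerivL : derivative (logTrunc κ (X : ℝ[X])) = ∑ m ∈ range κ, ((-1:ℝ))^m • (X:ℝ[X])^m := by
  unfold logTrunc
  rw [map_sum]
  have step : ∀ k ∈ Finset.Icc 1 κ,
      derivative ((((-1 : ℝ) ^ (k + 1)) / k) • (X:ℝ[X])^k) = ((-1:ℝ))^(k+1) • (X:ℝ[X])^(k-1) := by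
    intro k hk
    rw [Finset.mem_Icc] at hk
    rw [derivative_smul, derivative_X_pow, smul_eq_C_mul, smul_eq_C_mul]
    have hk0 : (k:ℝ) ≠ 0 := Nat.cast_ne_zero.mpr (by omega)
    rw [show (((-1 : ℝ) ^ (k + 1)) / k) = ((-1 : ℝ) ^ (k + 1)) * (k:ℝ)⁻¹ from by ring]
    rw [map_mul]
    have h5 : (C ((k:ℝ)⁻¹)) * (C (k:ℝ) * X^(k-1)) = X^(k-1) := by
      rw [← mul_assoc, ← map_mul, inv_mul_cancel₀ hk0, map_one, one_mul]
    rw [mul_assoc, h5]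
  rw [Finset.sum_congr rfl step]
  rw [show Finset.Icc 1 κ = Finset.Ico 1 (κ+1) from by rw [Finset.Ico_add_one_right_eq_Icc]]
  rw [Finset.sum_Ico_eq_sum_range]
  simp only [Nat.add_sub_cancel]
  refine Finset.sum_congr rfl fun m _ => ?_
  have e1 : 1 + m - 1 = m := by omega
  have e2 : ((-1:ℝ))^(1+m+1) = (-1:ℝ)^m := by
    have : 1 + m + 1 = m + 2 := by omega
    rw [this, pow_add, neg_one_sq, mul_one]
  rw [e1, e2]

lemma myGeo : (1 + (X:ℝ[X])) * derivative (logTrunc κ (X : ℝ[X])) = 1 - (-X)^κ := by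
  rw [myDerivL]
  have step : ∀ m ∈ range κ, ((-1:ℝ))^m • (X:ℝ[X])^m = (-X)^m := by
    intro m _
    rw [← _root_.smul_pow, neg_smul, one_smul]
  rw [Finset.sum_congr rfl step]
  have := geom_sum_mul (-X : ℝ[X]) κ
  linear_combination (-1 : ℝ[X]) * this

lemma myDerivF : derivative (expTrunc κ (logTrunc κ (X:ℝ[X])))
    = (∑ k ∈ range κ, ((k.factorial:ℝ))⁻¹ • (logTrunc κ (X:ℝ[X]))^k)
        * derivative (logTrunc κ (X:ℝ[X])) := by
  unfold expTrunc
  rw [map_sum]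
  rw [Finset.sum_range_succ' (fun k => derivative (((k.factorial : ℝ))⁻¹ • (logTrunc κ (X:ℝ[X])) ^ k)) κ]
  simp only [pow_zero, derivative_smul, derivative_one, smul_zero, add_zero]
  rw [Finset.sum_mul]
  refine Finset.sum_congr rfl fun k _ => ?_
  rw [derivative_pow]
  have e : (((k+1).factorial : ℝ))⁻¹ * ((k+1 : ℕ):ℝ) = ((k.factorial : ℝ))⁻¹ := by
    rw [Nat.factorial_succ]
    push_cast
    rw [mul_inv]
    have h1 : ((k:ℝ)+1) ≠ 0 := by positivity
    field_simp
  simp only [Nat.add_sub_cancel]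
  rw [smul_eq_C_mul, smul_eq_C_mul, ← e, map_mul]
  ring

lemma myDvd : (X:ℝ[X])^κ ∣ (1 + X) * derivative (expTrunc κ (logTrunc κ (X:ℝ[X])))
    - expTrunc κ (logTrunc κ (X:ℝ[X])) := by
  have hsplit : expTrunc κ (logTrunc κ (X:ℝ[X]))
      = (∑ k ∈ range κ, ((k.factorial:ℝ))⁻¹ • (logTrunc κ (X:ℝ[X]))^k)
        + ((κ.factorial:ℝ))⁻¹ • (logTrunc κ (X:ℝ[X]))^κ := Finset.sum_range_succ _ κ
  have calc1 : (1 + X) * derivative (expTrunc κ (logTrunc κ (X:ℝ[X])))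
      - expTrunc κ (logTrunc κ (X:ℝ[X]))
      = -((∑ k ∈ range κ, ((k.factorial:ℝ))⁻¹ • (logTrunc κ (X:ℝ[X]))^k) * (-X)^κ)
        - C ((κ.factorial:ℝ))⁻¹ * (logTrunc κ (X:ℝ[X]))^κ := by
    rw [myDerivF, hsplit]
    simp only [smul_eq_C_mul]
    linear_combination (∑ k ∈ range κ, (C ((k.factorial:ℝ))⁻¹) * (logTrunc κ (X:ℝ[X]))^k) * (myGeo κ)
  rw [calc1]
  apply dvd_sub
  · rw [dvd_neg]
    apply Dvd.dvd.mul_left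
    rw [show ((-X : ℝ[X]))^κ = (-1)^κ * X^κ from by rw [neg_pow]]
    exact Dvd.intro_left _ rfl
  · exact Dvd.dvd.mul_left (pow_dvd_pow_of_dvd (myXdvdL κ) κ) _

lemma myCoeffRel : ∀ m, m < κ →
    ((1 + (X:ℝ[X])) * derivative (expTrunc κ (logTrunc κ (X:ℝ[X])))
      - expTrunc κ (logTrunc κ (X:ℝ[X]))).coeff m = 0 := by
  obtain ⟨R, hR⟩ := myDvd κ
  intro m hm
  rw [hR, mul_comm, Polynomial.coeff_mul_X_pow']
  rw [if_neg (by omega)]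

lemma myCoeffF0 : (expTrunc κ (logTrunc κ (X:ℝ[X]))).coeff 0 = 1 := by
  rw [Polynomial.coeff_zero_eq_eval_zero]
  unfold expTrunc
  rw [Polynomial.eval_finset_sum]
  have hL0 : Polynomial.eval 0 (logTrunc κ (X:ℝ[X])) = 0 := by
    unfold logTrunc
    rw [Polynomial.eval_finset_sum]
    apply Finset.sum_eq_zero
    intro k hk
    rw [Finset.mem_Icc] at hk
    rw [Polynomial.eval_smul, Polynomial.eval_pow, Polynomial.eval_X,
      zero_pow (by omega), smul_zero]
  rw [Finset.sum_range_succ' _ κ]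
  have h1 : ∀ k ∈ range κ, Polynomial.eval 0 ((((k+1).factorial:ℝ))⁻¹ •
      (logTrunc κ (X:ℝ[X]))^(k+1)) = 0 := by
    intro k _
    rw [Polynomial.eval_smul, Polynomial.eval_pow, hL0, zero_pow (by omega), smul_zero]
  rw [Finset.sum_congr rfl h1]
  simp

lemma myRel1 : ∀ m : ℕ,
    ((1 + (X:ℝ[X])) * derivative (expTrunc κ (logTrunc κ (X:ℝ[X])))
      - expTrunc κ (logTrunc κ (X:ℝ[X]))).coeff (m+1)
    = (expTrunc κ (logTrunc κ (X:ℝ[X]))).coeff (m+2) * ((m:ℝ)+2)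
      + (expTrunc κ (logTrunc κ (X:ℝ[X]))).coeff (m+1) * ((m:ℝ)+1)
      - (expTrunc κ (logTrunc κ (X:ℝ[X]))).coeff (m+1) := by
  intro m
  rw [Polynomial.coeff_sub, add_mul, one_mul, Polynomial.coeff_add,
    Polynomial.coeff_X_mul, Polynomial.coeff_derivative, Polynomial.coeff_derivative]
  push_cast
  ring

lemma myRel0 :
    ((1 + (X:ℝ[X])) * derivative (expTrunc κ (logTrunc κ (X:ℝ[X])))
      - expTrunc κ (logTrunc κ (X:ℝ[X]))).coeff 0
    = (expTrunc κ (logTrunc κ (X:ℝ[X]))).coeff 1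
      - (expTrunc κ (logTrunc κ (X:ℝ[X]))).coeff 0 := by
  rw [Polynomial.coeff_sub, add_mul, one_mul, Polynomial.coeff_add,
    Polynomial.mul_coeff_zero, Polynomial.coeff_X_zero, zero_mul, add_zero,
    Polynomial.coeff_derivative]
  push_cast
  ring

lemma myCoeffF1 (hκ : 1 ≤ κ) : (expTrunc κ (logTrunc κ (X:ℝ[X]))).coeff 1 = 1 := by
  have h0 := myCoeffRel κ 0 (by omega)
  rw [myRel0] at h0
  rw [myCoeffF0] at h0
  linarith

lemma myCoeffF2 : ∀ j, j + 2 ≤ κ → (expTrunc κ (logTrunc κ (X:ℝ[X]))).coeff (j+2) = 0 := by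
  intro j
  induction j with
  | zero =>
    intro hj
    have h1 := myCoeffRel κ 1 (by omega)
    rw [myRel1] at h1
    have := myCoeffF1 κ (by omega)
    rw [this] at h1
    norm_num at h1
    linarith
  | succ j ih =>
    intro hj
    have h1 := myCoeffRel κ (j+2) (by omega)
    rw [myRel1] at h1
    rw [ih (by omega)] at h1
    have hne : ((j:ℝ)+2+2) ≠ 0 := by positivity
    have : (expTrunc κ (logTrunc κ (X:ℝ[X]))).coeff (j+1+2) * ((j:ℝ)+1+2) = 0 := by
      push_cast at h1 ⊢
      linarith
    have h2 : ((j:ℝ)+1+2) ≠ 0 := by positivity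
    exact (mul_eq_zero.mp this).resolve_right h2

end Poly

end PolyPart

lemma myExpLog {A : Type*} [Ring A] [Algebra ℝ A] {κ : ℕ} {𝔤 : Submodule ℝ A}
    (hnil : ∀ f : Fin (κ + 1) → A, (∀ i, f i ∈ 𝔤) → (List.ofFn f).prod = 0)
    {ξ : A} (hξ : ξ ∈ 𝔤) : expTrunc κ (logTrunc κ ξ) = 1 + ξ := by
  by_cases hκ : κ = 0
  · subst hκ
    have h1 : ξ = 0 := by
      have := myPowZero hnil hξ (m := 1) le_rfl
      rwa [pow_one] at this
    have h2 : logTrunc (A := A) 0 ξ = 0 := by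
      unfold logTrunc
      rw [Finset.Icc_eq_empty (by omega), Finset.sum_empty]
    rw [h2, h1]
    unfold expTrunc
    simp
  · have hκ1 : 1 ≤ κ := by omega
    have key : Polynomial.aeval ξ (expTrunc κ (logTrunc κ (Polynomial.X : Polynomial ℝ)))
        = expTrunc κ (logTrunc κ ξ) := by
      rw [myHomExp (Polynomial.aeval ξ) κ, myHomLog (Polynomial.aeval ξ) κ, Polynomial.aeval_X]
    rw [← key, Polynomial.aeval_eq_sum_range]
    have hN : 1 ≤ (expTrunc κ (logTrunc κ (Polynomial.X : Polynomial ℝ))).natDegree := by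
      apply Polynomial.le_natDegree_of_ne_zero
      rw [myCoeffF1 κ hκ1]
      norm_num
    obtain ⟨n, hn⟩ : ∃ n, (expTrunc κ (logTrunc κ (Polynomial.X : Polynomial ℝ))).natDegree + 1
        = n + 2 := ⟨(expTrunc κ (logTrunc κ (Polynomial.X : Polynomial ℝ))).natDegree - 1, by omega⟩
    rw [hn, Finset.sum_range_succ' _ (n+1), Finset.sum_range_succ' _ n]
    have hz : ∀ i ∈ range n,
        (expTrunc κ (logTrunc κ (Polynomial.X : Polynomial ℝ))).coeff (i+1+1) • ξ^(i+1+1) = 0 := by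
      intro i _
      by_cases hik : i + 2 ≤ κ
      · rw [show i+1+1 = i+2 from rfl, myCoeffF2 κ i hik, zero_smul]
      · rw [myPowZero hnil hξ (m := i+1+1) (by omega), smul_zero]
    rw [Finset.sum_congr rfl hz, Finset.sum_const_zero]
    rw [show (0:ℕ)+1 = 1 from rfl, myCoeffF1 κ hκ1, myCoeffF0 κ]
    rw [pow_one, pow_zero, one_smul, one_smul]
    abel


section Normed
variable {A : Type*} [NormedRing A] [NormedAlgebra ℝ A] {κ : ℕ} {𝔤 : Submodule ℝ A}

lemma myHasDerivPow {f : ℝ → A} {v : A} {t : ℝ} (hf : HasDerivAt f v t) (k : ℕ) :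
    HasDerivAt (fun u => f u ^ k) (∑ i ∈ range k, f t ^ i * v * f t ^ (k-1-i)) t := by
  induction k with
  | zero => simpa using hasDerivAt_const t (1:A)
  | succ k ih =>
    have h1 : HasDerivAt (fun u => f u ^ k * f u)
        ((∑ i ∈ range k, f t ^ i * v * f t ^ (k-1-i)) * f t + f t ^ k * v) t := ih.mul hf
    have h2 : (fun u => f u ^ (k+1)) = fun u => f u ^ k * f u := by
      funext u; rw [pow_succ]
    rw [h2]
    convert h1 using 1
    have e : ∀ i ∈ range k, f t ^ i * v * f t ^ (k+1-1-i) = (f t ^ i * v * f t ^ (k-1-i)) * f t := by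
      intro i hi; rw [Finset.mem_range] at hi
      have h3 : k + 1 - 1 - i = (k - 1 - i) + 1 := by omega
      rw [h3, pow_succ, ← mul_assoc]
    calc ∑ i ∈ range (k+1), f t ^ i * v * f t ^ (k+1-1-i)
        = (∑ i ∈ range k, f t ^ i * v * f t ^ (k+1-1-i)) + f t ^ k * v * f t ^ (k+1-1-k) :=
          Finset.sum_range_succ _ _
      _ = (∑ i ∈ range k, (f t ^ i * v * f t ^ (k-1-i)) * f t) + f t ^ k * v := by
          rw [Finset.sum_congr rfl e, show k+1-1-k = 0 from by omega, pow_zero, mul_one]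
      _ = (∑ i ∈ range k, f t ^ i * v * f t ^ (k-1-i)) * f t + f t ^ k * v := by
          rw [Finset.sum_mul]

lemma myIntegral [CompleteSpace A]
    (hnil : ∀ f : Fin (κ + 1) → A, (∀ i, f i ∈ 𝔤) → (List.ofFn f).prod = 0)
    {x w : A} (hx : x ∈ 𝔤) (hw : w ∈ 𝔤) :
    (∫ s in (0:ℝ)..1, expTrunc κ (-(s • x)) * w * expTrunc κ (s • x))
      = ∑ n ∈ range κ, ((-1:ℝ)^n / (((n+1).factorial:ℝ))) • ((fun y => x*y - y*x)^[n] w) := by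
  have h1 : Set.EqOn (fun s : ℝ => expTrunc κ (-(s • x)) * w * expTrunc κ (s • x))
      (fun s : ℝ => ∑ n ∈ range κ, (((-1:ℝ)^n * s^n * ((n.factorial:ℝ))⁻¹)) •
        ((fun y => x*y - y*x)^[n] w)) (Set.uIcc (0:ℝ) 1) :=
    fun s _ => myPW hnil hx hw s
  rw [intervalIntegral.integral_congr h1]
  rw [intervalIntegral.integral_finset_sum (f := fun n (s : ℝ) => (((-1:ℝ)^n * s^n * ((n.factorial:ℝ))⁻¹)) •
      ((fun y => x*y - y*x)^[n] w)) (fun n _ =>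
    ((((continuous_const.mul (continuous_pow n)).mul continuous_const).smul
      continuous_const).intervalIntegrable 0 1))]
  refine Finset.sum_congr rfl fun n _ => ?_
  have e : ∀ s : ℝ, ((-1:ℝ)^n * s^n * ((n.factorial:ℝ))⁻¹)
      = (((-1:ℝ)^n * ((n.factorial:ℝ))⁻¹)) * s^n := fun s => by ring
  simp only [e]
  rw [intervalIntegral.integral_smul_const, intervalIntegral.integral_const_mul, integral_pow]
  have hcoef : ((-1:ℝ)^n * ((n.factorial:ℝ))⁻¹) * (((1:ℝ)^(n+1) - 0^(n+1))/((n:ℝ)+1))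
      = (-1:ℝ)^n / (((n+1).factorial:ℝ)) := by
    rw [Nat.factorial_succ, one_pow, zero_pow (by omega)]
    have hf1 : (n.factorial : ℝ) ≠ 0 := Nat.cast_ne_zero.mpr (Nat.factorial_ne_zero n)
    have hf2 : ((n:ℝ)+1) ≠ 0 := by positivity
    push_cast
    field_simp
    ring
  rw [hcoef]

end Normed

/-- if `g : (a,b) → G` is `C¹`, `ξ̇(t) := g(t)⁻¹ ġ(t)` and
`C(t) := log(g(t)) ∈ 𝔤`, then `C` is `C¹` and for all `t ∈ (a,b)` one has
`ξ̇(t) ∈ 𝔤`, `Σ_{n=0}^{κ−1} ((−1)^n/(n+1)!) ad_{C(t)}^n Ċ(t) = ξ̇(t)`, and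
`∫₀¹ e^{−sC(t)} Ċ(t) e^{sC(t)} ds = ξ̇(t)`. -/
theorem stmt4 {A : Type*} [NormedRing A] [NormedAlgebra ℝ A] [FiniteDimensional ℝ A]
    (κ : ℕ) (𝔤 : Submodule ℝ A)
    (hmul : ∀ x ∈ 𝔤, ∀ y ∈ 𝔤, x * y ∈ 𝔤)
    (hcompl : IsCompl (Submodule.span ℝ ({1} : Set A)) 𝔤)
    (hnil : ∀ f : Fin (κ + 1) → A, (∀ i, f i ∈ 𝔤) → (List.ofFn f).prod = 0)
    (a b : ℝ) (hab : a < b) (g : ℝ → A)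
    (hg : ContDiffOn ℝ 1 g (Set.Ioo a b))
    (hgG : ∀ t ∈ Set.Ioo a b, g t - 1 ∈ 𝔤) :
    ContDiffOn ℝ 1 (fun t => logTrunc κ (g t - 1)) (Set.Ioo a b) ∧
    ∀ t ∈ Set.Ioo a b,
      Ring.inverse (g t) * deriv g t ∈ 𝔤 ∧
      (∑ n ∈ Finset.range κ, (((-1 : ℝ) ^ n / ((n + 1).factorial : ℝ)) •
          (fun y => (logTrunc κ (g t - 1)) * y - y * (logTrunc κ (g t - 1)))^[n]
            (deriv (fun u => logTrunc κ (g u - 1)) t))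
        = Ring.inverse (g t) * deriv g t) ∧
      ((∫ s in (0:ℝ)..1,
          expTrunc κ (-(s • logTrunc κ (g t - 1)))
            * deriv (fun u => logTrunc κ (g u - 1)) t
            * expTrunc κ (s • logTrunc κ (g t - 1)))
        = Ring.inverse (g t) * deriv g t) := by
  constructor
  · -- smoothness of C
    show ContDiffOn ℝ 1 (fun t => ∑ k ∈ Finset.Icc 1 κ, (((-1 : ℝ) ^ (k + 1)) / k) • (g t - 1) ^ k)
      (Set.Ioo a b)
    apply ContDiffOn.sum
    intro k _
    exact ((hg.sub contDiffOn_const).pow k).const_smul _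
  · intro t ht
    have hto : Set.Ioo a b ∈ nhds t := Ioo_mem_nhds ht.1 ht.2
    have hgdiff : DifferentiableAt ℝ g t := (hg.contDiffAt hto).differentiableAt one_ne_zero
    have hgd : HasDerivAt g (deriv g t) t := hgdiff.hasDerivAt
    have hxi : g t - 1 ∈ 𝔤 := hgG t ht
    have hclosed : IsClosed (𝔤 : Set A) := Submodule.closed_of_finiteDimensional 𝔤
    have hderiv_mem : deriv g t ∈ 𝔤 := by
      have hslope := hasDerivAt_iff_tendsto_slope.mp hgd
      refine hclosed.mem_of_tendsto hslope ?_
      filter_upwards [mem_nhdsWithin_of_mem_nhds hto] with y hy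
      show slope g t y ∈ 𝔤
      rw [slope_def_module]
      have hsub : g y - g t = (g y - 1) - (g t - 1) := by abel
      rw [hsub]
      exact Submodule.smul_mem _ _ (Submodule.sub_mem _ (hgG y hy) hxi)
    -- derivative of C
    have hxi' : HasDerivAt (fun u => g u - 1) (deriv g t) t := hgd.sub_const 1
    have hCd : HasDerivAt (fun u => logTrunc κ (g u - 1))
        (∑ k ∈ Finset.Icc 1 κ, (((-1 : ℝ) ^ (k + 1)) / k) •
          (∑ i ∈ Finset.range k, (g t - 1)^i * (deriv g t) * (g t - 1)^(k-1-i))) t := by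
      show HasDerivAt (fun u => ∑ k ∈ Finset.Icc 1 κ, (((-1 : ℝ) ^ (k + 1)) / k) • (g u - 1) ^ k) _ t
      exact HasDerivAt.fun_sum fun k _ => (myHasDerivPow hxi' k).fun_const_smul _
    set D := ∑ k ∈ Finset.Icc 1 κ, (((-1 : ℝ) ^ (k + 1)) / k) •
      (∑ i ∈ Finset.range k, (g t - 1)^i * (deriv g t) * (g t - 1)^(k-1-i)) with hDdef
    have hD : D ∈ 𝔤 := Submodule.sum_mem _ fun k _ => Submodule.smul_mem _ _
      (Submodule.sum_mem _ fun i _ => mySandMem hxi hderiv_mem hmul i (k-1-i))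
    set x := logTrunc κ (g t - 1) with hxdef
    have hx : x ∈ 𝔤 := myLogMem hxi hmul
    have hEL : ∀ u ∈ Set.Ioo a b, expTrunc κ (logTrunc κ (g u - 1)) = g u := by
      intro u hu
      rw [myExpLog hnil (hgG u hu)]
      abel
    have hVd : HasDerivAt (fun u => expTrunc κ (logTrunc κ (g u - 1)))
        (∑ k ∈ Finset.range (κ+1), ((k.factorial:ℝ))⁻¹ •
          (∑ i ∈ Finset.range k, x^i * D * x^(k-1-i))) t := by
      show HasDerivAt (fun u => ∑ k ∈ Finset.range (κ+1), ((k.factorial:ℝ))⁻¹ •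
        (logTrunc κ (g u - 1)) ^ k) _ t
      exact HasDerivAt.fun_sum fun k _ => (myHasDerivPow hCd k).fun_const_smul _
    have hev : g =ᶠ[nhds t] (fun u => expTrunc κ (logTrunc κ (g u - 1))) := by
      filter_upwards [hto] with u hu
      exact (hEL u hu).symm
    have hgV : HasDerivAt g (∑ k ∈ Finset.range (κ+1), ((k.factorial:ℝ))⁻¹ •
        (∑ i ∈ Finset.range k, x^i * D * x^(k-1-i))) t :=
      hVd.congr_of_eventuallyEq hev
    have hderiv_eq : deriv g t = ∑ k ∈ Finset.range (κ+1), ((k.factorial:ℝ))⁻¹ •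
        (∑ i ∈ Finset.range k, x^i * D * x^(k-1-i)) := hgd.unique hgV
    have hexp1 : expTrunc κ x * expTrunc κ (-x) = 1 := myEEN hnil hx
    have hexp2 : expTrunc κ (-x) * expTrunc κ x = 1 := by
      have := myEEN hnil (Submodule.neg_mem _ hx)
      rwa [neg_neg] at this
    have hgt : g t = expTrunc κ x := (hEL t ht).symm
    have hinv : Ring.inverse (g t) = expTrunc κ (-x) := by
      rw [hgt]
      exact Ring.inverse_unit ⟨expTrunc κ x, expTrunc κ (-x), hexp1, hexp2⟩
    have hmem : Ring.inverse (g t) * deriv g t ∈ 𝔤 := by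
      rw [hinv]
      have hη : expTrunc κ (-x) = 1 + ∑ l ∈ Finset.range κ, (((l+1).factorial:ℝ))⁻¹ • (-x)^(l+1) := by
        show (∑ l ∈ Finset.range (κ+1), ((l.factorial:ℝ))⁻¹ • (-x)^l) = _
        rw [Finset.sum_range_succ' (fun l => ((l.factorial:ℝ))⁻¹ • (-x)^l) κ]
        simp only [pow_zero, Nat.factorial_zero, Nat.cast_one, inv_one, one_smul]
        rw [add_comm]
      rw [hη, add_mul, one_mul]
      refine Submodule.add_mem _ hderiv_mem ?_
      rw [Finset.sum_mul]
      refine Submodule.sum_mem _ fun l _ => ?_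
      rw [smul_mul_assoc]
      exact Submodule.smul_mem _ _
        (hmul _ (myPowMem (Submodule.neg_mem _ hx) (by omega) hmul) _ hderiv_mem)
    refine ⟨hmem, ?_, ?_⟩
    · rw [hCd.deriv, hinv, hderiv_eq]
      exact (myL4 hnil hx hD).symm
    · rw [hCd.deriv, hinv, hderiv_eq]
      rw [myIntegral hnil hx hD]
      exact (myL4 hnil hx hD).symm
end

section
/- Let ξ ∈ C¹([0,T], 𝔤) and let g: [0,T] → 𝒜 be the solution of ġ(t) = g(t) ξ̇(t) with g(0) = 1 (then g(t) ∈ G for all t). Then for every t ∈ [0,T] and every a ∈ 𝒜: g(t) a g(t)⁻¹ = a + Σ_{k=1}^{κ} ∫_{0 ≤ s₁ ≤ ⋯ ≤ s_k ≤ t} (ad_{ξ̇(s₁)} ∘ ad_{ξ̇(s₂)} ∘ ⋯ ∘ ad_{ξ̇(s_k)})(a) ds₁ ⋯ ds_k. -/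
open MeasureTheory Topology Filter

/-- The ordered simplex `{0 ≤ s₁ ≤ s₂ ≤ ⋯ ≤ s_k ≤ t}` in `(Fin k → ℝ)`. -/
def orderedSimplex (k : ℕ) (t : ℝ) : Set (Fin k → ℝ) :=
  {s | (∀ i, s i ∈ Set.Icc (0:ℝ) t) ∧ ∀ i j : Fin k, i ≤ j → s i ≤ s j}

noncomputable section stmt7aux

variable {A : Type*} [NormedRing A] [NormedAlgebra ℝ A]

/-- `ad` as a continuous linear map. -/
def adL7 : A →L[ℝ] A →L[ℝ] A :=
  ContinuousLinearMap.mul ℝ A - (ContinuousLinearMap.mul ℝ A).flip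

@[simp] lemma adL7_apply (x y : A) : adL7 x y = x * y - y * x := rfl

lemma stmt7_prod_zero {κ : ℕ} {𝔤 : Submodule ℝ A}
    (hnil : ∀ f : Fin (κ + 1) → A, (∀ i, f i ∈ 𝔤) → (List.ofFn f).prod = 0)
    (l : List A) (hl : ∀ x ∈ l, x ∈ 𝔤) (hlen : κ + 1 ≤ l.length) : l.prod = 0 := by
  have hsplit : l = l.take (κ+1) ++ l.drop (κ+1) := (List.take_append_drop _ l).symm
  have hlen1 : (l.take (κ+1)).length = κ + 1 := by
    rw [List.length_take]; omega
  have h1 : (l.take (κ+1)).prod = 0 := by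
    have heq : List.ofFn ((l.take (κ+1)).get) =
        List.ofFn fun i : Fin (κ+1) => (l.take (κ+1)).get (Fin.cast hlen1.symm i) :=
      List.ofFn_congr hlen1 _
    have := hnil (fun i => (l.take (κ+1)).get (Fin.cast hlen1.symm i)) (fun i => by
      exact hl _ (List.take_subset _ _ (List.get_mem _ _)))
    rw [← this, ← heq, List.ofFn_get]
  rw [hsplit, List.prod_append, h1, zero_mul]

lemma stmt7_adchain {κ : ℕ} {𝔤 : Submodule ℝ A}
    (hcompl : IsCompl (Submodule.span ℝ ({1} : Set A)) 𝔤)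
    (hnil : ∀ f : Fin (κ + 1) → A, (∀ i, f i ∈ 𝔤) → (List.ofFn f).prod = 0)
    (l : List A) (hl : ∀ x ∈ l, x ∈ 𝔤) (hlen : l.length = κ + 1) :
    (l.map (adL7 (A := A))).prod = 0 := by
  classical
  -- the submodule spanned by products of at least `n` elements of `𝔤`
  set M : ℕ → Submodule ℝ A := fun n =>
    Submodule.span ℝ {w | ∃ m : List A, (∀ x ∈ m, x ∈ 𝔤) ∧ n ≤ m.length ∧ w = m.prod} with hM
  have hstep : ∀ (n : ℕ) (x : A), x ∈ 𝔤 → ∀ y ∈ M n, adL7 x y ∈ M (n + 1) := by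
    intro n x hx y hy
    induction hy using Submodule.span_induction with
    | mem w hw =>
      obtain ⟨m, hm, hmlen, rfl⟩ := hw
      have h1 : x * m.prod = (x :: m).prod := by simp
      have h2 : m.prod * x = (m ++ [x]).prod := by simp
      rw [adL7_apply, h1, h2]
      refine sub_mem (Submodule.subset_span ?_) (Submodule.subset_span ?_)
      · refine ⟨x :: m, ?_, by simp; omega, rfl⟩
        intro w hw
        rcases List.mem_cons.1 hw with rfl | hw
        · exact hx
        · exact hm _ hw
      · refine ⟨m ++ [x], ?_, by simp; omega, rfl⟩
        intro w hw
        rcases List.mem_append.1 hw with hw | hw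
        · exact hm _ hw
        · simp at hw; subst hw; exact hx
    | zero => simp
    | add a b _ _ ha hb => rw [map_add]; exact add_mem ha hb
    | smul c a _ ha => rw [_root_.map_smul]; exact Submodule.smul_mem _ _ ha
  have hbase : ∀ (x : A), x ∈ 𝔤 → ∀ a : A, adL7 x a ∈ M 2 := by
    intro x hx a
    have ha : a ∈ Submodule.span ℝ ({1} : Set A) ⊔ 𝔤 := by
      rw [hcompl.sup_eq_top]; trivial
    obtain ⟨y, hy, z, hz, rfl⟩ := Submodule.mem_sup.1 ha
    obtain ⟨c, rfl⟩ := Submodule.mem_span_singleton.1 hy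
    have : adL7 x (c • (1:A) + z) = adL7 x z := by
      rw [map_add, _root_.map_smul]
      simp
    rw [this, adL7_apply]
    refine sub_mem (Submodule.subset_span ?_) (Submodule.subset_span ?_)
    · refine ⟨[x, z], ?_, by simp, by simp⟩
      intro w hw; simp at hw; rcases hw with rfl | rfl
      · exact hx
      · exact hz
    · refine ⟨[z, x], ?_, by simp, by simp⟩
      intro w hw; simp at hw; rcases hw with rfl | rfl
      · exact hz
      · exact hx
  have hchain : ∀ (l : List A), (∀ x ∈ l, x ∈ 𝔤) → l ≠ [] → ∀ a : A,
      ((l.map (adL7 (A := A))).prod) a ∈ M (l.length + 1) := by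
    intro l
    induction l with
    | nil => intro _ h; exact absurd rfl h
    | cons x xs ih =>
      intro hmem _ a
      have hx : x ∈ 𝔤 := hmem x (by simp)
      rcases xs with _ | ⟨y, ys⟩
      · simpa using hbase x hx a
      · have hxs : ∀ w ∈ y :: ys, w ∈ 𝔤 := fun w hw => hmem w (by simp [hw])
        have h1 := ih hxs (by simp) a
        have : (((x :: y :: ys).map (adL7 (A := A))).prod) a
            = adL7 x ((((y :: ys).map (adL7 (A := A))).prod) a) := by
          simp [ContinuousLinearMap.mul_apply]
        rw [this]
        exact hstep _ x hx _ h1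
  have hMtop : M (κ + 2) = ⊥ := by
    rw [hM]
    apply Submodule.span_eq_bot.2
    rintro w ⟨m, hm, hmlen, rfl⟩
    exact stmt7_prod_zero hnil m hm (by omega)
  ext a
  have h := hchain l hl (by rintro rfl; simp at hlen) a
  rw [hlen] at h
  rw [hMtop] at h
  simpa using h

variable [CompleteSpace A]

/-- Iterated integrals, defined recursively. -/
def Gfun7 (ξ₂ : ℝ → A) : ℕ → ℝ → (A →L[ℝ] A)
  | 0 => fun _ => 1
  | (k+1) => fun t => ∫ u in (0:ℝ)..t, Gfun7 ξ₂ k u * adL7 (ξ₂ u)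

lemma Gfun7_cont {ξ₂ : ℝ → A} (hξ₂ : Continuous ξ₂) (k : ℕ) :
    Continuous (Gfun7 ξ₂ k) := by
  induction k with
  | zero => exact continuous_const
  | succ k ih =>
    have hint : Continuous fun u => Gfun7 ξ₂ k u * adL7 (ξ₂ u) :=
      ih.mul (adL7.continuous.comp hξ₂)
    exact intervalIntegral.continuous_primitive
      (fun a b => hint.intervalIntegrable a b) 0

set_option synthInstance.maxHeartbeats 400000 in
lemma Gfun7_deriv {ξ₂ : ℝ → A} (hξ₂ : Continuous ξ₂) (k : ℕ) (t : ℝ) :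
    HasDerivAt (Gfun7 ξ₂ (k+1)) (Gfun7 ξ₂ k t * adL7 (ξ₂ t)) t := by
  have hint : Continuous fun u => Gfun7 ξ₂ k u * adL7 (ξ₂ u) :=
    (Gfun7_cont hξ₂ k).mul (adL7.continuous.comp hξ₂)
  exact intervalIntegral.integral_hasDerivAt_right
    (hint.intervalIntegrable 0 t)
    hint.stronglyMeasurable.stronglyMeasurableAtFilter
    hint.continuousAt

lemma Gfun7_zero (ξ₂ : ℝ → A) (k : ℕ) : Gfun7 ξ₂ (k+1) 0 = 0 := by
  simp [Gfun7]

lemma Gfun7_vanish {κ : ℕ} {𝔤 : Submodule ℝ A}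
    (hcompl : IsCompl (Submodule.span ℝ ({1} : Set A)) 𝔤)
    (hnil : ∀ f : Fin (κ + 1) → A, (∀ i, f i ∈ 𝔤) → (List.ofFn f).prod = 0)
    {ξ₂ : ℝ → A} (hξ₂ : Continuous ξ₂) (hmem : ∀ u, ξ₂ u ∈ 𝔤) :
    ∀ (k : ℕ) (l : List A), (∀ x ∈ l, x ∈ 𝔤) → k + l.length = κ + 1 →
      ∀ t, Gfun7 ξ₂ k t * (l.map (adL7 (A := A))).prod = 0 := by
  intro k
  induction k with
  | zero =>
    intro l hl hlen t
    have : Gfun7 ξ₂ 0 t = 1 := rfl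
    rw [this, one_mul]
    exact stmt7_adchain hcompl hnil l hl (by omega)
  | succ k ih =>
    intro l hl hlen t
    have hint : Continuous fun u => Gfun7 ξ₂ k u * adL7 (ξ₂ u) :=
      (Gfun7_cont hξ₂ k).mul (adL7.continuous.comp hξ₂)
    have hG : Gfun7 ξ₂ (k+1) t = ∫ u in (0:ℝ)..t, Gfun7 ξ₂ k u * adL7 (ξ₂ u) := rfl
    set W : A →L[ℝ] A := (l.map (adL7 (A := A))).prod with hW
    have hR : ∀ v : A →L[ℝ] A, (ContinuousLinearMap.compL ℝ A A A).flip W v = v * W :=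
      fun v => rfl
    rw [hG, ← hR, ← ((ContinuousLinearMap.compL ℝ A A A).flip W).intervalIntegral_comp_comm
      (hint.intervalIntegrable 0 t)]
    have : ∀ u, (ContinuousLinearMap.compL ℝ A A A).flip W (Gfun7 ξ₂ k u * adL7 (ξ₂ u))
        = 0 := by
      intro u
      rw [hR, mul_assoc]
      have : adL7 (ξ₂ u) * W = ((ξ₂ u :: l).map (adL7 (A := A))).prod := by simp [hW]
      rw [this]
      exact ih _ (by
        intro x hx
        rcases List.mem_cons.1 hx with rfl | hx
        · exact hmem u
        · exact hl _ hx) (by simp; omega) u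
    simp [this]

lemma simplex_isClosed (k : ℕ) (t : ℝ) : IsClosed (orderedSimplex k t) := by
  have h1 : orderedSimplex k t =
      (⋂ i, {s : Fin k → ℝ | 0 ≤ s i}) ∩ (⋂ i, {s : Fin k → ℝ | s i ≤ t}) ∩
        ⋂ i, ⋂ j, {s : Fin k → ℝ | i ≤ j → s i ≤ s j} := by
    ext s
    simp only [orderedSimplex, Set.mem_setOf_eq, Set.mem_inter_iff, Set.mem_iInter,
      Set.mem_Icc, forall_and]
  rw [h1]
  refine (IsClosed.inter (IsClosed.inter ?_ ?_) ?_)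
  · exact isClosed_iInter fun i => isClosed_le continuous_const (continuous_apply i)
  · exact isClosed_iInter fun i => isClosed_le (continuous_apply i) continuous_const
  · refine isClosed_iInter fun i => isClosed_iInter fun j => ?_
    by_cases hij : i ≤ j
    · have : {s : Fin k → ℝ | i ≤ j → s i ≤ s j} = {s | s i ≤ s j} := by ext s; simp [hij]
      rw [this]; exact isClosed_le (continuous_apply i) (continuous_apply j)
    · have : {s : Fin k → ℝ | i ≤ j → s i ≤ s j} = Set.univ := by ext s; simp [hij]
      rw [this]; exact isClosed_univ

lemma simplex_isCompact (k : ℕ) (t : ℝ) : IsCompact (orderedSimplex k t) := by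
  have hK : IsCompact (Set.univ.pi fun _ : Fin k => Set.Icc (0:ℝ) t) :=
    isCompact_univ_pi fun _ => isCompact_Icc
  refine IsCompact.of_isClosed_subset hK (simplex_isClosed k t) ?_
  intro s hs
  rw [Set.mem_univ_pi]
  exact fun i => hs.1 i

lemma simplex_measurableSet (k : ℕ) (t : ℝ) : MeasurableSet (orderedSimplex k t) :=
  (simplex_isClosed k t).measurableSet

lemma phi_cont {ξ₂ : ℝ → A} (hξ₂ : Continuous ξ₂) (k : ℕ) :
    Continuous fun s : Fin k → ℝ => (List.ofFn fun i => adL7 (ξ₂ (s i))).prod := by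
  simp only [List.ofFn_eq_map]
  exact continuous_list_prod _ fun i _ => adL7.continuous.comp (hξ₂.comp (continuous_apply i))

lemma snoc_mem_simplex_iff {k : ℕ} {t : ℝ} (s : Fin k → ℝ) (u : ℝ) :
    Fin.snoc s u ∈ orderedSimplex (k+1) t ↔ u ∈ Set.Icc 0 t ∧ s ∈ orderedSimplex k u := by
  constructor
  · rintro ⟨h1, h2⟩
    have hu : u ∈ Set.Icc (0:ℝ) t := by
      have := h1 (Fin.last k); rwa [Fin.snoc_last] at this
    refine ⟨hu, fun i => ?_, fun i j hij => ?_⟩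
    · have h0 := (h1 i.castSucc).1
      rw [Fin.snoc_castSucc] at h0
      have hle := h2 i.castSucc (Fin.last k) (Fin.le_last _)
      rw [Fin.snoc_castSucc, Fin.snoc_last] at hle
      exact ⟨h0, hle⟩
    · have := h2 i.castSucc j.castSucc (by rwa [Fin.castSucc_le_castSucc_iff])
      rwa [Fin.snoc_castSucc, Fin.snoc_castSucc] at this
  · rintro ⟨hu, hs1, hs2⟩
    constructor
    · intro i
      refine Fin.lastCases ?_ (fun j => ?_) i
      · rw [Fin.snoc_last]; exact hu
      · rw [Fin.snoc_castSucc]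
        exact ⟨(hs1 j).1, le_trans (hs1 j).2 hu.2⟩
    · intro i j
      refine Fin.lastCases ?_ (fun j' => ?_) j <;> intro hij
      · rw [Fin.snoc_last]
        refine Fin.lastCases ?_ (fun i' => ?_) i
        · rw [Fin.snoc_last]
        · rw [Fin.snoc_castSucc]; exact (hs1 i').2
      · revert hij
        refine Fin.lastCases ?_ (fun i' => ?_) i <;> intro hij
        · exact absurd hij (Fin.castSucc_lt_last j').not_ge
        · rw [Fin.snoc_castSucc, Fin.snoc_castSucc]
          exact hs2 i' j' (by rwa [Fin.castSucc_le_castSucc_iff] at hij)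

lemma hPhi_snoc {ξ₂ : ℝ → A} (k : ℕ) (s : Fin k → ℝ) (u : ℝ) :
    (List.ofFn fun i : Fin (k+1) => adL7 (ξ₂ (Fin.snoc (α := fun _ => ℝ) s u i))).prod
      = (List.ofFn fun i : Fin k => adL7 (ξ₂ (s i))).prod * adL7 (ξ₂ u) := by
  rw [List.ofFn_succ', List.prod_concat]
  simp

lemma Gfun7_eq_simplex {ξ₂ : ℝ → A} (hξ₂ : Continuous ξ₂) :
    ∀ (k : ℕ) (t : ℝ), 0 ≤ t →
      Gfun7 ξ₂ k t
        = ∫ s in orderedSimplex k t, (List.ofFn fun i => adL7 (ξ₂ (s i))).prod := by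
  intro k
  induction k with
  | zero =>
    intro t _
    have huniv : orderedSimplex 0 t = Set.univ := by
      ext s
      simp [orderedSimplex]
    have hvol : (volume : Measure (Fin 0 → ℝ)) Set.univ = 1 := by
      simp [volume_pi, Measure.pi_univ]
    rw [huniv, Measure.restrict_univ]
    have hconst : (fun s : Fin 0 → ℝ => (List.ofFn fun i => adL7 (ξ₂ (s i))).prod)
        = fun _ => (1 : A →L[ℝ] A) := by funext s; simp
    show (1 : A →L[ℝ] A) = _
    rw [hconst, MeasureTheory.integral_const, measureReal_def, hvol]
    simp
  | succ k ih =>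
    intro t ht
    -- notation
    set Φ : (Fin k → ℝ) → (A →L[ℝ] A) :=
      fun s => (List.ofFn fun i => adL7 (ξ₂ (s i))).prod with hΦ
    have hΦcont : Continuous Φ := phi_cont hξ₂ k
    have hΦint : ∀ u : ℝ, IntegrableOn Φ (orderedSimplex k u) :=
      fun u => hΦcont.continuousOn.integrableOn_compact (simplex_isCompact k u)
    have hmulW : ∀ (W v : A →L[ℝ] A), (ContinuousLinearMap.compL ℝ A A A).flip W v = v * W :=
      fun _ _ => rfl
    -- step 2 : pull right-multiplication into the set integral
    have h2 : ∀ u : ℝ,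
        (∫ s in orderedSimplex k u, Φ s) * adL7 (ξ₂ u)
          = ∫ s in orderedSimplex k u, Φ s * adL7 (ξ₂ u) := by
      intro u
      rw [← hmulW (adL7 (ξ₂ u)),
        ← ((ContinuousLinearMap.compL ℝ A A A).flip (adL7 (ξ₂ u))).integral_comp_comm (hΦint u)]
      rfl
    -- the product-space set
    set Tset : Set (ℝ × (Fin k → ℝ)) :=
      {p | p.1 ∈ Set.Icc 0 t ∧ p.2 ∈ orderedSimplex k p.1} with hTset
    have hTclosed : IsClosed Tset := by
      have h1 : Tset = {p : ℝ × (Fin k → ℝ) | 0 ≤ p.1} ∩ {p | p.1 ≤ t} ∩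
          (⋂ i, {p : ℝ × (Fin k → ℝ) | 0 ≤ p.2 i}) ∩
          (⋂ i, {p : ℝ × (Fin k → ℝ) | p.2 i ≤ p.1}) ∩
          ⋂ i, ⋂ j, {p : ℝ × (Fin k → ℝ) | i ≤ j → p.2 i ≤ p.2 j} := by
        ext p
        simp only [hTset, orderedSimplex, Set.mem_setOf_eq, Set.mem_inter_iff, Set.mem_iInter,
          Set.mem_Icc, forall_and]
        tauto
      rw [h1]
      refine IsClosed.inter (IsClosed.inter (IsClosed.inter (IsClosed.inter ?_ ?_) ?_) ?_) ?_
      · exact isClosed_le continuous_const continuous_fst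
      · exact isClosed_le continuous_fst continuous_const
      · exact isClosed_iInter fun i =>
          isClosed_le continuous_const ((continuous_apply i).comp continuous_snd)
      · exact isClosed_iInter fun i =>
          isClosed_le ((continuous_apply i).comp continuous_snd) continuous_fst
      · refine isClosed_iInter fun i => isClosed_iInter fun j => ?_
        by_cases hij : i ≤ j
        · have : {p : ℝ × (Fin k → ℝ) | i ≤ j → p.2 i ≤ p.2 j}
              = {p : ℝ × (Fin k → ℝ) | p.2 i ≤ p.2 j} := by ext p; simp [hij]
          rw [this]
          exact isClosed_le ((continuous_apply i).comp continuous_snd)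
            ((continuous_apply j).comp continuous_snd)
        · have : {p : ℝ × (Fin k → ℝ) | i ≤ j → p.2 i ≤ p.2 j} = Set.univ := by
            ext p; simp [hij]
          rw [this]; exact isClosed_univ
    have hTcompact : IsCompact Tset := by
      have hK : IsCompact ((Set.Icc (0:ℝ) t) ×ˢ (Set.univ.pi fun _ : Fin k => Set.Icc (0:ℝ) t)) :=
        isCompact_Icc.prod (isCompact_univ_pi fun _ => isCompact_Icc)
      refine IsCompact.of_isClosed_subset hK hTclosed ?_
      rintro ⟨u, s⟩ ⟨hu, hs⟩
      refine ⟨hu, ?_⟩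
      rw [Set.mem_univ_pi]
      exact fun i => ⟨(hs.1 i).1, le_trans (hs.1 i).2 hu.2⟩
    have hTmeas : MeasurableSet Tset := hTclosed.measurableSet
    set F : ℝ × (Fin k → ℝ) → (A →L[ℝ] A) := fun p => Φ p.2 * adL7 (ξ₂ p.1) with hF
    have hFcont : Continuous F :=
      (hΦcont.comp continuous_snd).mul (adL7.continuous.comp (hξ₂.comp continuous_fst))
    have hFind : Integrable (Tset.indicator F) ((volume : Measure ℝ).prod volume) :=
      (hFcont.continuousOn.integrableOn_compact hTcompact).integrable_indicator hTmeas
    -- step 3 : measure preserving reduction of the simplex integral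
    have hmp := (volume_preserving_piFinSuccAbove (fun _ : Fin (k+1) => ℝ) (Fin.last k)).symm
    set e := MeasurableEquiv.piFinSuccAbove (fun _ : Fin (k+1) => ℝ) (Fin.last k) with he
    have hesymm : ∀ p : ℝ × (Fin k → ℝ), ⇑(e.symm) p = Fin.snoc p.2 p.1 := by
      rintro ⟨u, s⟩
      simp only [he, MeasurableEquiv.piFinSuccAbove_symm_apply, Fin.insertNthEquiv_apply]
      exact Fin.insertNth_last' u s
    have hpre : e.symm ⁻¹' (orderedSimplex (k+1) t) = Tset := by
      ext p
      rw [Set.mem_preimage, hesymm p]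
      exact snoc_mem_simplex_iff p.2 p.1
    have step3 :
        (∫ s in orderedSimplex (k+1) t,
            (List.ofFn fun i : Fin (k+1) => adL7 (ξ₂ (s i))).prod)
          = ∫ p in Tset, F p ∂((volume : Measure ℝ).prod volume) := by
      rw [← hmp.setIntegral_preimage_emb e.symm.measurableEmbedding _ _, hpre]
      apply setIntegral_congr_fun hTmeas
      intro p _
      show (List.ofFn fun i => adL7 (ξ₂ (e.symm p i))).prod = F p
      rw [hesymm p]
      exact hPhi_snoc k p.2 p.1
    -- step 5 : Fubini
    have step5 : (∫ p in Tset, F p ∂((volume : Measure ℝ).prod volume))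
        = ∫ u in (0:ℝ)..t, ∫ s in orderedSimplex k u, F (u, s) := by
      rw [← integral_indicator hTmeas, integral_prod _ hFind]
      have hinner : ∀ u : ℝ, (∫ s, Tset.indicator F (u, s))
          = (Set.Icc (0:ℝ) t).indicator
              (fun u => ∫ s in orderedSimplex k u, F (u, s)) u := by
        intro u
        by_cases hu : u ∈ Set.Icc (0:ℝ) t
        · rw [Set.indicator_of_mem hu]
          have : (fun s => Tset.indicator F (u, s))
              = (orderedSimplex k u).indicator (fun s => F (u, s)) := by
            funext s
            by_cases hs : s ∈ orderedSimplex k u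
            · rw [Set.indicator_of_mem hs,
                Set.indicator_of_mem (show (u,s) ∈ Tset from ⟨hu, hs⟩)]
            · rw [Set.indicator_of_notMem hs,
                Set.indicator_of_notMem (fun h => hs h.2)]
          rw [this, integral_indicator (simplex_measurableSet k u)]
        · rw [Set.indicator_of_notMem hu]
          have : (fun s => Tset.indicator F (u, s)) = fun _ => 0 :=
            funext fun s => Set.indicator_of_notMem (fun h => hu h.1) _
          rw [this, integral_zero]
      simp only [hinner]
      rw [integral_indicator measurableSet_Icc, integral_Icc_eq_integral_Ioc,
        ← intervalIntegral.integral_of_le ht]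
    have h1 : Gfun7 ξ₂ (k+1) t
        = ∫ u in (0:ℝ)..t, (∫ s in orderedSimplex k u, Φ s) * adL7 (ξ₂ u) := by
      show (∫ u in (0:ℝ)..t, Gfun7 ξ₂ k u * adL7 (ξ₂ u)) = _
      apply intervalIntegral.integral_congr
      intro u hu
      rw [Set.uIcc_of_le ht] at hu
      show Gfun7 ξ₂ k u * adL7 (ξ₂ u) = (∫ s in orderedSimplex k u, Φ s) * adL7 (ξ₂ u)
      rw [ih u hu.1]
    rw [h1, step3, step5]
    apply intervalIntegral.integral_congr
    intro u _
    show (∫ s in orderedSimplex k u, Φ s) * adL7 (ξ₂ u) = _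
    exact h2 u

lemma foldr_eq_prod_apply (k : ℕ) :
    ∀ (m : Fin k → (A →L[ℝ] A)) (a : A),
      ((List.ofFn fun i => (⇑(m i) : A → A)).foldr (· ∘ ·) id) a = (List.ofFn m).prod a := by
  induction k with
  | zero => intro m a; simp
  | succ k ih =>
    intro m a
    rw [List.ofFn_succ (f := fun i => (⇑(m i) : A → A)), List.ofFn_succ (f := m),
      List.foldr_cons, List.prod_cons, Function.comp_apply, ContinuousLinearMap.mul_apply,
      ih (fun i => m i.succ) a]

end stmt7aux

/-- if `ξ ∈ C¹([0,T],𝔤)` and `g` solves `ġ(t) = g(t) ξ̇(t)`, `g(0) = 1`,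
then for all `a ∈ 𝒜`,
`g(t) a g(t)⁻¹ = a + Σ_{k=1}^{κ} ∫_{0 ≤ s₁ ≤ ⋯ ≤ s_k ≤ t}
  (ad_{ξ̇(s₁)} ∘ ⋯ ∘ ad_{ξ̇(s_k)})(a) ds`. -/
theorem stmt7 {A : Type*} [NormedRing A] [NormedAlgebra ℝ A] [FiniteDimensional ℝ A]
    (κ : ℕ) (𝔤 : Submodule ℝ A)
    (hmul : ∀ x ∈ 𝔤, ∀ y ∈ 𝔤, x * y ∈ 𝔤)
    (hcompl : IsCompl (Submodule.span ℝ ({1} : Set A)) 𝔤)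
    (hnil : ∀ f : Fin (κ + 1) → A, (∀ i, f i ∈ 𝔤) → (List.ofFn f).prod = 0)
    (T : ℝ) (hT : 0 < T) (ξ ξ' g : ℝ → A)
    (hξmem : ∀ t ∈ Set.Icc (0:ℝ) T, ξ t ∈ 𝔤)
    (hξ : ∀ t ∈ Set.Icc (0:ℝ) T, HasDerivWithinAt ξ (ξ' t) (Set.Icc 0 T) t)
    (hξ'cont : ContinuousOn ξ' (Set.Icc 0 T))
    (hg0 : g 0 = 1)
    (hg : ∀ t ∈ Set.Icc (0:ℝ) T, HasDerivWithinAt g (g t * ξ' t) (Set.Icc 0 T) t) :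
    ∀ t ∈ Set.Icc (0:ℝ) T, ∀ a : A,
      g t * a * Ring.inverse (g t)
        = a + ∑ k ∈ Finset.Icc 1 κ,
            ∫ s in orderedSimplex k t,
              ((List.ofFn fun i : Fin k =>
                  (fun y : A => ξ' (s i) * y - y * ξ' (s i))).foldr (· ∘ ·) id) a := by
  have hcomplete : CompleteSpace A := FiniteDimensional.complete ℝ A
  -- the clamped derivative
  set c : ℝ → ℝ := fun u => max 0 (min u T) with hcdef
  have hccont : Continuous c := continuous_const.max (continuous_id.min continuous_const)
  have hcmem : ∀ u, c u ∈ Set.Icc (0:ℝ) T :=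
    fun u => ⟨le_max_left _ _, max_le (le_of_lt hT) (min_le_right _ _)⟩
  have hcid : ∀ u ∈ Set.Icc (0:ℝ) T, c u = u := by
    intro u hu
    show max 0 (min u T) = u
    rw [min_eq_left hu.2, max_eq_right hu.1]
  set ξ₂ : ℝ → A := fun u => ξ' (c u) with hξ₂def
  have hξ₂cont : Continuous ξ₂ := hξ'cont.comp_continuous hccont hcmem
  have hξ₂eq : ∀ u ∈ Set.Icc (0:ℝ) T, ξ₂ u = ξ' u := by
    intro u hu
    show ξ' (c u) = ξ' u
    rw [hcid u hu]
  -- ξ' takes values in 𝔤 on [0, T]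
  have hclosed : IsClosed (𝔤 : Set A) := Submodule.closed_of_finiteDimensional 𝔤
  have hξ'mem : ∀ u ∈ Set.Icc (0:ℝ) T, ξ' u ∈ 𝔤 := by
    intro u hu
    have hslope := hasDerivWithinAt_iff_tendsto_slope.1 (hξ u hu)
    have hne : (𝓝[Set.Icc (0:ℝ) T \ {u}] u).NeBot := by
      rw [← mem_closure_iff_nhdsWithin_neBot]
      rcases eq_or_lt_of_le hu.2 with h | h
      · have hsub : Set.Ioo (0:ℝ) T ⊆ Set.Icc (0:ℝ) T \ {u} := by
          intro x hx
          refine ⟨⟨le_of_lt hx.1, le_of_lt hx.2⟩, ?_⟩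
          simp only [Set.mem_singleton_iff]
          rw [h]
          exact ne_of_lt hx.2
        refine closure_mono hsub ?_
        rw [closure_Ioo (ne_of_lt hT)]
        exact ⟨hu.1, hu.2⟩
      · have hsub : Set.Ioo u T ⊆ Set.Icc (0:ℝ) T \ {u} := fun x hx =>
          ⟨⟨le_trans hu.1 (le_of_lt hx.1), le_of_lt hx.2⟩, ne_of_gt hx.1⟩
        refine closure_mono hsub ?_
        rw [closure_Ioo (ne_of_lt h)]
        exact ⟨le_refl _, hu.2⟩
    refine hclosed.mem_of_tendsto hslope ?_
    filter_upwards [self_mem_nhdsWithin] with v hv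
    have : slope ξ u v = (v - u)⁻¹ • (ξ v - ξ u) := slope_def_module ξ u v
    rw [this]
    exact Submodule.smul_mem _ _ (sub_mem (hξmem v hv.1) (hξmem u hu))
  have hξ₂mem : ∀ u, ξ₂ u ∈ 𝔤 := fun u => hξ'mem (c u) (hcmem u)
  -- g basics
  have hgcont : ContinuousOn g (Set.Icc 0 T) := fun u hu => (hg u hu).continuousWithinAt
  have hg2 : ∀ u ∈ Set.Icc (0:ℝ) T, HasDerivWithinAt g (g u * ξ₂ u) (Set.Icc 0 T) u := by
    intro u hu
    have := hg u hu
    rwa [← hξ₂eq u hu] at this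
  have hideal : ∀ (b : A), ∀ x ∈ 𝔤, b * x ∈ 𝔤 := by
    intro b x hx
    have hb : b ∈ Submodule.span ℝ ({1} : Set A) ⊔ 𝔤 := by rw [hcompl.sup_eq_top]; trivial
    obtain ⟨y, hy, z, hz, rfl⟩ := Submodule.mem_sup.1 hb
    obtain ⟨r, rfl⟩ := Submodule.mem_span_singleton.1 hy
    have : (r • (1:A) + z) * x = r • x + z * x := by
      rw [add_mul, smul_mul_assoc, one_mul]
    rw [this]
    exact add_mem (Submodule.smul_mem _ _ hx) (hmul z hz x hx)
  -- the projection onto 𝔤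
  set P : A →L[ℝ] A :=
    LinearMap.toContinuousLinearMap (𝔤.subtype.comp (𝔤.linearProjOfIsCompl _ hcompl.symm))
    with hPdef
  have hPid : ∀ x, x ∈ 𝔤 → P x = x := by
    intro x hx
    have h1 : (𝔤.linearProjOfIsCompl _ hcompl.symm) x = ⟨x, hx⟩ :=
      Submodule.linearProjOfIsCompl_apply_left hcompl.symm ⟨x, hx⟩
    show ((𝔤.linearProjOfIsCompl _ hcompl.symm) x : A) = x
    rw [h1]
  have hPmem : ∀ x, P x ∈ 𝔤 := fun x => ((𝔤.linearProjOfIsCompl _ hcompl.symm) x).2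
  -- g u - 1 ∈ 𝔤
  have hgmem : ∀ u ∈ Set.Icc (0:ℝ) T, g u - 1 ∈ 𝔤 := by
    intro u hu
    have hsub : Set.Icc (0:ℝ) u ⊆ Set.Icc (0:ℝ) T := Set.Icc_subset_Icc le_rfl hu.2
    have hcont' : ContinuousOn g (Set.Icc 0 u) := hgcont.mono hsub
    have hintg : IntervalIntegrable (fun x => g x * ξ₂ x) volume 0 u := by
      apply ContinuousOn.intervalIntegrable
      rw [Set.uIcc_of_le hu.1]
      exact (hcont'.mul (hξ₂cont.continuousOn)).mono (le_refl _)
    have hderiv : ∀ x ∈ Set.Ioo (0:ℝ) u, HasDerivWithinAt g (g x * ξ₂ x) (Set.Ioi x) x := by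
      intro x hx
      have hxIcc : x ∈ Set.Icc (0:ℝ) T := ⟨le_of_lt hx.1, le_trans (le_of_lt hx.2) hu.2⟩
      have hnhds : Set.Icc (0:ℝ) T ∈ 𝓝 x :=
        Icc_mem_nhds hx.1 (lt_of_lt_of_le hx.2 hu.2)
      exact ((hg2 x hxIcc).hasDerivAt hnhds).hasDerivWithinAt
    have hFTC := intervalIntegral.integral_eq_sub_of_hasDeriv_right_of_le hu.1 hcont'
      hderiv hintg
    rw [hg0] at hFTC
    have hPI := P.intervalIntegral_comp_comm hintg
    have hmemi : ∀ x ∈ Set.uIcc (0:ℝ) u, P (g x * ξ₂ x) = g x * ξ₂ x := by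
      intro x _
      exact hPid _ (hideal (g x) _ (hξ₂mem x))
    have hcongr : (∫ x in (0:ℝ)..u, P (g x * ξ₂ x)) = ∫ x in (0:ℝ)..u, g x * ξ₂ x :=
      intervalIntegral.integral_congr hmemi
    have : P (g u - 1) = g u - 1 := by
      rw [← hFTC, ← hPI, hcongr]
    rw [← this]
    exact hPmem _
  have hunit : ∀ u ∈ Set.Icc (0:ℝ) T, IsUnit (g u) := by
    intro u hu
    have hη : IsNilpotent (g u - 1) := by
      refine ⟨κ+1, ?_⟩
      have := stmt7_prod_zero hnil (List.replicate (κ+1) (g u - 1))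
        (fun x hx => by rw [List.eq_of_mem_replicate hx]; exact hgmem u hu) (by simp)
      simpa [List.prod_replicate] using this
    have h1 := hη.isUnit_one_add
    have h2 : 1 + (g u - 1) = g u := by abel
    rwa [h2] at h1
  -- derivative of the inverse
  have hhd : ∀ u ∈ Set.Icc (0:ℝ) T,
      HasDerivWithinAt (fun v => Ring.inverse (g v))
        (-(ξ₂ u * Ring.inverse (g u))) (Set.Icc 0 T) u := by
    intro u hu
    obtain ⟨w, hw⟩ := hunit u hu
    have hdR := hasFDerivAt_ringInverse (𝕜 := ℝ) w
    rw [hw] at hdR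
    have hcomp := hdR.comp_hasDerivWithinAt u (hg2 u hu)
    have hwinv : (↑w⁻¹ : A) = Ring.inverse (g u) := by rw [← hw, Ring.inverse_unit]
    have hval : (-(ContinuousLinearMap.mulLeftRight ℝ A ↑w⁻¹ ↑w⁻¹)) (g u * ξ₂ u)
        = -(ξ₂ u * Ring.inverse (g u)) := by
      rw [ContinuousLinearMap.neg_apply, ContinuousLinearMap.mulLeftRight_apply, hwinv]
      have : Ring.inverse (g u) * (g u * ξ₂ u) * Ring.inverse (g u)
          = ξ₂ u * Ring.inverse (g u) := by
        rw [← mul_assoc, Ring.inverse_mul_cancel _ (hunit u hu), one_mul]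
      rw [this]
    rwa [hval] at hcomp
  have hhcont : ContinuousOn (fun v => Ring.inverse (g v)) (Set.Icc 0 T) :=
    fun u hu => (hhd u hu).continuousWithinAt
  -- the operator-valued curves
  set Lm : A →L[ℝ] (A →L[ℝ] A) := ContinuousLinearMap.mul ℝ A with hLm
  set Rm : A →L[ℝ] (A →L[ℝ] A) := (ContinuousLinearMap.mul ℝ A).flip with hRm
  set Ad : ℝ → (A →L[ℝ] A) := fun u => Lm (Ring.inverse (g u)) * Rm (g u) with hAd
  set V : ℝ → (A →L[ℝ] A) := fun u => ∑ j ∈ Finset.range (κ+1), Gfun7 ξ₂ j u with hV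
  have hVeq : V = fun u => (∑ j ∈ Finset.range κ, Gfun7 ξ₂ (j+1) u) + 1 := by
    funext u
    show (∑ j ∈ Finset.range (κ+1), Gfun7 ξ₂ j u) = _
    rw [Finset.sum_range_succ']
    rfl
  have hVd : ∀ u, HasDerivAt V (V u * adL7 (ξ₂ u)) u := by
    intro u
    have hd1 : HasDerivAt V (∑ j ∈ Finset.range κ, Gfun7 ξ₂ j u * adL7 (ξ₂ u)) u := by
      rw [hVeq]
      exact (HasDerivAt.fun_sum fun j _ => Gfun7_deriv hξ₂cont j u).add_const 1
    have h0 : V u * adL7 (ξ₂ u) = ∑ j ∈ Finset.range (κ+1), Gfun7 ξ₂ j u * adL7 (ξ₂ u) := by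
      show (∑ j ∈ Finset.range (κ+1), Gfun7 ξ₂ j u) * adL7 (ξ₂ u) = _
      rw [Finset.sum_mul]
    have hvan := Gfun7_vanish hcompl hnil hξ₂cont hξ₂mem κ [ξ₂ u]
      (by intro x hx; simp at hx; subst hx; exact hξ₂mem u) (by simp)
    have h1 : ∑ j ∈ Finset.range (κ+1), Gfun7 ξ₂ j u * adL7 (ξ₂ u)
        = ∑ j ∈ Finset.range κ, Gfun7 ξ₂ j u * adL7 (ξ₂ u) := by
      rw [Finset.sum_range_succ]
      have hvan' := hvan u
      simp only [List.map_cons, List.map_nil, List.prod_cons, List.prod_nil, mul_one] at hvan'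
      rw [hvan', add_zero]
    rw [h0, h1]
    exact hd1
  have hVcont : Continuous V := by
    have : Continuous fun u => ∑ j ∈ Finset.range (κ+1), Gfun7 ξ₂ j u :=
      continuous_finset_sum _ fun j _ => Gfun7_cont hξ₂cont j
    exact this
  have hAdd : ∀ u ∈ Set.Icc (0:ℝ) T,
      HasDerivWithinAt Ad
        (Lm (-(ξ₂ u * Ring.inverse (g u))) * Rm (g u) + Lm (Ring.inverse (g u)) * Rm (g u * ξ₂ u))
        (Set.Icc 0 T) u := by
    intro u hu
    have hL : HasDerivWithinAt (fun v => Lm (Ring.inverse (g v)))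
        (Lm (-(ξ₂ u * Ring.inverse (g u)))) (Set.Icc 0 T) u :=
      Lm.hasFDerivAt.comp_hasDerivWithinAt u (hhd u hu)
    have hR : HasDerivWithinAt (fun v => Rm (g v)) (Rm (g u * ξ₂ u)) (Set.Icc 0 T) u :=
      Rm.hasFDerivAt.comp_hasDerivWithinAt u (hg2 u hu)
    exact hL.mul hR
  -- K := V * Ad is constant
  set K : ℝ → (A →L[ℝ] A) := fun u => V u * Ad u with hK
  have hKd : ∀ u ∈ Set.Icc (0:ℝ) T, HasDerivWithinAt K 0 (Set.Icc 0 T) u := by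
    intro u hu
    have hKd' := ((hVd u).hasDerivWithinAt).mul (hAdd u hu)
    have hbr : adL7 (ξ₂ u) * Ad u +
        (Lm (-(ξ₂ u * Ring.inverse (g u))) * Rm (g u)
          + Lm (Ring.inverse (g u)) * Rm (g u * ξ₂ u)) = 0 := by
      ext b
      simp only [hAd, ContinuousLinearMap.add_apply, ContinuousLinearMap.mul_apply,
        ContinuousLinearMap.zero_apply, adL7_apply, hLm, hRm,
        ContinuousLinearMap.mul_apply', ContinuousLinearMap.flip_apply, neg_mul]
      simp only [mul_assoc]
      abel
    have hzero : V u * adL7 (ξ₂ u) * Ad u +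
        V u * (Lm (-(ξ₂ u * Ring.inverse (g u))) * Rm (g u)
          + Lm (Ring.inverse (g u)) * Rm (g u * ξ₂ u)) = 0 := by
      rw [mul_assoc, ← mul_add, hbr, mul_zero]
    rwa [hzero] at hKd'
  have hKcont : ContinuousOn K (Set.Icc 0 T) := by
    apply (hVcont.continuousOn).mul
    exact (Lm.continuous.comp_continuousOn hhcont).mul (Rm.continuous.comp_continuousOn hgcont)
  have hconst := constant_of_has_deriv_right_zero hKcont (fun x hx => by
    have h1 := (hKd x ⟨hx.1, le_of_lt hx.2⟩).mono (Set.Icc_subset_Icc hx.1 le_rfl)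
    refine h1.mono_of_mem_nhdsWithin ?_
    rw [mem_nhdsWithin]
    exact ⟨Set.Iio T, isOpen_Iio, hx.2, fun y hy => ⟨hy.2, le_of_lt hy.1⟩⟩)
  have hK0 : K 0 = 1 := by
    have hV0 : V 0 = 1 := by
      rw [hVeq]
      show (∑ j ∈ Finset.range κ, Gfun7 ξ₂ (j+1) (0:ℝ)) + 1 = 1
      have : ∀ j ∈ Finset.range κ, Gfun7 ξ₂ (j+1) (0:ℝ) = 0 := fun j _ => Gfun7_zero ξ₂ j
      rw [Finset.sum_congr rfl this]
      simp
    have hAd0 : Ad 0 = 1 := by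
      show Lm (Ring.inverse (g 0)) * Rm (g 0) = 1
      rw [hg0, Ring.inverse_one]
      ext b
      simp [hLm, hRm, ContinuousLinearMap.mul_apply', ContinuousLinearMap.flip_apply]
    show V 0 * Ad 0 = 1
    rw [hV0, hAd0, one_mul]
  -- conclusion
  intro t ht a
  have hK1 : V t * Ad t = 1 := by
    have := hconst t ht
    rw [hK0] at this
    exact this
  have hAdval : Ad t (g t * a * Ring.inverse (g t)) = a := by
    show Ring.inverse (g t) * ((g t * a * Ring.inverse (g t)) * g t) = a
    have h1 : Ring.inverse (g t) * g t = 1 := Ring.inverse_mul_cancel _ (hunit t ht)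
    rw [mul_assoc (g t * a), h1, mul_one, ← mul_assoc, h1, one_mul]
  have hVta : V t a = g t * a * Ring.inverse (g t) := by
    have happ := congrArg (fun X : A →L[ℝ] A => X (g t * a * Ring.inverse (g t))) hK1
    simp only [ContinuousLinearMap.mul_apply, ContinuousLinearMap.one_apply] at happ
    rw [hAdval] at happ
    exact happ
  rw [← hVta]
  show (∑ j ∈ Finset.range (κ+1), Gfun7 ξ₂ j t) a = _
  rw [ContinuousLinearMap.sum_apply]
  have hsplit : Finset.range (κ+1) = insert 0 (Finset.Icc 1 κ) := by
    ext n
    simp only [Finset.mem_range, Finset.mem_insert, Finset.mem_Icc]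
    omega
  rw [hsplit, Finset.sum_insert (by simp)]
  have hG0 : Gfun7 ξ₂ 0 t a = a := rfl
  rw [hG0]
  congr 1
  apply Finset.sum_congr rfl
  intro k hk
  rw [Gfun7_eq_simplex hξ₂cont k t ht.1]
  rw [ContinuousLinearMap.integral_apply
    ((phi_cont hξ₂cont k).continuousOn.integrableOn_compact (simplex_isCompact k t))]
  apply setIntegral_congr_fun (simplex_measurableSet k t)
  intro s hs
  have hrepl : ∀ i, ξ₂ (s i) = ξ' (s i) := fun i =>
    hξ₂eq _ ⟨(hs.1 i).1, le_trans (hs.1 i).2 ht.2⟩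
  simp only [hrepl]
  rw [← foldr_eq_prod_apply]
  rfl
end

section
/- (i) For tuples A(1),…,A(r) ∈ B^κ one has N(A(1) + ⋯ + A(r)) ≤ N(A(1)) + ⋯ + N(A(r)), where the sum of tuples is taken componentwise. (ii) For tuples A, B ∈ B^κ (setting A_j := 0 =: B_j for j > κ) and every integer k with 2 ≤ k ≤ 2κ: ‖Σ_{m,n ≥ 1, m+n=k} A_m B_n‖ ≤ N(A) N(B) (N(A) + N(B))^{k−2}. -/
open scoped NNReal

/-- The homogeneous norm `N(A) := max_{1 ≤ k ≤ κ} ‖A_k‖^{1/k}` of a tuple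
`A = (A₁,…,A_κ)` (indexed by `ℕ`, only indices `1,…,κ` are used). -/
noncomputable def homN {B : Type*} [NormedRing B] (κ : ℕ) (A : ℕ → B) : ℝ≥0 :=
  (Finset.Icc 1 κ).sup fun k => ‖A k‖₊ ^ ((k : ℝ)⁻¹)

lemma nnnorm_le_homN_pow {B : Type*} [NormedRing B] {κ : ℕ} {A : ℕ → B} {m : ℕ}
    (h1 : 1 ≤ m) (h2 : m ≤ κ) : ‖A m‖₊ ≤ homN κ A ^ m := by
  have hm : ‖A m‖₊ ^ ((m : ℝ)⁻¹) ≤ homN κ A :=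
    Finset.le_sup (f := fun k => ‖A k‖₊ ^ ((k : ℝ)⁻¹)) (Finset.mem_Icc.mpr ⟨h1, h2⟩)
  have hne : (m : ℝ) ≠ 0 := Nat.cast_ne_zero.mpr (by omega)
  calc ‖A m‖₊ = (‖A m‖₊ ^ ((m : ℝ)⁻¹)) ^ (m : ℕ) := by
        rw [← NNReal.rpow_natCast (‖A m‖₊ ^ ((m : ℝ)⁻¹)) m, ← NNReal.rpow_mul,
          inv_mul_cancel₀ hne, NNReal.rpow_one]
    _ ≤ homN κ A ^ m := pow_le_pow_left₀ zero_le hm m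

lemma sum_pow_le_pow_sum' {ι : Type*} (s : Finset ι) (f : ι → ℝ≥0) {k : ℕ} (hk : 1 ≤ k) :
    ∑ j ∈ s, f j ^ k ≤ (∑ j ∈ s, f j) ^ k := by
  set S := ∑ j ∈ s, f j with hS
  calc ∑ j ∈ s, f j ^ k ≤ ∑ j ∈ s, f j * S ^ (k - 1) := by
        refine Finset.sum_le_sum fun j hj => ?_
        have hfj : f j ≤ S := Finset.single_le_sum (fun i _ => zero_le) hj
        calc f j ^ k = f j * f j ^ (k - 1) := by
              rw [← pow_succ']; congr 1; omega
          _ ≤ f j * S ^ (k - 1) := by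
              exact mul_le_mul_right (pow_le_pow_left₀ zero_le hfj _) _
    _ = S * S ^ (k - 1) := by rw [← Finset.sum_mul]
    _ = S ^ k := by rw [← pow_succ']; congr 1; omega

lemma sum_antidiagonal_pow_le (a b : ℝ≥0) (n : ℕ) :
    ∑ p ∈ Finset.HasAntidiagonal.antidiagonal n, a ^ p.1 * b ^ p.2 ≤ (a + b) ^ n := by
  rw [add_pow, Finset.Nat.sum_antidiagonal_eq_sum_range_succ_mk]
  refine Finset.sum_le_sum fun i hi => ?_
  refine le_mul_of_one_le_right zero_le ?_
  exact_mod_cast Nat.one_le_iff_ne_zero.mpr (Nat.choose_pos (by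
    simpa using Nat.lt_succ_iff.mp (Finset.mem_range.mp hi))).ne'

/-- (i) `N(A(1) + ⋯ + A(r)) ≤ N(A(1)) + ⋯ + N(A(r))` (componentwise sum);
(ii) for tuples `A, B` (with `A_j = 0 = B_j` for `j > κ`) and `2 ≤ k ≤ 2κ`:
`‖Σ_{m,n ≥ 1, m+n=k} A_m B_n‖ ≤ N(A) N(B) (N(A) + N(B))^{k−2}`. -/
theorem stmt8 {B : Type*} [NormedRing B] [NormedAlgebra ℝ B] (κ : ℕ) :
    (∀ (r : ℕ) (A : Fin r → ℕ → B),
      homN κ (fun k => ∑ j, A j k) ≤ ∑ j, homN κ (A j)) ∧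
    (∀ A C : ℕ → B, (∀ j, κ < j → A j = 0) → (∀ j, κ < j → C j = 0) →
      ∀ k : ℕ, 2 ≤ k → k ≤ 2 * κ →
        ‖∑ p ∈ (Finset.HasAntidiagonal.antidiagonal k).filter fun p => 1 ≤ p.1 ∧ 1 ≤ p.2,
            A p.1 * C p.2‖₊
          ≤ homN κ A * homN κ C * (homN κ A + homN κ C) ^ (k - 2)) := by
  constructor
  · intro r A
    refine Finset.sup_le fun k hk => ?_
    obtain ⟨hk1, hk2⟩ := Finset.mem_Icc.mp hk
    set T := ∑ j, homN κ (A j) with hT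
    have hne : (k : ℝ) ≠ 0 := Nat.cast_ne_zero.mpr (by omega)
    have hb : ‖∑ j, A j k‖₊ ≤ T ^ k := by
      calc ‖∑ j, A j k‖₊ ≤ ∑ j, ‖A j k‖₊ := nnnorm_sum_le _ _
        _ ≤ ∑ j, homN κ (A j) ^ k :=
            Finset.sum_le_sum fun j _ => nnnorm_le_homN_pow hk1 hk2
        _ ≤ T ^ k := sum_pow_le_pow_sum' _ _ hk1
    calc ‖∑ j, A j k‖₊ ^ ((k : ℝ)⁻¹) ≤ (T ^ k) ^ ((k : ℝ)⁻¹) :=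
          NNReal.rpow_le_rpow hb (by positivity)
      _ = T := by
          rw [← NNReal.rpow_natCast T k, ← NNReal.rpow_mul, mul_inv_cancel₀ hne,
            NNReal.rpow_one]
  · intro A C hA hC k hk2 hk2κ
    set a := homN κ A with ha
    set c := homN κ C with hc
    have hAle : ∀ m : ℕ, 1 ≤ m → ‖A m‖₊ ≤ a ^ m := by
      intro m h1
      rcases le_or_gt m κ with h | h
      · exact nnnorm_le_homN_pow h1 h
      · simp [hA m h]
    have hCle : ∀ m : ℕ, 1 ≤ m → ‖C m‖₊ ≤ c ^ m := by
      intro m h1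
      rcases le_or_gt m κ with h | h
      · exact nnnorm_le_homN_pow h1 h
      · simp [hC m h]
    have himg : (Finset.HasAntidiagonal.antidiagonal k).filter (fun p => 1 ≤ p.1 ∧ 1 ≤ p.2)
        = (Finset.HasAntidiagonal.antidiagonal (k - 2)).image fun q => (q.1 + 1, q.2 + 1) := by
      ext p
      simp only [Finset.mem_filter, Finset.mem_image, Finset.HasAntidiagonal.mem_antidiagonal,
        Prod.ext_iff]
      constructor
      · rintro ⟨hksum, h1, h2⟩
        exact ⟨(p.1 - 1, p.2 - 1), by omega, by omega, by omega⟩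
      · rintro ⟨q, hq, h1, h2⟩
        omega
    calc ‖∑ p ∈ (Finset.HasAntidiagonal.antidiagonal k).filter fun p => 1 ≤ p.1 ∧ 1 ≤ p.2,
            A p.1 * C p.2‖₊
        ≤ ∑ p ∈ (Finset.HasAntidiagonal.antidiagonal k).filter fun p => 1 ≤ p.1 ∧ 1 ≤ p.2,
            ‖A p.1 * C p.2‖₊ := nnnorm_sum_le _ _
      _ ≤ ∑ p ∈ (Finset.HasAntidiagonal.antidiagonal k).filter fun p => 1 ≤ p.1 ∧ 1 ≤ p.2,
            a ^ p.1 * c ^ p.2 := by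
          refine Finset.sum_le_sum fun p hp => ?_
          obtain ⟨hmem, h1, h2⟩ := Finset.mem_filter.mp hp
          calc ‖A p.1 * C p.2‖₊ ≤ ‖A p.1‖₊ * ‖C p.2‖₊ := nnnorm_mul_le _ _
            _ ≤ a ^ p.1 * c ^ p.2 := mul_le_mul' (hAle _ h1) (hCle _ h2)
      _ = ∑ q ∈ Finset.HasAntidiagonal.antidiagonal (k - 2), a ^ (q.1 + 1) * c ^ (q.2 + 1) := by
          rw [himg, Finset.sum_image]
          intro q hq q' hq' hEq
          have := Prod.ext_iff.mp hEq
          dsimp only at this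
          exact Prod.ext (by omega) (by omega)
      _ = a * c * ∑ q ∈ Finset.HasAntidiagonal.antidiagonal (k - 2), a ^ q.1 * c ^ q.2 := by
          rw [Finset.mul_sum]
          refine Finset.sum_congr rfl fun q _ => ?_
          ring
      _ ≤ a * c * (a + c) ^ (k - 2) :=
          mul_le_mul_right (sum_antidiagonal_pow_le a c (k - 2)) _
end

section
/- Let δ > 0 and let X: (−δ,δ) × [0,T] × E → E, (ε,t,m) ↦ X^ε_t(m), be smooth; assume each time-dependent vector field X^ε is complete with flow μ^{X^ε} and that the map (ε,t,s,m) ↦ μ^{X^ε}_{t,s}(m) is smooth. Write X := X^0 and Y_t := (d/dε)|_{ε=0} X^ε_t, and let D_x denote the differential in the space variable. Then for all s, t ∈ [0,T] and m ∈ E: (d/dε)|_{ε=0} μ^{X^ε}_{t,s}(m) = ∫ₛᵗ (D_x μ^X_{t,τ})(μ^X_{τ,s}(m)) [ Y_τ(μ^X_{τ,s}(m)) ] dτ. -/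
open MeasureTheory

/-- differentiating a flow with respect to a parameter:
`(d/dε)|₀ μ^{X^ε}_{t,s}(m) = ∫ₛᵗ (D_x μ^X_{t,τ})(μ^X_{τ,s}(m)) [Y_τ(μ^X_{τ,s}(m))] dτ`,
where `X := X^0` and `Y_t := (d/dε)|₀ X^ε_t`. -/
theorem stmt13 {E : Type*} [NormedAddCommGroup E] [NormedSpace ℝ E] [FiniteDimensional ℝ E]
    (T : ℝ) (hT : 0 < T) (δ : ℝ) (hδ : 0 < δ)
    (X : ℝ → ℝ → E → E)
    (hX : ContDiffOn ℝ (⊤ : ℕ∞) (fun p : ℝ × ℝ × E => X p.1 p.2.1 p.2.2)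
      (Set.Ioo (-δ) δ ×ˢ Set.Icc 0 T ×ˢ Set.univ))
    (μ : ℝ → ℝ → ℝ → E → E)
    (hμinit : ∀ ε ∈ Set.Ioo (-δ) δ, ∀ s ∈ Set.Icc (0:ℝ) T, ∀ m : E, μ ε s s m = m)
    (hμode : ∀ ε ∈ Set.Ioo (-δ) δ, ∀ s ∈ Set.Icc (0:ℝ) T, ∀ m : E, ∀ t ∈ Set.Icc (0:ℝ) T,
      HasDerivWithinAt (fun τ => μ ε τ s m) (X ε t (μ ε t s m)) (Set.Icc 0 T) t)
    (hμsmooth : ContDiffOn ℝ (⊤ : ℕ∞)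
      (fun p : ℝ × ℝ × ℝ × E => μ p.1 p.2.1 p.2.2.1 p.2.2.2)
      (Set.Ioo (-δ) δ ×ˢ Set.Icc 0 T ×ˢ Set.Icc 0 T ×ˢ Set.univ)) :
    ∀ s ∈ Set.Icc (0:ℝ) T, ∀ t ∈ Set.Icc (0:ℝ) T, ∀ m : E,
      HasDerivAt (fun ε => μ ε t s m)
        (∫ τ in s..t,
          (fderiv ℝ (fun x => μ 0 t τ x) (μ 0 τ s m))
            (deriv (fun ε => X ε τ (μ 0 τ s m)) 0)) 0 := by
  intro s hs t ht m
  have h0δ : (0:ℝ) ∈ Set.Ioo (-δ) δ := ⟨by linarith, hδ⟩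
  have hone : (1 : WithTop ℕ∞) ≤ ((⊤:ℕ∞) : WithTop ℕ∞) := by exact_mod_cast (le_top : (1 : ℕ∞) ≤ ⊤)
  have htwo : (1 : WithTop ℕ∞) + 1 ≤ ((⊤:ℕ∞) : WithTop ℕ∞) := by
    rw [show ((1:WithTop ℕ∞) + 1) = ((1+1 : ℕ∞) : WithTop ℕ∞) by norm_cast]
    exact_mod_cast (le_top : (1+1 : ℕ∞) ≤ ⊤)
  -- continuity of the basic flow slices
  have hμcont : ∀ a ∈ Set.Icc (0:ℝ) T, ∀ x : E,
      ContinuousOn (fun σ => μ 0 σ a x) (Set.Icc (0:ℝ) T) := by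
    intro a ha x
    have hmap : Set.MapsTo (fun σ : ℝ => (((0:ℝ), σ, a, x) : ℝ × ℝ × ℝ × E))
        (Set.Icc (0:ℝ) T) (Set.Ioo (-δ) δ ×ˢ Set.Icc 0 T ×ˢ Set.Icc 0 T ×ˢ Set.univ) :=
      fun σ hσ => ⟨h0δ, hσ, ha, trivial⟩
    exact hμsmooth.continuousOn.comp
      ((by fun_prop : Continuous fun σ : ℝ => (((0:ℝ), σ, a, x) : ℝ × ℝ × ℝ × E)).continuousOn) hmap
  -- smoothness of the joint X map restricted to ε = 0
  have hX0j : ContDiffOn ℝ (⊤:ℕ∞) (fun p : ℝ × E => X 0 p.1 p.2)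
      (Set.Icc (0:ℝ) T ×ˢ (Set.univ : Set E)) := by
    have hmap : Set.MapsTo (fun p : ℝ × E => (((0:ℝ), p.1, p.2) : ℝ × ℝ × E))
        (Set.Icc (0:ℝ) T ×ˢ (Set.univ : Set E)) (Set.Ioo (-δ) δ ×ˢ Set.Icc 0 T ×ˢ Set.univ) :=
      fun p hp => ⟨h0δ, hp.1, trivial⟩
    exact hX.comp ((contDiff_const.prodMk (contDiff_fst.prodMk contDiff_snd)).contDiffOn) hmap
  -- uniqueness of solutions of the ODE for `X 0`
  have huniq : ∀ b ∈ Set.Icc (0:ℝ) T, ∀ f g : ℝ → E,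
      ContinuousOn f (Set.Icc 0 T) → ContinuousOn g (Set.Icc 0 T) →
      (∀ τ ∈ Set.Icc (0:ℝ) T, HasDerivWithinAt f (X 0 τ (f τ)) (Set.Icc 0 T) τ) →
      (∀ τ ∈ Set.Icc (0:ℝ) T, HasDerivWithinAt g (X 0 τ (g τ)) (Set.Icc 0 T) τ) →
      f b = g b → ∀ τ ∈ Set.Icc (0:ℝ) T, f τ = g τ := by
    intro b hb f g hfc hgc hf' hg' hfg
    obtain ⟨R, hR⟩ := ((isCompact_Icc.image_of_continuousOn hfc).union
      (isCompact_Icc.image_of_continuousOn hgc)).isBounded.subset_closedBall 0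
    set R' := max R 1 with hR'def
    have hR'pos : (0:ℝ) < R' := lt_of_lt_of_le one_pos (le_max_right _ _)
    have hsubf : ∀ τ ∈ Set.Icc (0:ℝ) T, f τ ∈ Metric.closedBall (0:E) R' := fun τ hτ =>
      Metric.closedBall_subset_closedBall (le_max_left _ _)
        (hR (Set.mem_union_left _ (Set.mem_image_of_mem f hτ)))
    have hsubg : ∀ τ ∈ Set.Icc (0:ℝ) T, g τ ∈ Metric.closedBall (0:E) R' := fun τ hτ =>
      Metric.closedBall_subset_closedBall (le_max_left _ _)
        (hR (Set.mem_union_right _ (Set.mem_image_of_mem g hτ)))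
    -- a Lipschitz bound for `X 0` on a large ball
    have hXP : ContDiffOn ℝ (⊤:ℕ∞) (fun p : ℝ × E => X 0 p.1 p.2)
        (Set.Icc (0:ℝ) T ×ˢ Metric.closedBall (0:E) R') :=
      hX0j.mono (fun p hp => ⟨hp.1, trivial⟩)
    have hPconv : Convex ℝ (Set.Icc (0:ℝ) T ×ˢ Metric.closedBall (0:E) R') :=
      (convex_Icc _ _).prod (convex_closedBall _ _)
    have hPu : UniqueDiffOn ℝ (Set.Icc (0:ℝ) T ×ˢ Metric.closedBall (0:E) R') := by
      apply uniqueDiffOn_convex hPconv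
      rw [interior_prod_eq, interior_Icc, interior_closedBall _ (ne_of_gt hR'pos)]
      exact (Set.nonempty_Ioo.mpr hT).prod ⟨0, Metric.mem_ball_self hR'pos⟩
    have hPcomp : IsCompact (Set.Icc (0:ℝ) T ×ˢ Metric.closedBall (0:E) R') :=
      isCompact_Icc.prod (isCompact_closedBall _ _)
    obtain ⟨M, hM⟩ := hPcomp.exists_bound_of_continuousOn
      (hXP.continuousOn_fderivWithin hPu hone)
    set C : NNReal := Real.toNNReal M with hCdef
    have hlipJ : LipschitzOnWith C (fun p : ℝ × E => X 0 p.1 p.2)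
        (Set.Icc (0:ℝ) T ×ˢ Metric.closedBall (0:E) R') := by
      apply hPconv.lipschitzOnWith_of_nnnorm_fderivWithin_le (hXP.differentiableOn (by simp))
      intro p hp
      rw [← norm_toNNReal]
      exact Real.toNNReal_mono (hM p hp)
    set proj : ℝ → ℝ := fun τ => max 0 (min τ T) with hprojdef
    have hprojmem : ∀ τ, proj τ ∈ Set.Icc (0:ℝ) T := fun τ =>
      ⟨le_max_left _ _, max_le (le_of_lt hT) (min_le_right _ _)⟩
    have hprojeq : ∀ τ ∈ Set.Icc (0:ℝ) T, proj τ = τ := by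
      intro τ hτ
      simp only [hprojdef]
      rw [min_eq_left hτ.2, max_eq_right hτ.1]
    have hv : ∀ τ, LipschitzOnWith C (fun x => X 0 (proj τ) x) (Metric.closedBall (0:E) R') := by
      intro τ x hx y hy
      have := hlipJ (x := (proj τ, x)) (y := (proj τ, y)) ⟨hprojmem τ, hx⟩ ⟨hprojmem τ, hy⟩
      simpa [Prod.edist_eq] using this
    have hfceq : ∀ τ ∈ Set.Icc (0:ℝ) T, f (proj τ) = f τ := fun τ hτ => by rw [hprojeq τ hτ]
    have hgceq : ∀ τ ∈ Set.Icc (0:ℝ) T, g (proj τ) = g τ := fun τ hτ => by rw [hprojeq τ hτ]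
    have hinit : f (proj b) = g (proj b) := by rw [hprojeq b hb]; exact hfg
    -- the clamped derivative statement, for any `h`
    have hclamp : ∀ h : ℝ → E, (∀ τ ∈ Set.Icc (0:ℝ) T, HasDerivWithinAt h (X 0 τ (h τ)) (Set.Icc 0 T) τ) →
        ∀ τ ∈ Set.Ico (0:ℝ) T, HasDerivWithinAt (fun σ => h (proj σ))
          (X 0 (proj τ) (h (proj τ))) (Set.Ici τ) τ := by
      intro h hder τ hτ
      have hτI : τ ∈ Set.Icc (0:ℝ) T := ⟨hτ.1, le_of_lt hτ.2⟩
      have h1 : HasDerivWithinAt h (X 0 τ (h τ)) (Set.Ici τ ∩ Set.Iic T) τ :=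
        (hder τ hτI).mono (fun σ hσ => ⟨le_trans hτI.1 hσ.1, hσ.2⟩)
      have h2 : HasDerivWithinAt (fun σ => h (proj σ)) (X 0 τ (h τ)) (Set.Ici τ ∩ Set.Iic T) τ := by
        apply h1.congr
        · intro σ hσ
          rw [hprojeq σ ⟨le_trans hτI.1 hσ.1, hσ.2⟩]
        · rw [hprojeq τ hτI]
      have h3 : Set.Ici τ ∩ Set.Iic T ∈ nhdsWithin τ (Set.Ici τ) :=
        Filter.inter_mem self_mem_nhdsWithin (mem_nhdsWithin_of_mem_nhds (Iic_mem_nhds hτ.2))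
      have h4 := h2.mono_of_mem_nhdsWithin h3
      rw [hprojeq τ hτI]
      exact h4
    have hclampL : ∀ h : ℝ → E, (∀ τ ∈ Set.Icc (0:ℝ) T, HasDerivWithinAt h (X 0 τ (h τ)) (Set.Icc 0 T) τ) →
        ∀ τ ∈ Set.Ioc (0:ℝ) T, HasDerivWithinAt (fun σ => h (proj σ))
          (X 0 (proj τ) (h (proj τ))) (Set.Iic τ) τ := by
      intro h hder τ hτ
      have hτI : τ ∈ Set.Icc (0:ℝ) T := ⟨le_of_lt hτ.1, hτ.2⟩
      have h1 : HasDerivWithinAt h (X 0 τ (h τ)) (Set.Iic τ ∩ Set.Ici 0) τ :=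
        (hder τ hτI).mono (fun σ hσ => ⟨hσ.2, le_trans hσ.1 hτI.2⟩)
      have h2 : HasDerivWithinAt (fun σ => h (proj σ)) (X 0 τ (h τ)) (Set.Iic τ ∩ Set.Ici 0) τ := by
        apply h1.congr
        · intro σ hσ
          rw [hprojeq σ ⟨hσ.2, le_trans hσ.1 hτI.2⟩]
        · rw [hprojeq τ hτI]
      have h3 : Set.Iic τ ∩ Set.Ici 0 ∈ nhdsWithin τ (Set.Iic τ) :=
        Filter.inter_mem self_mem_nhdsWithin (mem_nhdsWithin_of_mem_nhds (Ici_mem_nhds hτ.1))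
      have h4 := h2.mono_of_mem_nhdsWithin h3
      rw [hprojeq τ hτI]
      exact h4
    have hcontc : ∀ h : ℝ → E, ContinuousOn h (Set.Icc (0:ℝ) T) → ∀ a' b' : ℝ,
        (0:ℝ) ≤ a' → b' ≤ T → ContinuousOn (fun σ => h (proj σ)) (Set.Icc a' b') := by
      intro h hc a' b' ha' hb'
      apply (hc.mono (Set.Icc_subset_Icc ha' hb')).congr
      intro σ hσ
      show h (proj σ) = h σ
      rw [hprojeq σ ⟨le_trans ha' hσ.1, le_trans hσ.2 hb'⟩]
    have hmemc : ∀ (h : ℝ → E), (∀ τ ∈ Set.Icc (0:ℝ) T, h τ ∈ Metric.closedBall (0:E) R') →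
        ∀ τ, h (proj τ) ∈ Metric.closedBall (0:E) R' := fun h hh τ => hh _ (hprojmem τ)
    -- right of b
    have hright : Set.EqOn (fun σ => f (proj σ)) (fun σ => g (proj σ)) (Set.Icc b T) :=
      ODE_solution_unique_of_mem_Icc_right (fun τ _ => hv τ)
        (hcontc f hfc b T hb.1 le_rfl)
        (fun τ hτ => hclamp f hf' τ ⟨le_trans hb.1 hτ.1, hτ.2⟩)
        (fun τ hτ => hmemc f hsubf τ)
        (hcontc g hgc b T hb.1 le_rfl)
        (fun τ hτ => hclamp g hg' τ ⟨le_trans hb.1 hτ.1, hτ.2⟩)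
        (fun τ hτ => hmemc g hsubg τ)
        hinit
    -- left of b
    have hleft : Set.EqOn (fun σ => f (proj σ)) (fun σ => g (proj σ)) (Set.Icc 0 b) :=
      ODE_solution_unique_of_mem_Icc_left (fun τ _ => hv τ)
        (hcontc f hfc 0 b le_rfl hb.2)
        (fun τ hτ => hclampL f hf' τ ⟨hτ.1, le_trans hτ.2 hb.2⟩)
        (fun τ hτ => hmemc f hsubf τ)
        (hcontc g hgc 0 b le_rfl hb.2)
        (fun τ hτ => hclampL g hg' τ ⟨hτ.1, le_trans hτ.2 hb.2⟩)
        (fun τ hτ => hmemc g hsubg τ)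
        hinit
    intro τ hτ
    rcases le_total τ b with hcase | hcase
    · have := hleft ⟨hτ.1, hcase⟩
      simp only [hprojeq τ hτ] at this
      exact this
    · have := hright ⟨hcase, hτ.2⟩
      simp only [hprojeq τ hτ] at this
      exact this
  have hflow : ∀ a ∈ Set.Icc (0:ℝ) T, ∀ b ∈ Set.Icc (0:ℝ) T, ∀ c ∈ Set.Icc (0:ℝ) T, ∀ x : E,
      μ 0 c b (μ 0 b a x) = μ 0 c a x := by
    intro a ha b hb c hc x
    exact huniq b hb _ _ (hμcont b hb (μ 0 b a x)) (hμcont a ha x)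
      (fun τ hτ => hμode 0 h0δ b hb (μ 0 b a x) τ hτ)
      (fun τ hτ => hμode 0 h0δ a ha x τ hτ)
      (by rw [hμinit 0 h0δ b hb (μ 0 b a x)]) c hc
  -- ============ joint map `F2 (τ,x) = μ 0 t τ x` and its derivative ============
  have hS2u : UniqueDiffOn ℝ ((Set.Icc (0:ℝ) T) ×ˢ (Set.univ : Set E)) :=
    (uniqueDiffOn_Icc hT).prod uniqueDiffOn_univ
  have hF2 : ContDiffOn ℝ (⊤:ℕ∞) (fun p : ℝ × E => μ 0 t p.1 p.2)
      (Set.Icc (0:ℝ) T ×ˢ (Set.univ : Set E)) := by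
    have hmap : Set.MapsTo (fun p : ℝ × E => (((0:ℝ), t, p.1, p.2) : ℝ × ℝ × ℝ × E))
        (Set.Icc (0:ℝ) T ×ˢ (Set.univ : Set E))
        (Set.Ioo (-δ) δ ×ˢ Set.Icc 0 T ×ˢ Set.Icc 0 T ×ˢ Set.univ) :=
      fun p hp => ⟨h0δ, ht, hp.1, trivial⟩
    exact hμsmooth.comp
      ((contDiff_const.prodMk (contDiff_const.prodMk (contDiff_fst.prodMk contDiff_snd))).contDiffOn) hmap
  set DF2 : ℝ × E → (ℝ × E) →L[ℝ] E :=
    fderivWithin ℝ (fun p : ℝ × E => μ 0 t p.1 p.2) (Set.Icc (0:ℝ) T ×ˢ (Set.univ : Set E))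
    with hDF2def
  have hDF2 : ∀ p ∈ Set.Icc (0:ℝ) T ×ˢ (Set.univ : Set E),
      HasFDerivWithinAt (fun p : ℝ × E => μ 0 t p.1 p.2) (DF2 p)
        (Set.Icc (0:ℝ) T ×ˢ (Set.univ : Set E)) p :=
    fun p hp => ((hF2.differentiableOn (by simp)) p hp).hasFDerivWithinAt
  have hDF2cont : ContinuousOn DF2 (Set.Icc (0:ℝ) T ×ˢ (Set.univ : Set E)) :=
    hF2.continuousOn_fderivWithin hS2u hone
  have hDF2smooth : ContDiffOn ℝ 1 DF2 (Set.Icc (0:ℝ) T ×ˢ (Set.univ : Set E)) :=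
    hF2.fderivWithin hS2u htwo
  -- space derivative of `x ↦ μ 0 t τ x`
  have hxpart : ∀ τ ∈ Set.Icc (0:ℝ) T, ∀ x : E,
      HasFDerivAt (fun x' => μ 0 t τ x')
        ((DF2 (τ, x)).comp (ContinuousLinearMap.inr ℝ ℝ E)) x := by
    intro τ hτ x
    have hincl : HasFDerivAt (fun x' : E => ((τ, x') : ℝ × E))
        (ContinuousLinearMap.inr ℝ ℝ E) x := (hasFDerivAt_const τ x).prodMk (hasFDerivAt_id x)
    have hmap : Set.MapsTo (fun x' : E => ((τ, x') : ℝ × E)) Set.univ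
        (Set.Icc (0:ℝ) T ×ˢ (Set.univ : Set E)) := fun x' _ => ⟨hτ, trivial⟩
    exact hasFDerivWithinAt_univ.mp
      ((hDF2 (τ, x) ⟨hτ, trivial⟩).comp x hincl.hasFDerivWithinAt hmap)
  have hfderiv_eq : ∀ τ ∈ Set.Icc (0:ℝ) T, ∀ x v : E,
      (fderiv ℝ (fun x' => μ 0 t τ x') x) v = DF2 (τ, x) ((0:ℝ), v) := by
    intro τ hτ x v
    rw [(hxpart τ hτ x).fderiv]
    simp
  -- the key identity: `DF2 (τ,y) (1, X 0 τ y) = 0`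
  have hkey : ∀ τ ∈ Set.Icc (0:ℝ) T, ∀ y : E, DF2 (τ, y) (1, X 0 τ y) = 0 := by
    intro τ hτ y
    have hμττ : μ 0 τ τ y = y := hμinit 0 h0δ τ hτ y
    have hc : HasDerivWithinAt (fun σ => μ 0 σ τ y) (X 0 τ (μ 0 τ τ y)) (Set.Icc 0 T) τ :=
      hμode 0 h0δ τ hτ y τ hτ
    rw [hμττ] at hc
    have hcurve : HasDerivWithinAt (fun σ : ℝ => ((σ, μ 0 σ τ y) : ℝ × E))
        ((1:ℝ), X 0 τ y) (Set.Icc 0 T) τ := (hasDerivWithinAt_id _ _).prodMk hc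
    have hpt : (fun σ : ℝ => ((σ, μ 0 σ τ y) : ℝ × E)) τ = ((τ, y) : ℝ × E) := by
      simp [hμττ]
    have hφ := HasFDerivWithinAt.comp_hasDerivWithinAt_of_eq τ
      (hDF2 (τ, y) ⟨hτ, trivial⟩) hcurve (fun σ hσ => ⟨hσ, trivial⟩) hpt.symm
    have hφconst : HasDerivWithinAt (fun _ : ℝ => μ 0 t τ y)
        (DF2 (τ, y) (1, X 0 τ y)) (Set.Icc 0 T) τ := by
      apply hφ.congr
      · intro σ hσ
        exact (hflow τ hτ σ hσ t ht y).symm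
      · exact (hflow τ hτ τ hτ t ht y).symm
    have h1 := hφconst.derivWithin ((uniqueDiffOn_Icc hT) τ hτ)
    have h0 : derivWithin (fun _ : ℝ => μ 0 t τ y) (Set.Icc 0 T) τ = 0 :=
      (hasDerivWithinAt_const τ _ _).derivWithin ((uniqueDiffOn_Icc hT) τ hτ)
    rw [h0] at h1
    exact h1.symm
  -- ============ step 1: τ-derivative of `σ ↦ μ 0 t σ (μ ε σ s m)` ============
  have hstep1 : ∀ ε ∈ Set.Ioo (-δ) δ, ∀ τ ∈ Set.Icc (0:ℝ) T,
      HasDerivWithinAt (fun σ => μ 0 t σ (μ ε σ s m))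
        (DF2 (τ, μ ε τ s m) ((0:ℝ), X ε τ (μ ε τ s m) - X 0 τ (μ ε τ s m)))
        (Set.Icc 0 T) τ := by
    intro ε hε τ hτ
    have hc : HasDerivWithinAt (fun σ => μ ε σ s m) (X ε τ (μ ε τ s m)) (Set.Icc 0 T) τ :=
      hμode ε hε s hs m τ hτ
    have hcurve : HasDerivWithinAt (fun σ : ℝ => ((σ, μ ε σ s m) : ℝ × E))
        ((1:ℝ), X ε τ (μ ε τ s m)) (Set.Icc 0 T) τ := (hasDerivWithinAt_id _ _).prodMk hc
    have hcomp := (hDF2 (τ, μ ε τ s m) ⟨hτ, trivial⟩).comp_hasDerivWithinAt (x := τ) hcurve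
      (fun σ hσ => by exact ⟨hσ, trivial⟩)
    have hsplit : ((1:ℝ), X ε τ (μ ε τ s m)) =
        ((1:ℝ), X 0 τ (μ ε τ s m)) + ((0:ℝ), X ε τ (μ ε τ s m) - X 0 τ (μ ε τ s m)) := by
      refine Prod.ext ?_ ?_ <;> simp
    rw [hsplit, map_add, hkey τ hτ (μ ε τ s m), zero_add] at hcomp
    exact hcomp
  -- ============ the integrand family ============
  set r := δ/2 with hrdef
  have hrpos : 0 < r := by positivity
  have hQsub : Set.Icc (-r) r ⊆ Set.Ioo (-δ) δ := by
    intro x hx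
    constructor
    · have := hx.1; simp only [hrdef] at this ⊢; linarith
    · have := hx.2; simp only [hrdef] at this ⊢; linarith
  have hballIcc : Metric.ball (0:ℝ) r ⊆ Set.Icc (-r) r := by
    intro x hx
    have h1 := abs_lt.mp (by simpa [Real.dist_eq] using hx)
    exact ⟨le_of_lt h1.1, le_of_lt h1.2⟩
  have hQu : UniqueDiffOn ℝ (Set.Icc (-r) r ×ˢ Set.Icc (0:ℝ) T) :=
    (uniqueDiffOn_Icc (by linarith)).prod (uniqueDiffOn_Icc hT)
  have hQconv : Convex ℝ (Set.Icc (-r) r ×ˢ Set.Icc (0:ℝ) T) :=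
    (convex_Icc _ _).prod (convex_Icc _ _)
  have hQcomp : IsCompact (Set.Icc (-r) r ×ˢ Set.Icc (0:ℝ) T) :=
    isCompact_Icc.prod isCompact_Icc
  have hysmooth : ContDiffOn ℝ (⊤:ℕ∞) (fun p : ℝ × ℝ => μ p.1 p.2 s m)
      (Set.Ioo (-δ) δ ×ˢ Set.Icc (0:ℝ) T) := by
    have hmap : Set.MapsTo (fun p : ℝ × ℝ => ((p.1, p.2, s, m) : ℝ × ℝ × ℝ × E))
        (Set.Ioo (-δ) δ ×ˢ Set.Icc (0:ℝ) T)
        (Set.Ioo (-δ) δ ×ˢ Set.Icc 0 T ×ˢ Set.Icc 0 T ×ˢ Set.univ) :=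
      fun p hp => ⟨hp.1, hp.2, hs, trivial⟩
    exact hμsmooth.comp
      ((contDiff_fst.prodMk (contDiff_snd.prodMk contDiff_const)).contDiffOn) hmap
  set Hfun : ℝ → ℝ → E := fun ε τ =>
    DF2 (τ, μ ε τ s m) ((0:ℝ), X ε τ (μ ε τ s m) - X 0 τ (μ ε τ s m)) with hHdef
  have hHsmooth : ContDiffOn ℝ 1 (fun p : ℝ × ℝ => Hfun p.1 p.2)
      (Set.Icc (-r) r ×ˢ Set.Icc (0:ℝ) T) := by
    have hy1 : ContDiffOn ℝ 1 (fun p : ℝ × ℝ => μ p.1 p.2 s m)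
        (Set.Icc (-r) r ×ˢ Set.Icc (0:ℝ) T) :=
      (hysmooth.of_le hone).mono (fun p hp => ⟨hQsub hp.1, hp.2⟩)
    have hA : ContDiffOn ℝ 1 (fun p : ℝ × ℝ => DF2 (p.2, μ p.1 p.2 s m))
        (Set.Icc (-r) r ×ˢ Set.Icc (0:ℝ) T) :=
      hDF2smooth.comp (contDiff_snd.contDiffOn.prodMk hy1) (fun p hp => ⟨hp.2, trivial⟩)
    have hXε : ContDiffOn ℝ 1 (fun p : ℝ × ℝ => X p.1 p.2 (μ p.1 p.2 s m))
        (Set.Icc (-r) r ×ˢ Set.Icc (0:ℝ) T) :=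
      (hX.of_le hone).comp (contDiff_fst.contDiffOn.prodMk (contDiff_snd.contDiffOn.prodMk hy1))
        (fun p hp => ⟨hQsub hp.1, hp.2, trivial⟩)
    have hX0' : ContDiffOn ℝ 1 (fun p : ℝ × ℝ => X 0 p.2 (μ p.1 p.2 s m))
        (Set.Icc (-r) r ×ˢ Set.Icc (0:ℝ) T) :=
      (hX.of_le hone).comp (contDiffOn_const.prodMk (contDiff_snd.contDiffOn.prodMk hy1))
        (fun p hp => ⟨h0δ, hp.2, trivial⟩)
    exact hA.clm_apply (contDiffOn_const.prodMk (hXε.sub hX0'))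
  obtain ⟨MH, hMH⟩ := hQcomp.exists_bound_of_continuousOn
    (hHsmooth.continuousOn_fderivWithin hQu le_rfl)
  set CH : NNReal := Real.toNNReal MH with hCHdef
  have hHlipJ : LipschitzOnWith CH (fun p : ℝ × ℝ => Hfun p.1 p.2)
      (Set.Icc (-r) r ×ˢ Set.Icc (0:ℝ) T) := by
    apply hQconv.lipschitzOnWith_of_nnnorm_fderivWithin_le (hHsmooth.differentiableOn one_ne_zero)
    intro p hp
    rw [← norm_toNNReal]
    exact Real.toNNReal_mono (hMH p hp)
  have hHlip : ∀ τ ∈ Set.Icc (0:ℝ) T,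
      LipschitzOnWith CH (fun ε => Hfun ε τ) (Metric.ball (0:ℝ) r) := by
    intro τ hτ x hx y hy
    have := hHlipJ (x := (x, τ)) (y := (y, τ)) ⟨hballIcc hx, hτ⟩ ⟨hballIcc hy, hτ⟩
    simpa [Prod.edist_eq] using this
  have hHcont : ∀ ε ∈ Set.Icc (-r) r, ContinuousOn (fun τ => Hfun ε τ) (Set.Icc (0:ℝ) T) := by
    intro ε hε
    exact hHsmooth.continuousOn.comp
      ((Continuous.continuousOn (by fun_prop) : ContinuousOn (fun τ : ℝ => ((ε, τ) : ℝ × ℝ)) (Set.Icc 0 T)))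
      (fun τ hτ => ⟨hε, hτ⟩)
  -- interval inclusions
  have hIccuIcc : Set.uIcc (0:ℝ) T = Set.Icc 0 T := Set.uIcc_of_le (le_of_lt hT)
  have huIccsub : Set.uIcc s t ⊆ Set.Icc (0:ℝ) T := by
    rw [← hIccuIcc]
    exact Set.uIcc_subset_uIcc (hIccuIcc ▸ hs) (hIccuIcc ▸ ht)
  have huIocsub : Set.uIoc s t ⊆ Set.Icc (0:ℝ) T :=
    fun x hx => huIccsub (Set.Ioc_subset_Icc_self hx)
  -- ============ step 2: FTC ============
  have hFTC : ∀ ε ∈ Metric.ball (0:ℝ) r, μ ε t s m = μ 0 t s m + ∫ τ in s..t, Hfun ε τ := by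
    intro ε hε
    have hεδ : ε ∈ Set.Ioo (-δ) δ := hQsub (hballIcc hε)
    have h1 : ContinuousOn (fun σ => μ ε σ s m) (Set.Icc (0:ℝ) T) :=
      hysmooth.continuousOn.comp
        ((Continuous.continuousOn (by fun_prop) : ContinuousOn (fun σ : ℝ => ((ε, σ) : ℝ × ℝ)) (Set.Icc 0 T)))
        (fun σ hσ => ⟨hεδ, hσ⟩)
    have hcont : ContinuousOn (fun σ => μ 0 t σ (μ ε σ s m)) (Set.uIcc s t) :=
      (hF2.continuousOn.comp (continuousOn_id.prodMk h1) (fun σ hσ => ⟨hσ, trivial⟩)).mono huIccsub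
    have hderiv : ∀ x ∈ Set.Ioo (min s t) (max s t),
        HasDerivWithinAt (fun σ => μ 0 t σ (μ ε σ s m)) (Hfun ε x) (Set.Ioi x) x := by
      intro x hx
      have hx0T : x ∈ Set.Ioo (0:ℝ) T :=
        ⟨lt_of_le_of_lt (le_min hs.1 ht.1) hx.1, lt_of_lt_of_le hx.2 (max_le hs.2 ht.2)⟩
      exact ((hstep1 ε hεδ x (Set.Ioo_subset_Icc_self hx0T)).hasDerivAt
        (Icc_mem_nhds hx0T.1 hx0T.2)).hasDerivWithinAt
    have hint : IntervalIntegrable (Hfun ε) volume s t :=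
      ((hHcont ε (hballIcc hε)).mono huIccsub).intervalIntegrable
    have hres := intervalIntegral.integral_eq_sub_of_hasDeriv_right hcont hderiv hint
    have hres' : (∫ τ in s..t, Hfun ε τ) = μ 0 t t (μ ε t s m) - μ 0 t s (μ ε s s m) := hres
    rw [hμinit 0 h0δ t ht (μ ε t s m), hμinit ε hεδ s hs m] at hres'
    exact (sub_eq_iff_eq_add'.mp hres'.symm)
  -- ============ step 3: differentiating under the integral ============
  have hS3u : UniqueDiffOn ℝ (Set.Ioo (-δ) δ ×ˢ Set.Icc (0:ℝ) T ×ˢ (Set.univ : Set E)) :=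
    isOpen_Ioo.uniqueDiffOn.prod ((uniqueDiffOn_Icc hT).prod uniqueDiffOn_univ)
  set DX3 : ℝ × ℝ × E → (ℝ × ℝ × E) →L[ℝ] E :=
    fderivWithin ℝ (fun q : ℝ × ℝ × E => X q.1 q.2.1 q.2.2)
      (Set.Ioo (-δ) δ ×ˢ Set.Icc (0:ℝ) T ×ˢ (Set.univ : Set E)) with hDX3def
  have hDX3 : ∀ q ∈ Set.Ioo (-δ) δ ×ˢ Set.Icc (0:ℝ) T ×ˢ (Set.univ : Set E),
      HasFDerivWithinAt (fun q : ℝ × ℝ × E => X q.1 q.2.1 q.2.2) (DX3 q)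
        (Set.Ioo (-δ) δ ×ˢ Set.Icc (0:ℝ) T ×ˢ (Set.univ : Set E)) q :=
    fun q hq => ((hX.differentiableOn (by simp)) q hq).hasFDerivWithinAt
  have hDX3cont : ContinuousOn DX3 (Set.Ioo (-δ) δ ×ˢ Set.Icc (0:ℝ) T ×ˢ (Set.univ : Set E)) :=
    hX.continuousOn_fderivWithin hS3u hone
  have hXslice : ∀ τ ∈ Set.Icc (0:ℝ) T, ∀ y : E,
      HasDerivAt (fun ε => X ε τ y) (DX3 (0, τ, y) ((1:ℝ), (0:ℝ), (0:E))) 0 := by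
    intro τ hτ y
    have hcurve : HasDerivWithinAt (fun ε : ℝ => ((ε, τ, y) : ℝ × ℝ × E))
        ((1:ℝ), ((0:ℝ), (0:E))) (Set.Ioo (-δ) δ) 0 :=
      (hasDerivWithinAt_id _ _).prodMk (hasDerivWithinAt_const _ _ _)
    exact ((hDX3 (0, τ, y) ⟨h0δ, hτ, trivial⟩).comp_hasDerivWithinAt (x := 0) hcurve
      (fun ε hε => by exact ⟨hε, hτ, trivial⟩)).hasDerivAt (isOpen_Ioo.mem_nhds h0δ)
  -- the derivative at `ε = 0` of `ε ↦ Hfun ε τ`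
  have hdiff0 : ∀ τ ∈ Set.Icc (0:ℝ) T,
      HasDerivAt (fun ε => Hfun ε τ)
        ((fderiv ℝ (fun x => μ 0 t τ x) (μ 0 τ s m))
          (deriv (fun ε => X ε τ (μ 0 τ s m)) 0)) 0 := by
    intro τ hτ
    have hyd : DifferentiableAt ℝ (fun ε => μ ε τ s m) 0 := by
      have h1 : ContDiffOn ℝ (⊤:ℕ∞) (fun ε : ℝ => μ ε τ s m) (Set.Ioo (-δ) δ) :=
        hysmooth.comp (contDiff_id.prodMk contDiff_const).contDiffOn (fun ε hε => ⟨hε, hτ⟩)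
      exact ((h1.differentiableOn (by simp)) 0 h0δ).differentiableAt (isOpen_Ioo.mem_nhds h0δ)
    have hy := hyd.hasDerivAt
    have hAd : HasDerivAt (fun ε => DF2 (τ, μ ε τ s m))
        ((fderivWithin ℝ DF2 (Set.Icc (0:ℝ) T ×ˢ (Set.univ : Set E)) (τ, μ 0 τ s m))
          ((0:ℝ), deriv (fun ε => μ ε τ s m) 0)) 0 := by
      have hin : HasDerivWithinAt (fun ε : ℝ => ((τ, μ ε τ s m) : ℝ × E))
          ((0:ℝ), deriv (fun ε => μ ε τ s m) 0) Set.univ 0 :=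
        ((hasDerivAt_const _ _).prodMk hy).hasDerivWithinAt
      have hg2 := ((hDF2smooth.differentiableOn one_ne_zero) (τ, μ 0 τ s m)
        ⟨hτ, trivial⟩).hasFDerivWithinAt
      exact hasDerivWithinAt_univ.mp
        (hg2.comp_hasDerivWithinAt (x := 0) hin (fun ε _ => by exact ⟨hτ, trivial⟩))
    have had : HasDerivAt (fun ε => X ε τ (μ ε τ s m))
        (DX3 (0, τ, μ 0 τ s m) ((1:ℝ), (0:ℝ), deriv (fun ε => μ ε τ s m) 0)) 0 := by
      have hin : HasDerivWithinAt (fun ε : ℝ => ((ε, τ, μ ε τ s m) : ℝ × ℝ × E))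
          ((1:ℝ), ((0:ℝ), deriv (fun ε => μ ε τ s m) 0)) (Set.Ioo (-δ) δ) 0 :=
        (hasDerivWithinAt_id _ _).prodMk
          ((hasDerivWithinAt_const _ _ _).prodMk hy.hasDerivWithinAt)
      exact ((hDX3 (0, τ, μ 0 τ s m) ⟨h0δ, hτ, trivial⟩).comp_hasDerivWithinAt (x := 0) hin
        (fun ε hε => by exact ⟨hε, hτ, trivial⟩)).hasDerivAt (isOpen_Ioo.mem_nhds h0δ)
    have hbd : HasDerivAt (fun ε => X 0 τ (μ ε τ s m))
        (DX3 (0, τ, μ 0 τ s m) ((0:ℝ), (0:ℝ), deriv (fun ε => μ ε τ s m) 0)) 0 := by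
      have hin : HasDerivWithinAt (fun ε : ℝ => (((0:ℝ), τ, μ ε τ s m) : ℝ × ℝ × E))
          ((0:ℝ), ((0:ℝ), deriv (fun ε => μ ε τ s m) 0)) Set.univ 0 :=
        ((hasDerivAt_const _ _).prodMk ((hasDerivAt_const _ _).prodMk hy)).hasDerivWithinAt
      have hcd := (hDX3 (0, τ, μ 0 τ s m) ⟨h0δ, hτ, trivial⟩).comp_hasDerivWithinAt (x := 0) hin
          (fun ε _ => by exact ⟨h0δ, hτ, trivial⟩)
      exact hasDerivWithinAt_univ.mp hcd
    have hud : HasDerivAt (fun ε => X ε τ (μ ε τ s m) - X 0 τ (μ ε τ s m))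
        (DX3 (0, τ, μ 0 τ s m) ((1:ℝ), (0:ℝ), (0:E))) 0 := by
      have hsub := had.sub hbd
      have heq : DX3 (0, τ, μ 0 τ s m) ((1:ℝ), (0:ℝ), deriv (fun ε => μ ε τ s m) 0) -
          DX3 (0, τ, μ 0 τ s m) ((0:ℝ), (0:ℝ), deriv (fun ε => μ ε τ s m) 0) =
          DX3 (0, τ, μ 0 τ s m) ((1:ℝ), (0:ℝ), (0:E)) := by
        rw [← map_sub]
        congr 1
        refine Prod.ext ?_ (Prod.ext ?_ ?_) <;> simp
      rwa [heq] at hsub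
    have hud' : HasDerivAt (fun ε => (((0:ℝ), X ε τ (μ ε τ s m) - X 0 τ (μ ε τ s m)) : ℝ × E))
        ((0:ℝ), DX3 (0, τ, μ 0 τ s m) ((1:ℝ), (0:ℝ), (0:E))) 0 :=
      (hasDerivAt_const _ _).prodMk hud
    have hfinal := hAd.clm_apply hud'
    have hzero : ((0:ℝ), X 0 τ (μ 0 τ s m) - X 0 τ (μ 0 τ s m)) = ((0 : ℝ × E)) := by
      rw [sub_self]; rfl
    rw [hzero, map_zero, zero_add] at hfinal
    have htarg : (fderiv ℝ (fun x => μ 0 t τ x) (μ 0 τ s m))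
        (deriv (fun ε => X ε τ (μ 0 τ s m)) 0) =
        DF2 (τ, μ 0 τ s m) ((0:ℝ), DX3 (0, τ, μ 0 τ s m) ((1:ℝ), (0:ℝ), (0:E))) := by
      rw [(hXslice τ hτ (μ 0 τ s m)).deriv, hfderiv_eq τ hτ (μ 0 τ s m)]
    rw [htarg]
    exact hfinal
  -- dominated-derivative lemma
  have hnnabs : Real.nnabs ((CH : ℝ)) = CH := by
    rw [Real.nnabs_of_nonneg CH.coe_nonneg, Real.toNNReal_coe]
  have h0Icc : (0:ℝ) ∈ Set.Icc (-r) r := ⟨by linarith, le_of_lt hrpos⟩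
  have hmeas : ∀ᶠ ε in nhds (0:ℝ),
      AEStronglyMeasurable (Hfun ε) (volume.restrict (Set.uIoc s t)) := by
    filter_upwards [Metric.ball_mem_nhds (0:ℝ) hrpos] with ε hε
    exact ((hHcont ε (hballIcc hε)).mono huIocsub).aestronglyMeasurable measurableSet_uIoc
  have hint0 : IntervalIntegrable (Hfun 0) volume s t :=
    ((hHcont 0 h0Icc).mono huIccsub).intervalIntegrable
  have hF'meas : AEStronglyMeasurable
      (fun τ => (fderiv ℝ (fun x => μ 0 t τ x) (μ 0 τ s m))
        (deriv (fun ε => X ε τ (μ 0 τ s m)) 0)) (volume.restrict (Set.uIoc s t)) := by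
    have h1 : ContinuousOn (fun τ : ℝ => ((τ, μ 0 τ s m) : ℝ × E)) (Set.Icc (0:ℝ) T) :=
      continuousOn_id.prodMk (hμcont s hs m)
    have h2 : ContinuousOn (fun τ => DF2 (τ, μ 0 τ s m)) (Set.Icc (0:ℝ) T) :=
      hDF2cont.comp h1 (fun τ hτ => ⟨hτ, trivial⟩)
    have h4 : ContinuousOn (fun τ => DX3 ((0:ℝ), τ, μ 0 τ s m)) (Set.Icc (0:ℝ) T) :=
      hDX3cont.comp (continuousOn_const.prodMk h1) (fun τ hτ => ⟨h0δ, hτ, trivial⟩)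
    have hG'cont : ContinuousOn (fun τ =>
        DF2 (τ, μ 0 τ s m) ((0:ℝ), DX3 ((0:ℝ), τ, μ 0 τ s m) ((1:ℝ), (0:ℝ), (0:E))))
        (Set.Icc (0:ℝ) T) :=
      h2.clm_apply (continuousOn_const.prodMk (h4.clm_apply continuousOn_const))
    apply ((hG'cont.mono huIocsub).aestronglyMeasurable measurableSet_uIoc).congr
    rw [Filter.EventuallyEq, ae_restrict_iff' measurableSet_uIoc]
    apply ae_of_all
    intro τ hτ
    have hτI := huIocsub hτ
    rw [hfderiv_eq τ hτI (μ 0 τ s m), (hXslice τ hτI (μ 0 τ s m)).deriv]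
  have hlipschAE : ∀ᵐ τ ∂(volume : Measure ℝ), τ ∈ Set.uIoc s t →
      LipschitzOnWith (Real.nnabs ((fun _ : ℝ => (CH:ℝ)) τ)) (fun ε => Hfun ε τ)
        (Metric.ball (0:ℝ) r) := by
    apply ae_of_all
    intro τ hτ
    rw [hnnabs]
    exact hHlip τ (huIocsub hτ)
  have hbound_int : IntervalIntegrable (fun _ : ℝ => (CH:ℝ)) volume s t :=
    intervalIntegrable_const
  have hdiffae : ∀ᵐ τ ∂(volume : Measure ℝ), τ ∈ Set.uIoc s t →
      HasDerivAt (fun ε => Hfun ε τ)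
        ((fderiv ℝ (fun x => μ 0 t τ x) (μ 0 τ s m))
          (deriv (fun ε => X ε τ (μ 0 τ s m)) 0)) 0 :=
    ae_of_all _ (fun τ hτ => hdiff0 τ (huIocsub hτ))
  have hkey2 := (intervalIntegral.hasDerivAt_integral_of_dominated_loc_of_lip (Metric.ball_mem_nhds (0:ℝ) hrpos) hmeas hint0
    hF'meas hlipschAE hbound_int hdiffae).2
  have hconst := hkey2.const_add (μ 0 t s m)
  apply hconst.congr_of_eventuallyEq
  filter_upwards [Metric.ball_mem_nhds (0:ℝ) hrpos] with ε hε
  exact hFTC ε hε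
end

section
/- For every smooth vector field Y: E → E, every t ∈ ℝ, and every m ∈ E: ∂_t (Ad_{ν_t} Y)(m) = [Ad_{ν_t} Y, W_t](m), where W_t := ν̇_t ∘ ν_t⁻¹ with ν̇_t(m) := ∂_t ν_t(m). -/
section Helpers

variable {E F : Type*} [NormedAddCommGroup E] [NormedSpace ℝ E]
  [NormedAddCommGroup F] [NormedSpace ℝ F]

/-- Partial derivative in the second variable. -/
theorem partial_fderiv' {g : ℝ × E → F} (hg : Differentiable ℝ g) (s : ℝ) (y : E) :
    HasFDerivAt (fun z => g (s, z))
      ((fderiv ℝ g (s, y)).comp (ContinuousLinearMap.inr ℝ ℝ E)) y :=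
  (hg (s, y)).hasFDerivAt.comp y (hasFDerivAt_prodMk_right s y)

/-- Partial derivative in the first (time) variable. -/
theorem partial_deriv_t' {g : ℝ × E → F} (hg : Differentiable ℝ g) (s : ℝ) (y : E) :
    HasDerivAt (fun u => g (u, y)) (fderiv ℝ g (s, y) ((1 : ℝ), (0 : E))) s :=
  (hg (s, y)).hasFDerivAt.comp_hasDerivAt s ((hasDerivAt_id s).prodMk (hasDerivAt_const s y))

end Helpers

/-- The adjoint action `(Ad_{ν_t} Y)(m) := (Dν_t)(ν_t⁻¹(m)) [Y(ν_t⁻¹(m))]`. -/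
noncomputable def AdFlow {E : Type*} [NormedAddCommGroup E] [NormedSpace ℝ E]
    (ν νinv : ℝ → E → E) (Y : E → E) (t : ℝ) (m : E) : E :=
  (fderiv ℝ (ν t) (νinv t m)) (Y (νinv t m))

/-- The vector field `W_t := ν̇_t ∘ ν_t⁻¹`. -/
noncomputable def flowW {E : Type*} [NormedAddCommGroup E] [NormedSpace ℝ E]
    (ν νinv : ℝ → E → E) (t : ℝ) (m : E) : E :=
  deriv (fun u => ν u (νinv t m)) t

/-- `∂_t (Ad_{ν_t} Y)(m) = [Ad_{ν_t} Y, W_t](m)` where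
`[U,V](m) := DV(m) U(m) − DU(m) V(m)` and `W_t := ν̇_t ∘ ν_t⁻¹`. -/
theorem stmt15 {E : Type*} [NormedAddCommGroup E] [NormedSpace ℝ E] [FiniteDimensional ℝ E]
    (ν νinv : ℝ → E → E)
    (hν : ContDiff ℝ (⊤ : ℕ∞) (fun p : ℝ × E => ν p.1 p.2))
    (hνinv : ContDiff ℝ (⊤ : ℕ∞) (fun p : ℝ × E => νinv p.1 p.2))
    (hinv1 : ∀ (t : ℝ) (m : E), ν t (νinv t m) = m)
    (hinv2 : ∀ (t : ℝ) (m : E), νinv t (ν t m) = m)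
    (Y : E → E) (hY : ContDiff ℝ (⊤ : ℕ∞) Y) :
    ∀ (t : ℝ) (m : E),
      HasDerivAt (fun u => AdFlow ν νinv Y u m)
        ((fderiv ℝ (flowW ν νinv t) m) (AdFlow ν νinv Y t m)
          - (fderiv ℝ (AdFlow ν νinv Y t) m) (flowW ν νinv t m)) t := by
  intro t m
  have hΦd : Differentiable ℝ (fun p : ℝ × E => ν p.1 p.2) := hν.differentiable (by norm_num)
  have hΦ' : ContDiff ℝ (⊤ : ℕ∞) (fderiv ℝ (fun p : ℝ × E => ν p.1 p.2)) :=
    hν.fderiv_right (by norm_num)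
  have hΦ'd : Differentiable ℝ (fderiv ℝ (fun p : ℝ × E => ν p.1 p.2)) :=
    hΦ'.differentiable (by norm_num)
  have hΨd : Differentiable ℝ (fun p : ℝ × E => νinv p.1 p.2) := hνinv.differentiable (by norm_num)
  set x := νinv t m with hxdef
  have hxm : ν t x = m := hinv1 t m
  -- partial derivative of ν in the space variable
  have hνtF : ∀ (s : ℝ) (z : E), HasFDerivAt (ν s)
      ((fderiv ℝ (fun p : ℝ × E => ν p.1 p.2) (s, z)).comp (ContinuousLinearMap.inr ℝ ℝ E)) z :=
    fun s z => partial_fderiv' hΦd s z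
  have hA1 : ∀ (s : ℝ) (z v : E), fderiv ℝ (ν s) z v
      = fderiv ℝ (fun p : ℝ × E => ν p.1 p.2) (s, z) ((0 : ℝ), v) := by
    intro s z v
    rw [(hνtF s z).fderiv]
    simp
  -- value of flowW
  have hWval : ∀ (s : ℝ) (y : E), flowW ν νinv s y
      = fderiv ℝ (fun p : ℝ × E => ν p.1 p.2) (s, νinv s y) ((1 : ℝ), (0 : E)) :=
    fun s y => (partial_deriv_t' hΦd s (νinv s y)).deriv
  -- smooth representation G of AdFlow as a function of (t, m)
  set G : ℝ × E → E := fun p => fderiv ℝ (fun q : ℝ × E => ν q.1 q.2)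
      (p.1, νinv p.1 p.2) ((0 : ℝ), Y (νinv p.1 p.2)) with hGdef
  have hGsm : ContDiff ℝ (⊤ : ℕ∞) G := by
    apply ContDiff.clm_apply
    · exact hΦ'.comp (contDiff_fst.prodMk hνinv)
    · exact contDiff_const.prodMk (hY.comp hνinv)
  have hGd : Differentiable ℝ G := hGsm.differentiable (by norm_num)
  have hFG : ∀ (s : ℝ) (y : E), AdFlow ν νinv Y s y = G (s, y) := by
    intro s y
    exact hA1 s (νinv s y) (Y (νinv s y))
  -- second derivative at (t, x)
  set D2 := fderiv ℝ (fderiv ℝ (fun p : ℝ × E => ν p.1 p.2)) (t, x) with hD2def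
  -- (1) time derivative of AdFlow at fixed m
  have h1 : HasDerivAt (fun u => AdFlow ν νinv Y u m)
      (fderiv ℝ G (t, m) ((1 : ℝ), (0 : E))) t := by
    have h := partial_deriv_t' hGd t m
    have he : (fun u => AdFlow ν νinv Y u m) = fun u => G (u, m) :=
      funext fun u => hFG u m
    rw [he]; exact h
  -- (2) spatial derivative of AdFlow at time t
  have h2 : fderiv ℝ (AdFlow ν νinv Y t) m (flowW ν νinv t m)
      = fderiv ℝ G (t, m) ((0 : ℝ), flowW ν νinv t m) := by
    have he : AdFlow ν νinv Y t = fun y => G (t, y) := funext fun y => hFG t y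
    rw [he, (partial_fderiv' hGd t m).fderiv]
    simp
  -- the time derivative of the curve u ↦ ν u x
  have hc : HasDerivAt (fun u => ν u x)
      (fderiv ℝ (fun p : ℝ × E => ν p.1 p.2) (t, x) ((1 : ℝ), (0 : E))) t :=
    partial_deriv_t' hΦd t x
  -- chain rule for L u := G (u, ν u x)
  have hL1 : HasDerivAt (fun u => G (u, ν u x))
      (fderiv ℝ G (t, m)
        ((1 : ℝ), fderiv ℝ (fun p : ℝ × E => ν p.1 p.2) (t, x) ((1 : ℝ), (0 : E)))) t := by
    have hcurve : HasDerivAt (fun u => (u, ν u x))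
        ((1 : ℝ), fderiv ℝ (fun p : ℝ × E => ν p.1 p.2) (t, x) ((1 : ℝ), (0 : E))) t :=
      (hasDerivAt_id t).prodMk hc
    have hfd : HasFDerivAt G (fderiv ℝ G (t, m)) (t, ν t x) := by
      rw [hxm]; exact (hGd (t, m)).hasFDerivAt
    exact hfd.comp_hasDerivAt t hcurve
  -- alternative form of L
  have hLeq : (fun u => G (u, ν u x)) = fun u =>
      fderiv ℝ (fun p : ℝ × E => ν p.1 p.2) (u, x) ((0 : ℝ), Y x) := by
    funext u
    rw [hGdef]
    simp only [hinv2 u x]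
  -- its derivative via the second derivative
  have hL2 : HasDerivAt (fun u =>
        fderiv ℝ (fun p : ℝ × E => ν p.1 p.2) (u, x) ((0 : ℝ), Y x))
      (D2 ((1 : ℝ), (0 : E)) ((0 : ℝ), Y x)) t := by
    have hM : HasDerivAt (fun u => fderiv ℝ (fun p : ℝ × E => ν p.1 p.2) (u, x))
        (D2 ((1 : ℝ), (0 : E))) t := partial_deriv_t' hΦ'd t x
    have := hM.clm_apply (hasDerivAt_const t ((0 : ℝ), Y x))
    simpa using this
  -- key identity (i) = (ii)
  have key1 : fderiv ℝ G (t, m)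
        ((1 : ℝ), fderiv ℝ (fun p : ℝ × E => ν p.1 p.2) (t, x) ((1 : ℝ), (0 : E)))
      = D2 ((1 : ℝ), (0 : E)) ((0 : ℝ), Y x) := by
    have h := hL1
    rw [hLeq] at h
    exact h.unique hL2
  -- symmetry of the second derivative
  have hsymm : D2 ((1 : ℝ), (0 : E)) ((0 : ℝ), Y x) = D2 ((0 : ℝ), Y x) ((1 : ℝ), (0 : E)) :=
    second_derivative_symmetric (fun y => (hΦd y).hasFDerivAt) (hΦ'd (t, x)).hasFDerivAt _ _
  -- D(νinv t)(m) inverts D(ν t)(x)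
  have hψm : HasFDerivAt (νinv t) (fderiv ℝ (νinv t) m) m :=
    (partial_fderiv' hΨd t m).differentiableAt.hasFDerivAt
  have hcompid : ∀ v : E, fderiv ℝ (νinv t) m (fderiv ℝ (ν t) x v) = v := by
    intro v
    have hψ : HasFDerivAt (νinv t) (fderiv ℝ (νinv t) m) (ν t x) := by
      rw [hxm]; exact hψm
    have hφ : HasFDerivAt (ν t) (fderiv ℝ (ν t) x) x :=
      (hνtF t x).differentiableAt.hasFDerivAt
    have hcomp := hψ.comp x hφ
    have hid : (νinv t ∘ ν t) = id := funext fun z => hinv2 t z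
    rw [hid] at hcomp
    have huniq := hcomp.unique (hasFDerivAt_id x)
    have := DFunLike.congr_fun huniq v
    simpa using this
  -- derivative of Vt : z ↦ ∂_t ν (t, z)
  have hVt := (partial_fderiv' (g := fderiv ℝ (fun p : ℝ × E => ν p.1 p.2)) hΦ'd t x).clm_apply
      (hasFDerivAt_const ((1 : ℝ), (0 : E)) x)
  -- value of the full bracket term
  have hT1 : fderiv ℝ (flowW ν νinv t) m (AdFlow ν νinv Y t m)
      = D2 ((0 : ℝ), Y x) ((1 : ℝ), (0 : E)) := by
    have hflowWeq : flowW ν νinv t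
        = (fun z => fderiv ℝ (fun p : ℝ × E => ν p.1 p.2) (t, z) ((1 : ℝ), (0 : E)))
          ∘ (νinv t) := funext fun y => hWval t y
    have hWd := hVt.comp m hψm
    rw [hflowWeq, hWd.fderiv]
    have hAval : AdFlow ν νinv Y t m = fderiv ℝ (ν t) x (Y x) := rfl
    rw [hAval]
    simp only [ContinuousLinearMap.comp_apply]
    rw [hcompid (Y x)]
    simp [hD2def]
  have hWm : flowW ν νinv t m
      = fderiv ℝ (fun p : ℝ × E => ν p.1 p.2) (t, x) ((1 : ℝ), (0 : E)) := hWval t m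
  have hfinal : fderiv ℝ (flowW ν νinv t) m (AdFlow ν νinv Y t m)
      - fderiv ℝ (AdFlow ν νinv Y t) m (flowW ν νinv t m)
      = fderiv ℝ G (t, m) ((1 : ℝ), (0 : E)) := by
    rw [hT1, h2, hWm, ← hsymm, ← key1]
    have hsplit : ((1 : ℝ), fderiv ℝ (fun p : ℝ × E => ν p.1 p.2) (t, x) ((1 : ℝ), (0 : E)))
        = ((1 : ℝ), (0 : E))
          + ((0 : ℝ), fderiv ℝ (fun p : ℝ × E => ν p.1 p.2) (t, x) ((1 : ℝ), (0 : E))) := by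
      simp [Prod.ext_iff]
    rw [hsplit, map_add]
    abel
  rw [hfinal]
  exact h1
end

section
/- Let C: [a,b] → V be continuously differentiable and suppose there exist continuous functions h, g: [a,b] → ℝ such that ‖Ċ(t)‖ ≤ h(t)·‖C(t)‖ + g(t) for all t ∈ [a,b]. Then for all s, t ∈ [a,b]: ‖C(t)‖ ≤ ‖C(s)‖ · exp(∫_{J(s,t)} h(σ) dσ) + ∫_{J(s,t)} g(σ) · exp(∫_{J(σ,t)} h(σ′) dσ′) dσ. -/
open MeasureTheory Set Topology

private lemma ftc_cont {f : ℝ → ℝ} (hf : Continuous f) (s τ : ℝ) :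
    HasDerivAt (fun x => ∫ u in s..x, f u) (f τ) τ :=
  intervalIntegral.integral_hasDerivAt_right (hf.intervalIntegrable _ _)
    (hf.stronglyMeasurableAtFilter _ _) hf.continuousAt

private lemma seteq {c d : ℝ} (hcd : c ≤ d) (f f1 : ℝ → ℝ) (hf : ∀ x ∈ Icc c d, f x = f1 x) :
    ∫ σ in Icc c d, f σ = ∫ u in c..d, f1 u := by
  rw [MeasureTheory.integral_Icc_eq_integral_Ioc, ← intervalIntegral.integral_of_le hcd]
  exact intervalIntegral.integral_congr (fun x hx => hf x (by rwa [uIcc_of_le hcd] at hx))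

private lemma gronwall_fwd {V : Type*} [NormedAddCommGroup V] [NormedSpace ℝ V]
    {h g : ℝ → ℝ} (hh : Continuous h) (hg : Continuous g) {C : ℝ → V} {C' : ℝ → V} {s t : ℝ}
    (hst : s ≤ t) (hC : ContinuousOn C (Icc s t))
    (hC' : ∀ x ∈ Ico s t, HasDerivWithinAt C (C' x) (Ici x) x)
    (hbound : ∀ x ∈ Ico s t, ‖C' x‖ ≤ h x * ‖C x‖ + g x) :
    ‖C t‖ ≤ ‖C s‖ * Real.exp (∫ u in s..t, h u)
      + ∫ u in s..t, g u * Real.exp (∫ v in u..t, h v) := by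
  set H : ℝ → ℝ := fun τ => ∫ u in s..τ, h u with hHdef
  have hHd : ∀ τ, HasDerivAt H (h τ) τ := fun τ => ftc_cont hh s τ
  have hHc : Continuous H := continuous_iff_continuousAt.mpr fun τ => (hHd τ).continuousAt
  have key : ∀ ε > (0:ℝ), ‖C t‖ ≤
      Real.exp (H t) * (‖C s‖ + ∫ u in s..t, (g u + ε) * Real.exp (-(H u))) := by
    intro ε hε
    set B : ℝ → ℝ :=
      fun τ => Real.exp (H τ) * (‖C s‖ + ∫ u in s..τ, (g u + ε) * Real.exp (-(H u))) with hBdef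
    have hgε : Continuous fun u => (g u + ε) * Real.exp (-(H u)) :=
      (hg.add continuous_const).mul (hHc.neg.rexp)
    have hBd : ∀ τ, HasDerivAt B (h τ * B τ + (g τ + ε)) τ := by
      intro τ
      have h1 : HasDerivAt (fun τ => Real.exp (H τ)) (Real.exp (H τ) * h τ) τ := (hHd τ).exp
      have h2 : HasDerivAt (fun τ => ‖C s‖ + ∫ u in s..τ, (g u + ε) * Real.exp (-(H u)))
          ((g τ + ε) * Real.exp (-(H τ))) τ := (ftc_cont hgε s τ).const_add _
      have h3 : HasDerivAt (fun τ => Real.exp (H τ) * (‖C s‖ + ∫ u in s..τ, (g u + ε) * Real.exp (-(H u))))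
          (Real.exp (H τ) * h τ * (‖C s‖ + ∫ u in s..τ, (g u + ε) * Real.exp (-(H u)))
            + Real.exp (H τ) * ((g τ + ε) * Real.exp (-(H τ)))) τ := h1.mul h2
      convert h3 using 1
      have e : Real.exp (H τ) * Real.exp (-(H τ)) = 1 := by
        rw [← Real.exp_add]; simp
      simp only [hBdef]
      linear_combination (-(g τ + ε)) * e
    have hmain := image_norm_le_of_norm_deriv_right_lt_deriv_boundary (a := s) (b := t)
      hC hC' (B := B) (B' := fun τ => h τ * B τ + (g τ + ε)) ?_ hBd ?_
    · exact hmain (right_mem_Icc.2 hst)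
    · simp [hBdef, hHdef]
    · intro x hx hfb
      calc ‖C' x‖ ≤ h x * ‖C x‖ + g x := hbound x hx
        _ = h x * B x + g x := by rw [hfb]
        _ < h x * B x + (g x + ε) := by linarith
  have hsplit : ∀ u, (∫ v in u..t, h v) = H t - H u := by
    intro u
    have := intervalIntegral.integral_add_adjacent_intervals (μ := volume)
      (hh.intervalIntegrable s u) (hh.intervalIntegrable u t)
    simp only [hHdef]; linarith
  have hA2 : Real.exp (H t) * ∫ u in s..t, g u * Real.exp (-(H u))
      = ∫ u in s..t, g u * Real.exp (∫ v in u..t, h v) := by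
    rw [← intervalIntegral.integral_const_mul]
    apply intervalIntegral.integral_congr
    intro u _
    show Real.exp (H t) * (g u * Real.exp (-H u)) = g u * Real.exp (∫ v in u..t, h v)
    rw [hsplit u, Real.exp_sub, Real.exp_neg]
    field_simp
  set M : ℝ := Real.exp (H t) * ∫ u in s..t, Real.exp (-(H u)) with hMdef
  have hM : 0 ≤ M := mul_nonneg (Real.exp_pos _).le
    (intervalIntegral.integral_nonneg hst (fun u _ => (Real.exp_pos _).le))
  have hexp : ∀ ε > (0:ℝ),
      Real.exp (H t) * (‖C s‖ + ∫ u in s..t, (g u + ε) * Real.exp (-(H u)))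
        = ‖C s‖ * Real.exp (H t) + (∫ u in s..t, g u * Real.exp (∫ v in u..t, h v)) + ε * M := by
    intro ε hε
    have hint : ∀ u, (g u + ε) * Real.exp (-(H u))
        = g u * Real.exp (-(H u)) + ε * Real.exp (-(H u)) := fun u => by ring
    rw [intervalIntegral.integral_congr (fun u _ => hint u),
      intervalIntegral.integral_add (f := fun u => g u * Real.exp (-(H u)))
        (g := fun u => ε * Real.exp (-(H u))) ((hg.mul hHc.neg.rexp).intervalIntegrable _ _)
        ((continuous_const.mul hHc.neg.rexp).intervalIntegrable _ _),
      intervalIntegral.integral_const_mul]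
    rw [← hA2, hMdef]
    ring
  have final : ∀ ε' > (0:ℝ), ‖C t‖ ≤ ‖C s‖ * Real.exp (H t)
      + (∫ u in s..t, g u * Real.exp (∫ v in u..t, h v)) + ε' := by
    intro ε' hε'
    have hε : (0:ℝ) < ε' / (M + 1) := div_pos hε' (by linarith)
    have := key _ hε
    rw [hexp _ hε] at this
    have : ε' / (M + 1) * M ≤ ε' := by
      rw [div_mul_eq_mul_div, div_le_iff₀ (by linarith)]
      nlinarith
    linarith [key _ hε, (hexp _ hε)]
  have := le_of_forall_pos_le_add (fun ε' hε' => final ε' hε')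
  simpa [hHdef] using this

/-- Gronwall: if `C : [a,b] → V` is `C¹` and
`‖Ċ(t)‖ ≤ h(t)‖C(t)‖ + g(t)` with `h, g` continuous, then for all `s, t ∈ [a,b]`:
`‖C(t)‖ ≤ ‖C(s)‖ exp(∫_{J(s,t)} h) + ∫_{J(s,t)} g(σ) exp(∫_{J(σ,t)} h) dσ`,
where `J(s,t) = [min(s,t), max(s,t)]`. -/
theorem stmt19 {V : Type*} [NormedAddCommGroup V] [NormedSpace ℝ V]
    (a b : ℝ) (hab : a < b) (C C' : ℝ → V) (h g : ℝ → ℝ)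
    (hh : ContinuousOn h (Set.Icc a b)) (hg : ContinuousOn g (Set.Icc a b))
    (hC : ∀ t ∈ Set.Icc a b, HasDerivWithinAt C (C' t) (Set.Icc a b) t)
    (hC'cont : ContinuousOn C' (Set.Icc a b))
    (hbound : ∀ t ∈ Set.Icc a b, ‖C' t‖ ≤ h t * ‖C t‖ + g t) :
    ∀ s ∈ Set.Icc a b, ∀ t ∈ Set.Icc a b,
      ‖C t‖ ≤ ‖C s‖ * Real.exp (∫ σ in Set.uIcc s t, h σ)
        + ∫ σ in Set.uIcc s t, g σ * Real.exp (∫ σ' in Set.uIcc σ t, h σ') := by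
  have hab' : a ≤ b := hab.le
  set h1 : ℝ → ℝ := fun x => h (Set.projIcc a b hab' x) with hh1def
  set g1 : ℝ → ℝ := fun x => g (Set.projIcc a b hab' x) with hg1def
  have hh1c : Continuous h1 := (continuousOn_iff_continuous_restrict.mp hh).comp continuous_projIcc
  have hg1c : Continuous g1 := (continuousOn_iff_continuous_restrict.mp hg).comp continuous_projIcc
  have hh1 : ∀ x ∈ Icc a b, h1 x = h x := fun x hx => by
    simp only [hh1def, Set.projIcc_of_mem hab' hx]
  have hg1 : ∀ x ∈ Icc a b, g1 x = g x := fun x hx => by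
    simp only [hg1def, Set.projIcc_of_mem hab' hx]
  have hCcont : ContinuousOn C (Icc a b) := fun x hx => (hC x hx).continuousWithinAt
  intro s hs t ht
  rcases le_or_gt s t with hst | hst
  · -- forward case
    have hmain := gronwall_fwd (C := C) (C' := C') hh1c hg1c hst
      (hCcont.mono (Icc_subset_Icc hs.1 ht.2)) ?_ ?_
    · rw [uIcc_of_le hst,
        seteq hst _ h1 (fun x hx => (hh1 x ⟨hs.1.trans hx.1, hx.2.trans ht.2⟩).symm),
        seteq hst _ (fun u => g1 u * Real.exp (∫ v in u..t, h1 v)) ?_]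
      · exact hmain
      · intro x hx
        have hx1 : a ≤ x := hs.1.trans hx.1
        show g x * Real.exp (∫ σ' in uIcc x t, h σ') = g1 x * Real.exp (∫ v in x..t, h1 v)
        rw [hg1 x ⟨hx1, hx.2.trans ht.2⟩, uIcc_of_le hx.2,
          seteq hx.2 _ h1 (fun y hy => (hh1 y ⟨hx1.trans hy.1, hy.2.trans ht.2⟩).symm)]
    · intro x hx
      have hx1 : x ∈ Icc a b := ⟨hs.1.trans hx.1, hx.2.le.trans ht.2⟩
      refine ((hC x hx1).mono (Icc_subset_Icc_left ?_ : Icc x b ⊆ Icc a b)).mono_of_mem_nhdsWithin ?_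
      · exact hx1.1
      · rw [← nhdsWithin_Icc_eq_nhdsGE (lt_of_lt_of_le hx.2 ht.2)]
        exact self_mem_nhdsWithin
    · intro x hx
      have hx1 : x ∈ Icc a b := ⟨hs.1.trans hx.1, hx.2.le.trans ht.2⟩
      rw [hh1 x hx1, hg1 x hx1]
      exact hbound x hx1
  · -- backward case
    have hts : t ≤ s := hst.le
    set φ : ℝ → ℝ := fun x => t + s - x with hφdef
    set D : ℝ → V := fun x => C (t + s - x) with hDdef
    set D' : ℝ → V := fun x => (-1 : ℝ) • C' (t + s - x) with hD'def
    set h2 : ℝ → ℝ := fun x => h1 (t + s - x) with hh2def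
    set g2 : ℝ → ℝ := fun x => g1 (t + s - x) with hg2def
    have hmem : ∀ x ∈ Icc t s, t + s - x ∈ Icc a b := by
      intro x hx
      constructor
      · have := hx.2; have := ht.1; linarith
      · have := hx.1; have := hs.2; linarith
    have hmain := gronwall_fwd (C := D) (C' := D') (h := h2) (g := g2)
      (by fun_prop) (by fun_prop) hts ?_ ?_ ?_
    · -- convert conclusion
      have hDs : D s = C t := by simp [hDdef]
      have hDt : D t = C s := by simp [hDdef]
      have hAint : (∫ u in t..s, h2 u) = ∫ u in t..s, h1 u := by
        have := intervalIntegral.integral_comp_sub_left (a := t) (b := s) h1 (t + s)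
        simpa [hh2def] using this
      have inner : ∀ u, (∫ v in u..s, h2 v) = ∫ x in t..(t + s - u), h1 x := by
        intro u
        have := intervalIntegral.integral_comp_sub_left (a := u) (b := s) h1 (t + s)
        simpa [hh2def] using this
      have hBint : (∫ u in t..s, g2 u * Real.exp (∫ v in u..s, h2 v))
          = ∫ w in t..s, g1 w * Real.exp (∫ x in t..w, h1 x) := by
        have h1' : ∀ u, g2 u * Real.exp (∫ v in u..s, h2 v)
            = (fun w => g1 w * Real.exp (∫ x in t..w, h1 x)) (t + s - u) := by
          intro u; simp only [hg2def]; rw [inner u]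
        rw [intervalIntegral.integral_congr (fun u _ => h1' u)]
        have := intervalIntegral.integral_comp_sub_left (a := t) (b := s)
          (fun w => g1 w * Real.exp (∫ x in t..w, h1 x)) (t + s)
        simpa using this
      rw [hDs, hDt, hAint, hBint] at hmain
      rw [uIcc_of_ge hts,
        seteq hts _ h1 (fun x hx => (hh1 x ⟨ht.1.trans hx.1, hx.2.trans hs.2⟩).symm),
        seteq hts _ (fun w => g1 w * Real.exp (∫ x in t..w, h1 x)) ?_]
      · exact hmain
      · intro x hx
        have hx1 : a ≤ x := ht.1.trans hx.1
        show g x * Real.exp (∫ σ' in uIcc x t, h σ') = g1 x * Real.exp (∫ y in t..x, h1 y)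
        rw [hg1 x ⟨hx1, hx.2.trans hs.2⟩, uIcc_of_ge hx.1,
          seteq hx.1 _ h1 (fun y hy => (hh1 y ⟨ht.1.trans hy.1, hy.2.trans (hx.2.trans hs.2)⟩).symm)]
    · -- continuity of D
      exact hCcont.comp ((continuous_const.sub continuous_id).continuousOn) (fun x hx => hmem x hx)
    · -- derivative of D
      intro x hx
      set y : ℝ := t + s - x with hydef
      have hy1 : y ∈ Icc a b := hmem x ⟨hx.1, hx.2.le⟩
      have hay : a < y := by
        have := hx.2; have := ht.1; simp only [hydef]; linarith
      have hyd : HasDerivWithinAt C (C' y) (Iic y) y := by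
        refine (hC y hy1).mono_of_mem_nhdsWithin ?_
        have h1 : Icc a y ∈ 𝓝[Iic y] y := by
          rw [← nhdsWithin_Icc_eq_nhdsLE hay]
          exact self_mem_nhdsWithin
        exact Filter.mem_of_superset h1 (Icc_subset_Icc_right hy1.2)
      have hφd : HasDerivWithinAt φ (-1) (Ici x) x := by
        simpa using ((hasDerivAt_id x).const_sub (t + s)).hasDerivWithinAt (s := Ici x)
      have hmaps : Set.MapsTo φ (Ici x) (Iic y) := by
        intro z hz; simp only [hφdef, hydef, mem_Iic]; have := mem_Ici.mp hz; linarith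
      exact HasDerivWithinAt.scomp x hyd hφd hmaps
    · -- bound for D
      intro x hx
      have hy1 : t + s - x ∈ Icc a b := hmem x ⟨hx.1, hx.2.le⟩
      have : ‖D' x‖ = ‖C' (t + s - x)‖ := by simp [hD'def, norm_smul]
      rw [this]
      have hb := hbound _ hy1
      calc ‖C' (t + s - x)‖ ≤ h (t + s - x) * ‖C (t + s - x)‖ + g (t + s - x) := hb
        _ = h2 x * ‖D x‖ + g2 x := by
            simp only [hh2def, hg2def, hDdef]
            rw [hh1 _ hy1, hg1 _ hy1]
end
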